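/- arXiv:1405.3151 — 9 statements merged into one kernel-verified Lean document; each statement's English description precedes it below -/
import Mathlib

section
/- Let V be a finite-dimensional ℚ-vector space, D ∈ End(V) with ker D = ker D², and Λ ⊂ V a full-rank D-stable lattice. Write the characteristic polynomial of D as ± t^r p(t) with p(0) > 0. Then the order of the finite group D⁻¹Λ/(Λ + ker D) equals p(0)/|T_D(Λ)|, where T_D(Λ) = Λ/((Λ ∩ DV) + (Λ ∩ ker D)) is the separation group. -/
open Submodule Polynomial

noncomputable section

/-- Quotient of the submodule `M` by (its intersection with) the submodule `N`. -/
abbrev SQ {V : Type} [AddCommGroup V] (M N : Submodule ℤ V) :=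
  M ⧸ (N.comap M.subtype)

theorem exists_smith_data {R : Type} [CommRing R] [IsDomain R] [IsPrincipalIdealRing R]
    {L : Type} [AddCommGroup L] [Module R L] [Module.Free R L] [Module.Finite R L]
    (N : Submodule R L) (e : L ≃ₗ[R] N) :
    ∃ (κ : Type) (_ : Fintype κ) (_ : DecidableEq κ) (a : κ → R), (∀ i, a i ≠ 0) ∧
      Associated (LinearMap.det (N.subtype ∘ₗ e.toLinearMap)) (∏ i, a i) ∧
      Nonempty ((L ⧸ N) ≃ ∀ i, R ⧸ Ideal.span ({a i} : Set R)) := by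
  classical
  let ι := Module.Free.ChooseBasisIndex R L
  let b : Module.Basis ι R L := Module.Free.chooseBasis R L
  haveI : Fintype ι := inferInstance
  obtain ⟨n, snf⟩ := N.smithNormalForm b
  obtain ⟨bM, bN, f, a, hsnf⟩ := snf
  have hn : n = Fintype.card ι := by
    have h1 : Module.finrank R N = n := by
      rw [Module.finrank_eq_card_basis bN, Fintype.card_fin]
    have h2 : Module.finrank R N = Fintype.card ι := by
      rw [← e.finrank_eq, Module.finrank_eq_card_basis bM]
    rw [← h1, h2]
  have hbij : Function.Bijective f :=
    (Fintype.bijective_iff_injective_and_card f).mpr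
      ⟨f.injective, by rw [Fintype.card_fin]; exact hn⟩
  let σ : Fin n ≃ ι := Equiv.ofBijective f hbij
  have ha : ∀ i, a i ≠ 0 := by
    intro i hai
    have h0 : (bN i : L) = 0 := by rw [hsnf i, hai]; exact zero_smul R _
    exact bN.ne_zero i (Subtype.coe_injective h0)
  set a' : ι → R := fun j => a (σ.symm j) with ha'
  refine ⟨ι, inferInstance, inferInstance, a', fun j => ha _, ?_, ?_⟩
  · -- determinant computation
    have hassoc : Associated (LinearMap.det (N.subtype ∘ₗ e.toLinearMap))
        (LinearMap.det (N.subtype ∘ₗ ((bM.equiv (bN.reindex σ) (Equiv.refl ι)) : L →ₗ[R] N))) :=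
      LinearMap.associated_det_comp_equiv N.subtype e (bM.equiv (bN.reindex σ) (Equiv.refl ι))
    refine hassoc.trans ?_
    have hdet : LinearMap.det (N.subtype ∘ₗ ((bM.equiv (bN.reindex σ) (Equiv.refl ι)) : L →ₗ[R] N))
        = ∏ i, a' i := by
      rw [← LinearMap.det_toMatrix bM]
      have hmat : LinearMap.toMatrix bM bM
          (N.subtype ∘ₗ ((bM.equiv (bN.reindex σ) (Equiv.refl ι)) : L →ₗ[R] N))
          = Matrix.diagonal a' := by
        ext i j
        rw [LinearMap.toMatrix_apply, LinearMap.comp_apply, LinearEquiv.coe_coe,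
          Module.Basis.equiv_apply, Equiv.refl_apply, Module.Basis.reindex_apply]
        have : (N.subtype) (bN (σ.symm j)) = a' j • bM j := by
          rw [ha']
          show ((bN (σ.symm j)) : L) = a (σ.symm j) • bM j
          rw [hsnf (σ.symm j)]
          congr 1
          exact congrArg bM (σ.apply_symm_apply j)
        rw [this, map_smul, Module.Basis.repr_self, Finsupp.smul_single, smul_eq_mul, mul_one]
        by_cases h : i = j
        · rw [h, Matrix.diagonal_apply_eq, Finsupp.single_eq_same]
        · rw [Matrix.diagonal_apply_ne _ h, Finsupp.single_eq_of_ne h]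
      rw [hmat, Matrix.det_diagonal]
    rw [hdet]
  · -- quotient structure
    have mem_iff : ∀ x : L, x ∈ N ↔ ∀ j, a' j ∣ bM.repr x j := by
      intro x
      constructor
      · intro hx j
        have h := congrFun
          (Module.Basis.SmithNormalForm.repr_comp_embedding_eq_smul ⟨bM, bN, f, a, hsnf⟩ ⟨x, hx⟩)
          (σ.symm j)
        simp only [Function.comp_apply, Pi.smul_apply, smul_eq_mul] at h
        have hfj : f (σ.symm j) = j := σ.apply_symm_apply j
        rw [hfj] at h
        exact ⟨(bN.repr ⟨x, hx⟩) (σ.symm j), by rw [h]; rfl⟩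
      · intro h
        choose c hc using h
        have key : (∑ i : Fin n, c (σ i) • (bN i : L)) = x := by
          have h1 : ∀ i : Fin n, c (σ i) • (bN i : L) = (a' (σ i) * c (σ i)) • bM (σ i) := by
            intro i
            rw [hsnf i, smul_smul]
            have : a' (σ i) = a i := by simp only [ha', Equiv.symm_apply_apply]
            rw [this, mul_comm]
            rfl
          calc (∑ i : Fin n, c (σ i) • (bN i : L))
              = ∑ i : Fin n, (a' (σ i) * c (σ i)) • bM (σ i) :=
                Finset.sum_congr rfl fun i _ => h1 i
            _ = ∑ j : ι, (a' j * c j) • bM j :=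
                Equiv.sum_comp σ (fun j => (a' j * c j) • bM j)
            _ = ∑ j : ι, (bM.repr x j) • bM j := by
                refine Finset.sum_congr rfl fun j _ => ?_
                rw [← hc j]
            _ = x := bM.sum_repr x
        rw [← key]
        exact Submodule.sum_mem N fun i _ => Submodule.smul_mem N _ (bN i).2
    -- transport through bM.equivFun
    let I' : Submodule R (ι → R) := Submodule.pi Set.univ fun j => Ideal.span ({a' j} : Set R)
    have hmap : N.map (bM.equivFun : L →ₗ[R] (ι → R)) = I' := by
      ext v
      simp only [I', Submodule.mem_map, Submodule.mem_pi, Set.mem_univ, forall_true_left,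
        Ideal.mem_span_singleton, LinearEquiv.coe_coe, Module.Basis.equivFun_apply]
      constructor
      · rintro ⟨y, hy, rfl⟩ j
        exact (mem_iff y).mp hy j
      · intro hdvd
        refine ⟨∑ j, v j • bM j, ?_, ?_⟩
        · rw [mem_iff]
          intro j
          rw [bM.repr_sum_self]
          exact hdvd j
        · rw [bM.repr_sum_self]
    have E : (L ⧸ N) ≃ₗ[R] ∀ i, R ⧸ Ideal.span ({a' i} : Set R) := by
      refine (Submodule.Quotient.equiv N I' bM.equivFun hmap).trans
        (σ₁₂ := RingHom.id R) (σ₃₂ := RingHom.id R) (re₂₃ := inferInstance)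
        (re₃₂ := inferInstance) ?_
      exact Submodule.quotientPi _
    exact ⟨E.toEquiv⟩

theorem card_quot_eq_natAbs_det {L : Type} [AddCommGroup L] [Module ℤ L]
    [Module.Free ℤ L] [Module.Finite ℤ L] (g : L →ₗ[ℤ] L) (hg : Function.Injective g) :
    Nat.card (L ⧸ LinearMap.range g) = (LinearMap.det g).natAbs := by
  classical
  let e := LinearEquiv.ofInjective g hg
  obtain ⟨κ, hfin, hdec, a, ha, hassoc, ⟨eq⟩⟩ := exists_smith_data (LinearMap.range g) e
  have hassoc' : Associated (LinearMap.det g) (∏ i, a i) := by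
    convert hassoc using 2
    · rfl
    · rfl
  have hdet : (LinearMap.det g).natAbs = (∏ i, a i).natAbs :=
    Int.natAbs_eq_iff_associated.mpr hassoc'
  have hcard : Nat.card (L ⧸ LinearMap.range g) = ∏ i, (a i).natAbs := by
    refine (Nat.card_congr eq).trans ?_
    rw [Nat.card_pi]
    exact Finset.prod_congr rfl fun i _ => by
      rw [Nat.card_congr (Int.quotientSpanEquivZMod (a i)).toEquiv, Nat.card_zmod]
  rw [hcard, hdet]
  exact (map_prod Int.natAbsHom a Finset.univ).symm

theorem card_SQ_mul {V : Type} [AddCommGroup V] (A B C : Submodule ℤ V) (hCB : C ≤ B) (hBA : B ≤ A) :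
    Nat.card (SQ A C) = Nat.card (SQ A B) * Nat.card (SQ B C) := by
  set C' := C.comap A.subtype with hC'
  set B' := B.comap A.subtype with hB'
  have hC'B' : C' ≤ B' := comap_mono hCB
  -- third isomorphism
  have e3 : ((A ⧸ C') ⧸ (B'.map C'.mkQ)) ≃ₗ[ℤ] (A ⧸ B') :=
    Submodule.quotientQuotientEquivQuotient C' B' hC'B'
  -- the middle subgroup is equivalent to SQ B C
  have e2 : SQ B C ≃ₗ[ℤ] (B'.map C'.mkQ) := by
    let φ : B →ₗ[ℤ] (A ⧸ C') := C'.mkQ ∘ₗ (Submodule.inclusion hBA)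
    have hker : LinearMap.ker φ = C.comap B.subtype := by
      ext x
      simp only [φ, LinearMap.mem_ker, LinearMap.comp_apply, mem_comap,
        Submodule.mkQ_apply, Submodule.Quotient.mk_eq_zero, hC']
      rfl
    have hrange : LinearMap.range φ = B'.map C'.mkQ := by
      rw [LinearMap.range_comp, Submodule.range_inclusion]
    exact ((Submodule.quotEquivOfEq _ _ hker.symm).trans
      (φ.quotKerEquivRange)).trans (LinearEquiv.ofEq _ _ hrange)
  calc Nat.card (SQ A C)
      = Nat.card (B'.map C'.mkQ) * Nat.card ((A ⧸ C') ⧸ (B'.map C'.mkQ)) :=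
        Submodule.card_eq_card_quotient_mul_card _
    _ = Nat.card (SQ A B) * Nat.card (SQ B C) := by
        rw [Nat.card_congr e3.toEquiv, Nat.card_congr e2.toEquiv, Nat.mul_comm]

theorem card_SQ_sup {V : Type} [AddCommGroup V] (p p' : Submodule ℤ V) :
    Nat.card (SQ (p ⊔ p') p') = Nat.card (SQ p p') := by
  have h : p'.comap p.subtype = (p ⊓ p').comap p.subtype := by
    ext x
    simpa [mem_comap] using fun _ => x.2
  rw [show (SQ p p') = (p ⧸ (p'.comap p.subtype)) from rfl]
  rw [Nat.card_congr (Submodule.quotEquivOfEq _ _ h).toEquiv]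
  exact (Nat.card_congr (LinearMap.quotientInfEquivSupQuotient p p').toEquiv).symm

theorem stmt4 {V : Type} [AddCommGroup V] [Module ℚ V] [FiniteDimensional ℚ V]
    (D : V →ₗ[ℚ] V) (hker : LinearMap.ker D = LinearMap.ker (D ∘ₗ D))
    (Λ : Submodule ℤ V) (hfg : Λ.FG)
    (hfull : Submodule.span ℚ (Λ : Set V) = ⊤)
    (hstab : Λ.map (D.restrictScalars ℤ) ≤ Λ)
    (ε : ℚ) (hε : ε = 1 ∨ ε = -1) (r : ℕ) (p : Polynomial ℚ)
    (hchar : LinearMap.charpoly D = C ε * X ^ r * p)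
    (hp0 : 0 < p.eval 0) :
    Finite (SQ (Λ.comap (D.restrictScalars ℤ))
        (Λ ⊔ (LinearMap.ker D).restrictScalars ℤ)) ∧
    (Nat.card (SQ (Λ.comap (D.restrictScalars ℤ))
          (Λ ⊔ (LinearMap.ker D).restrictScalars ℤ)) : ℚ) *
      (Nat.card (SQ Λ ((Λ ⊓ (LinearMap.range D).restrictScalars ℤ) ⊔
          (Λ ⊓ (LinearMap.ker D).restrictScalars ℤ))) : ℚ) = p.eval 0 := by
  classical
  set Dz := D.restrictScalars ℤ with hDz
  set Kq := LinearMap.ker D with hKq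
  set Wq := LinearMap.range D with hWq
  set K := Kq.restrictScalars ℤ with hK
  set W := Wq.restrictScalars ℤ with hW
  set M := Λ.comap Dz with hM
  set ΛW := Λ ⊓ W with hΛW
  set ΛK := Λ ⊓ K with hΛK
  have hDzapply : ∀ x : V, Dz x = D x := fun x => rfl
  -- basic structure
  have hWK : Wq ⊓ Kq = ⊥ := by
    rw [eq_bot_iff]
    rintro x ⟨⟨y, rfl⟩, hxk⟩
    have : y ∈ LinearMap.ker (D ∘ₗ D) := hxk
    rw [← hker] at this
    exact this
  have hWKtop : Wq ⊔ Kq = ⊤ := by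
    apply Submodule.eq_top_of_finrank_eq
    have h4 := Submodule.finrank_sup_add_finrank_inf_eq Wq Kq
    rw [hWK] at h4
    simp only [finrank_bot, add_zero] at h4
    rw [h4]
    exact LinearMap.finrank_range_add_finrank_ker D
  have hΛM : Λ ≤ M := fun x hx => hstab ⟨x, hx, rfl⟩
  have hKM : K ≤ M := by
    intro x hx
    have : D x = 0 := hx
    simp only [hM, mem_comap, hDzapply, this]
    exact Λ.zero_mem
  -- the restricted endomorphism g of ΛW
  have hgmem : ∀ x ∈ ΛW, Dz x ∈ ΛW := by
    intro x hx
    exact ⟨hstab ⟨x, hx.1, rfl⟩, ⟨x, rfl⟩⟩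
  set g : ΛW →ₗ[ℤ] ΛW := Dz.restrict hgmem with hg
  have hginj : Function.Injective g := by
    intro x y hxy
    apply Subtype.ext
    have h1 : D (x : V) - D (y : V) = 0 := by
      have := congrArg (Subtype.val) hxy
      change D (x : V) = D (y : V) at this
      rw [sub_eq_zero]
      exact this
    have h2 : ((x : V) - y) ∈ Kq := by
      rw [LinearMap.mem_ker, map_sub, h1]
    have h3 : ((x : V) - y) ∈ Wq := by
      apply Wq.sub_mem
      · exact x.2.2
      · exact y.2.2
    have h4 : (x : V) - y ∈ (⊥ : Submodule ℚ V) := hWK ▸ Submodule.mem_inf.mpr ⟨h3, h2⟩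
    have h5 : (x : V) - y = 0 := by simpa using h4
    exact sub_eq_zero.mp h5
  -- the quotient equivalence via D
  have hmemM : ∀ x ∈ M, Dz x ∈ ΛW := by
    intro x hx
    exact ⟨hx, ⟨x, rfl⟩⟩
  set Dres : M →ₗ[ℤ] ΛW := Dz.restrict hmemM with hDres
  have hDres_surj : Function.Surjective Dres := by
    rintro ⟨y, hyΛ, x, rfl⟩
    have hxM : x ∈ M := by
      simp only [hM, mem_comap]
      exact hyΛ
    exact ⟨⟨x, hxM⟩, rfl⟩
  set ψ : M →ₗ[ℤ] (ΛW ⧸ LinearMap.range g) := (LinearMap.range g).mkQ ∘ₗ Dres with hψ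
  have hψsurj : Function.Surjective ψ :=
    (Submodule.mkQ_surjective _).comp hDres_surj
  have hψker : LinearMap.ker ψ = (ΛW ⊔ K).comap M.subtype := by
    ext x
    simp only [LinearMap.mem_ker, hψ, LinearMap.comp_apply, Submodule.mkQ_apply,
      Submodule.Quotient.mk_eq_zero, LinearMap.mem_range, mem_comap, Submodule.coe_subtype]
    constructor
    · rintro ⟨w, hw⟩
      have hcoe : D (w : V) = D (x : V) := by
        have := congrArg Subtype.val hw
        exact this
      have hxw : ((x : V) - w) ∈ K := by
        show ((x : V) - w) ∈ Kq
        rw [LinearMap.mem_ker, map_sub, hcoe, sub_self]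
      have : (x : V) = (w : V) + ((x : V) - w) := by abel
      rw [this]
      exact Submodule.add_mem_sup w.2 hxw
    · intro hx
      obtain ⟨y, hy, z, hz, hyz⟩ := Submodule.mem_sup.mp hx
      refine ⟨⟨y, hy⟩, ?_⟩
      apply Subtype.ext
      show D y = D (x : V)
      rw [← hyz, map_add]
      have : D z = 0 := hz
      rw [this, add_zero]
  have cardB : Nat.card (SQ M (ΛW ⊔ K)) = Nat.card ((ΛW : Type) ⧸ LinearMap.range g) := by
    refine Nat.card_congr ?_
    refine Equiv.trans ?_ (ψ.quotKerEquivOfSurjective hψsurj).toEquiv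
    exact (Submodule.quotEquivOfEq _ _ hψker.symm).toEquiv
  -- module instances on ΛW
  have hΛWfg : ΛW.FG := by
    have h1 : (Λ.comap Λ.subtype ⊓ W.comap Λ.subtype).FG := by
      have : IsNoetherian ℤ Λ := isNoetherian_of_fg_of_noetherian Λ hfg
      exact IsNoetherian.noetherian _
    have h2 : ΛW = Submodule.map Λ.subtype (Λ.comap Λ.subtype ⊓ W.comap Λ.subtype) := by
      rw [← Submodule.comap_inf, Submodule.map_comap_subtype]
      rw [hΛW, ← inf_assoc, inf_idem]
    rw [h2]
    exact Submodule.FG.map _ h1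
  haveI instFin : Module.Finite ℤ ΛW := Module.Finite.iff_fg.mpr hΛWfg
  haveI instNZ : NoZeroSMulDivisors ℤ V := by
    constructor
    intro c x h
    have : (c : ℚ) • x = 0 := by rw [Int.cast_smul_eq_zsmul]; exact h
    rcases smul_eq_zero.mp this with h' | h'
    · left; exact_mod_cast h'
    · right; exact h'
  haveI instFree : Module.Free ℤ ΛW := Module.free_of_finite_type_torsion_free'
  have hcardC : Nat.card ((ΛW : Type) ⧸ LinearMap.range g) = (LinearMap.det g).natAbs :=
    card_quot_eq_natAbs_det g hginj
  -- index bookkeeping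
  have hCB : ΛW ⊔ K ≤ Λ ⊔ K := sup_le_sup_right inf_le_left K
  have hBA : Λ ⊔ K ≤ M := sup_le hΛM hKM
  have hmul : Nat.card (SQ M (ΛW ⊔ K))
      = Nat.card (SQ M (Λ ⊔ K)) * Nat.card (SQ (Λ ⊔ K) (ΛW ⊔ K)) :=
    card_SQ_mul M (Λ ⊔ K) (ΛW ⊔ K) hCB hBA
  have hsupeq : Λ ⊔ (ΛW ⊔ K) = Λ ⊔ K := by
    rw [← sup_assoc, sup_eq_left.mpr (inf_le_left : ΛW ≤ Λ)]
  have hstep : Nat.card (SQ (Λ ⊔ K) (ΛW ⊔ K)) = Nat.card (SQ Λ (ΛW ⊔ K)) := by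
    rw [← hsupeq]
    exact card_SQ_sup Λ (ΛW ⊔ K)
  have hcomapeq : (ΛW ⊔ K).comap Λ.subtype = (ΛW ⊔ ΛK).comap Λ.subtype := by
    ext x
    simp only [mem_comap, Submodule.coe_subtype]
    constructor
    · intro hx
      obtain ⟨y, hy, z, hz, hyz⟩ := Submodule.mem_sup.mp hx
      have hzΛ : z ∈ Λ := by
        have : z = (x : V) - y := by rw [← hyz]; abel
        rw [this]
        exact Λ.sub_mem x.2 hy.1
      exact Submodule.mem_sup.mpr ⟨y, hy, z, ⟨hzΛ, hz⟩, hyz⟩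
    · intro hx
      exact (sup_le_sup_left (inf_le_right : ΛK ≤ K) ΛW) hx
  have hstep2 : Nat.card (SQ Λ (ΛW ⊔ K)) = Nat.card (SQ Λ (ΛW ⊔ ΛK)) := by
    unfold SQ
    rw [hcomapeq]
  have key : Nat.card (SQ M (Λ ⊔ K)) * Nat.card (SQ Λ (ΛW ⊔ ΛK))
      = (LinearMap.det g).natAbs := by
    rw [← hstep2, ← hstep, ← hmul, cardB, hcardC]
  -- the determinant computation
  have hdetcast : (((LinearMap.det g).natAbs : ℕ) : ℚ) = p.eval 0 := by
    classical
    -- bases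
    set c : Module.Basis (Module.Free.ChooseBasisIndex ℤ (↥ΛW)) ℤ ΛW := Module.Free.chooseBasis ℤ ΛW with hc
    set ι := Module.Free.ChooseBasisIndex ℤ (↥ΛW) with hι
    set cV : ι → V := fun i => ((c i : ΛW) : V) with hcV
    have hspanZ : span ℤ (Set.range cV) = ΛW := by
      have h1 : Set.range cV = ΛW.subtype '' Set.range c := by
        rw [← Set.range_comp]; rfl
      rw [h1, ← Submodule.map_span, c.span_eq, Submodule.map_subtype_top]
    have hrangeW : ∀ i, cV i ∈ Wq := fun i => (c i).2.2
    have hspanQ : span ℚ (Set.range cV) = Wq := by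
      apply le_antisymm
      · rw [span_le]
        rintro x ⟨i, rfl⟩
        exact hrangeW i
      · have h1 : Wq = Submodule.map D (span ℚ (Λ : Set V)) := by
          rw [hfull, ← LinearMap.range_eq_map]
        rw [h1, Submodule.map_span, span_le]
        rintro y ⟨x, hx, rfl⟩
        have hDx : D x ∈ ΛW := ⟨hstab ⟨x, hx, rfl⟩, ⟨x, rfl⟩⟩
        rw [← hspanZ] at hDx
        exact Submodule.span_le_restrictScalars ℤ ℚ (Set.range cV) hDx
    haveI : FiniteDimensional ℚ Kq := inferInstance
    set d : Module.Basis (Fin (Module.finrank ℚ Kq)) ℚ Kq := Module.finBasis ℚ Kq with hd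
    set κ := Fin (Module.finrank ℚ Kq) with hκ
    set dV : κ → V := fun i => ((d i : Kq) : V) with hdV
    have hspanKq : span ℚ (Set.range dV) = Kq := by
      have h1 : Set.range dV = Kq.subtype '' Set.range d := by
        rw [← Set.range_comp]; rfl
      rw [h1, ← Submodule.map_span, d.span_eq, Submodule.map_subtype_top]
    -- independence
    have hindepc : LinearIndependent ℚ cV := by
      rw [← LinearIndependent.iff_fractionRing ℤ ℚ]
      exact c.linearIndependent.map' ΛW.subtype (Submodule.ker_subtype ΛW)
    have hindepd : LinearIndependent ℚ dV :=
      d.linearIndependent.map' Kq.subtype (Submodule.ker_subtype Kq)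
    have hdisj : Disjoint (span ℚ (Set.range cV)) (span ℚ (Set.range dV)) := by
      rw [hspanQ, hspanKq]
      exact disjoint_iff.mpr hWK
    have hindep : LinearIndependent ℚ (Sum.elim cV dV) :=
      hindepc.sum_type hindepd hdisj
    have hspanTop : ⊤ ≤ span ℚ (Set.range (Sum.elim cV dV)) := by
      rw [Set.Sum.elim_range, Submodule.span_union, hspanQ, hspanKq, hWKtop]
    set B : Module.Basis (ι ⊕ κ) ℚ V := Module.Basis.mk hindep hspanTop with hB
    have hBl : ∀ i : ι, B (Sum.inl i) = cV i := fun i => by rw [hB, Module.Basis.mk_apply]; rfl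
    have hBr : ∀ i : κ, B (Sum.inr i) = dV i := fun i => by rw [hB, Module.Basis.mk_apply]; rfl
    -- matrices
    set A : Matrix ι ι ℤ := LinearMap.toMatrix c c g with hA
    set Aq : Matrix ι ι ℚ := A.map (Int.cast : ℤ → ℚ) with hAq
    set k := Fintype.card κ with hk
    have hgc' : ∀ j, g (c j) = ∑ i, A i j • c i := by
      intro j
      conv_lhs => rw [← c.sum_repr (g (c j))]
      exact Finset.sum_congr rfl fun i _ => by rw [hA, LinearMap.toMatrix_apply]
    -- A is injective
    have hdetA : A.det ≠ 0 := by
      intro h0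
      obtain ⟨v, hvne, hv⟩ := Matrix.exists_mulVec_eq_zero_iff.mpr h0
      have hgm : g (∑ i, v i • c i) = 0 := by
        rw [map_sum]
        simp_rw [map_smul, hgc', Finset.smul_sum, smul_smul]
        rw [Finset.sum_comm]
        have : ∀ i', ∑ i, (v i * A i' i) • c i' = ((A.mulVec v) i') • c i' := by
          intro i'
          rw [← Finset.sum_smul]
          congr 1
          rw [Matrix.mulVec, dotProduct]
          exact Finset.sum_congr rfl fun i _ => mul_comm _ _
        rw [Finset.sum_congr rfl fun i' _ => this i']
        rw [hv]
        simp
      have hm0 : (∑ i, v i • c i) = 0 := hginj (by rw [hgm, map_zero])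
      exact hvne (funext (Fintype.linearIndependent_iff.mp c.linearIndependent v hm0))
    -- the matrix of D
    have hgcV : ∀ j, D (cV j) = ∑ i, (A i j : ℚ) • cV i := by
      intro j
      have h1 : D (cV j) = ((g (c j) : ΛW) : V) := rfl
      rw [h1, hgc', AddSubmonoidClass.coe_finset_sum]
      exact Finset.sum_congr rfl fun i _ => by
        rw [Submodule.coe_smul]
        exact (Int.cast_smul_eq_zsmul ℚ _ _).symm
    have hmatD : LinearMap.toMatrix B B D = Matrix.fromBlocks Aq 0 0 0 := by
      ext s t
      rw [LinearMap.toMatrix_apply]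
      cases t with
      | inr j =>
        have hone : D (B (Sum.inr j)) = 0 := by
          rw [hBr j]
          exact (d j).2
        rw [hone, map_zero]
        cases s <;> simp [Matrix.fromBlocks]
      | inl j =>
        have hDB : D (B (Sum.inl j)) =
            ∑ s' : ι ⊕ κ, (Sum.elim (fun i => (A i j : ℚ)) (fun _ => (0:ℚ)) s') • B s' := by
          rw [Fintype.sum_sum_type]
          simp only [Sum.elim_inl, Sum.elim_inr, zero_smul, Finset.sum_const_zero, add_zero]
          rw [hBl j, hgcV j]
          exact Finset.sum_congr rfl fun i _ => by rw [hBl i]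
        rw [hDB, B.repr_sum_self]
        cases s <;> simp [Matrix.fromBlocks, hAq, Matrix.map_apply]
    -- charpoly computation
    have hchar0 : (0 : Matrix κ κ ℚ).charpoly = X ^ k := by
      have h1 : Matrix.charmatrix (0 : Matrix κ κ ℚ) = Matrix.diagonal (fun _ => (X : ℚ[X])) := by
        ext i j
        by_cases hij : i = j
        · subst hij; simp [Matrix.charmatrix_apply_eq]
        · simp [Matrix.charmatrix_apply_ne _ _ _ hij, Matrix.diagonal_apply_ne _ hij]
      rw [Matrix.charpoly, h1, Matrix.det_diagonal, Finset.prod_const, Finset.card_univ]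
    have hcharD : D.charpoly = Aq.charpoly * X ^ k := by
      rw [← LinearMap.charpoly_toMatrix D B, hmatD, ← hchar0]
      exact Matrix.charpoly_fromBlocks_zero₁₂ Aq 0 0
    have hq : Aq.charpoly * X ^ k = C ε * X ^ r * p := by rw [← hcharD, hchar]
    -- nonvanishing of the constant coefficient
    have hAqdet : Aq.det = ((A.det : ℤ) : ℚ) := by
      rw [hAq]
      exact (RingHom.map_det (Int.castRingHom ℚ) A).symm
    have hdetAq : Aq.det ≠ 0 := by
      rw [hAqdet]
      exact Int.cast_ne_zero.mpr hdetA
    have hq0ne : Aq.charpoly.eval 0 ≠ 0 := by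
      rw [← Polynomial.coeff_zero_eq_eval_zero]
      intro h
      rw [Matrix.det_eq_sign_charpoly_coeff, h, mul_zero] at hdetAq
      exact hdetAq rfl
    have hεne : ε ≠ 0 := by rcases hε with h | h <;> rw [h] <;> norm_num
    have hεp : ε * p.eval 0 ≠ 0 := mul_ne_zero hεne (ne_of_gt hp0)
    -- cancellation: eval of charpoly at 0
    have hq0 : Aq.charpoly.eval 0 = ε * p.eval 0 := by
      have hXne : (X : ℚ[X]) ≠ 0 := X_ne_zero
      rcases le_total r k with h | h
      · have heq : X ^ r * (C ε * p) = X ^ r * (Aq.charpoly * X ^ (k - r)) := by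
          calc X ^ r * (C ε * p) = C ε * X ^ r * p := by ring
          _ = Aq.charpoly * X ^ k := hq.symm
          _ = X ^ r * (Aq.charpoly * X ^ (k - r)) := by
              have hpow : (X : ℚ[X]) ^ r * X ^ (k - r) = X ^ k := by
                rw [← pow_add]; congr 1; omega
              rw [← hpow]; ring
        have hc2 := mul_left_cancel₀ (pow_ne_zero r hXne) heq
        by_cases hkr : k - r = 0
        · rw [hkr, pow_zero, mul_one] at hc2
          have := congrArg (eval 0) hc2
          simpa using this.symm
        · have := congrArg (eval 0) hc2
          rw [eval_mul, eval_mul, eval_C, eval_pow, eval_X, zero_pow hkr, mul_zero] at this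
          exact absurd this hεp
      · have heq : X ^ k * Aq.charpoly = X ^ k * (C ε * X ^ (r - k) * p) := by
          calc X ^ k * Aq.charpoly = Aq.charpoly * X ^ k := by ring
          _ = C ε * X ^ r * p := hq
          _ = X ^ k * (C ε * X ^ (r - k) * p) := by
              have hpow : (X : ℚ[X]) ^ k * X ^ (r - k) = X ^ r := by
                rw [← pow_add]; congr 1; omega
              rw [← hpow]; ring
        have hc2 := mul_left_cancel₀ (pow_ne_zero k hXne) heq
        by_cases hrk : r - k = 0
        · rw [hrk, pow_zero, mul_one] at hc2
          have := congrArg (eval 0) hc2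
          simpa using this
        · have := congrArg (eval 0) hc2
          rw [eval_mul, eval_mul, eval_C, eval_pow, eval_X, zero_pow hrk, mul_zero, zero_mul] at this
          exact absurd this hq0ne
    -- conclude
    have hdetgA : LinearMap.det g = A.det := by rw [hA, LinearMap.det_toMatrix]
    have habs : ((((LinearMap.det g).natAbs : ℕ)) : ℚ) = |((LinearMap.det g : ℤ) : ℚ)| := by
      rw [Nat.cast_natAbs, Int.cast_abs]
    rw [habs, hdetgA, ← hAqdet, Matrix.det_eq_sign_charpoly_coeff,
      Polynomial.coeff_zero_eq_eval_zero, hq0]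
    rw [abs_mul, abs_pow, abs_neg, abs_one, one_pow, one_mul, abs_mul]
    rcases hε with h | h <;> rw [h] <;> simp [abs_of_pos hp0]
  have hne : (LinearMap.det g).natAbs ≠ 0 := by
    intro h
    rw [h] at hdetcast
    simp only [Nat.cast_zero] at hdetcast
    exact absurd hdetcast.symm (ne_of_gt hp0)
  constructor
  · apply Nat.finite_of_card_ne_zero
    intro h0
    rw [h0, Nat.zero_mul] at key
    exact hne key.symm
  · rw [← Nat.cast_mul, key, hdetcast]
end
end

section
/- Let Λ be a lattice with endomorphism D satisfying Λ[D] = Λ[D²], and Λ' ⊆ Λ a D-stable full-rank sublattice. Set V = Λ ⊗ ℚ and B = (Λ + D⁻¹Λ')/(Λ + V[D]). Then B is a finite abelian group generated by at most d − r elements (d = rank Λ, r = nullity of D on V), its exponent divides p₀(0) where the minimal polynomial of D is ± t p₀(t) or ± p₀(t) with p₀(0) > 0, and D acts as zero on B. -/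
open Submodule Polynomial

noncomputable section

lemma aux_pow {V : Type} [AddCommGroup V] [Module ℚ V] (D : V →ₗ[ℚ] V)
    (Λ' : Submodule ℤ V) (hstab' : Λ'.map (D.restrictScalars ℤ) ≤ Λ') :
    ∀ (k : ℕ) (y : V), y ∈ Λ' → (D ^ k) y ∈ Λ' := by
  intro k
  induction k with
  | zero => intro y hy; simpa using hy
  | succ k ih =>
    intro y hy
    rw [pow_succ, Module.End.mul_apply]
    exact ih _ (hstab' ⟨y, hy, rfl⟩)

lemma aux_aeval {V : Type} [AddCommGroup V] [Module ℚ V] (D : V →ₗ[ℚ] V)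
    (Λ' : Submodule ℤ V) (hstab' : Λ'.map (D.restrictScalars ℤ) ≤ Λ')
    (q : Polynomial ℤ) :
    ∀ y ∈ Λ', (aeval D (q.map (Int.castRingHom ℚ))) y ∈ Λ' := by
  induction q using Polynomial.induction_on' with
  | add p q hp hq =>
    intro y hy
    rw [Polynomial.map_add, map_add, LinearMap.add_apply]
    exact add_mem (hp y hy) (hq y hy)
  | monomial k a =>
    intro y hy
    rw [Polynomial.map_monomial, aeval_monomial, Module.End.mul_apply,
      Module.algebraMap_end_apply]
    rw [Int.castRingHom, RingHom.coe_mk, MonoidHom.coe_mk, OneHom.coe_mk]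
    rw [Int.cast_smul_eq_zsmul]
    exact zsmul_mem (aux_pow D Λ' hstab' k y hy) a

theorem stmt6 {V : Type} [AddCommGroup V] [Module ℚ V] [FiniteDimensional ℚ V]
    (dd r : ℕ) (hd : Module.finrank ℚ V = dd)
    (D : V →ₗ[ℚ] V) (hker : LinearMap.ker D = LinearMap.ker (D ∘ₗ D))
    (hr : Module.finrank ℚ (LinearMap.ker D) = r)
    (ε' : ℚ) (hε' : ε' = 1 ∨ ε' = -1) (p₀ : Polynomial ℤ)
    (hmin : minpoly ℚ D = C ε' * (X * (p₀.map (Int.castRingHom ℚ))) ∨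
      (Function.Injective D ∧ minpoly ℚ D = C ε' * (p₀.map (Int.castRingHom ℚ))))
    (hp₀0 : 0 < p₀.eval 0)
    (Λ Λ' : Submodule ℤ V) (hfg : Λ.FG) (hle : Λ' ≤ Λ)
    (hfull : Submodule.span ℚ (Λ : Set V) = ⊤)
    (hfull' : Submodule.span ℚ (Λ' : Set V) = ⊤)
    (hstab : Λ.map (D.restrictScalars ℤ) ≤ Λ)
    (hstab' : Λ'.map (D.restrictScalars ℤ) ≤ Λ') :
    Finite (SQ (Λ ⊔ Λ'.comap (D.restrictScalars ℤ))
        (Λ ⊔ (LinearMap.ker D).restrictScalars ℤ)) ∧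
    (∃ s : Finset (SQ (Λ ⊔ Λ'.comap (D.restrictScalars ℤ))
          (Λ ⊔ (LinearMap.ker D).restrictScalars ℤ)),
        s.card ≤ dd - r ∧
        AddSubgroup.closure (s : Set (SQ (Λ ⊔ Λ'.comap (D.restrictScalars ℤ))
          (Λ ⊔ (LinearMap.ker D).restrictScalars ℤ))) = ⊤) ∧
    (AddMonoid.exponent (SQ (Λ ⊔ Λ'.comap (D.restrictScalars ℤ))
        (Λ ⊔ (LinearMap.ker D).restrictScalars ℤ)) ∣ (p₀.eval 0).toNat) ∧
    (∀ x ∈ Λ ⊔ Λ'.comap (D.restrictScalars ℤ),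
        D x ∈ Λ ⊔ (LinearMap.ker D).restrictScalars ℤ) := by
  classical
  set DZ := D.restrictScalars ℤ with hDZ
  set M : Submodule ℤ V := Λ ⊔ Λ'.comap DZ with hM
  set N : Submodule ℤ V := Λ ⊔ (LinearMap.ker D).restrictScalars ℤ with hN
  set n : ℤ := p₀.eval 0 with hn
  -- membership facts
  have hDΛ : ∀ x ∈ Λ, D x ∈ Λ := fun x hx => hstab ⟨x, hx, rfl⟩
  have hDM : ∀ x ∈ M, D x ∈ Λ := by
    intro x hx
    rcases Submodule.mem_sup.mp hx with ⟨a, ha, b, hb, rfl⟩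
    rw [map_add]
    exact add_mem (hDΛ a ha) (hle hb)
  -- key scalar fact
  have hcoeff : p₀.coeff 0 = n := coeff_zero_eq_eval_zero p₀
  have hPQ : p₀.map (Int.castRingHom ℚ) =
      (p₀.divX.map (Int.castRingHom ℚ)) * X + C ((n : ℚ)) := by
    conv_lhs => rw [← divX_mul_X_add p₀]
    rw [Polynomial.map_add, Polynomial.map_mul, Polynomial.map_X, Polynomial.map_C, hcoeff]
    simp
  have hb_eval : ∀ b : V, (aeval D (p₀.map (Int.castRingHom ℚ))) b =
      (aeval D (p₀.divX.map (Int.castRingHom ℚ))) (D b) + (n : ℚ) • b := by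
    intro b
    rw [hPQ, map_add, map_mul, aeval_X, aeval_C, LinearMap.add_apply, Module.End.mul_apply,
      Module.algebraMap_end_apply]
  have hε'0 : ε' ≠ 0 := by rcases hε' with h | h <;> rw [h] <;> norm_num
  have hkeyb : ∀ b : V, D b ∈ Λ' → n • b ∈ N := by
    intro b hDb
    have hQb : (aeval D (p₀.divX.map (Int.castRingHom ℚ))) (D b) ∈ Λ' :=
      aux_aeval D Λ' hstab' p₀.divX (D b) hDb
    have hz : n • b = (n : ℚ) • b := (Int.cast_smul_eq_zsmul ℚ n b).symm
    have hmp := minpoly.aeval ℚ D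
    rcases hmin with heq | ⟨hinj, heq⟩
    · rw [heq, map_mul, map_mul, aeval_C, aeval_X] at hmp
      have h0 : D ((aeval D (p₀.map (Int.castRingHom ℚ))) b) = 0 := by
        have := congrArg (fun f => f b) hmp
        simp only [Module.End.mul_apply, Module.algebraMap_end_apply, LinearMap.zero_apply] at this
        rcases smul_eq_zero.mp this with h | h
        · exact absurd h hε'0
        · exact h
      have hkerm : (aeval D (p₀.map (Int.castRingHom ℚ))) b ∈ LinearMap.ker D :=
        LinearMap.mem_ker.mpr h0
      have hsum : (aeval D (p₀.map (Int.castRingHom ℚ))) b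
          + (-(aeval D (p₀.divX.map (Int.castRingHom ℚ))) (D b)) = n • b := by
        rw [hz, hb_eval b]; abel
      rw [hN]
      rw [Submodule.mem_sup]
      exact ⟨-(aeval D (p₀.divX.map (Int.castRingHom ℚ))) (D b), hle (neg_mem hQb),
        (aeval D (p₀.map (Int.castRingHom ℚ))) b, hkerm, by rw [← hsum]; abel⟩
    · rw [heq, map_mul, aeval_C] at hmp
      have h0 : (aeval D (p₀.map (Int.castRingHom ℚ))) b = 0 := by
        have := congrArg (fun f => f b) hmp
        simp only [Module.End.mul_apply, Module.algebraMap_end_apply, LinearMap.zero_apply] at this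
        rcases smul_eq_zero.mp this with h | h
        · exact absurd h hε'0
        · exact h
      have : (n : ℚ) • b = -((aeval D (p₀.divX.map (Int.castRingHom ℚ))) (D b)) := by
        have := hb_eval b
        rw [h0] at this
        linear_combination (norm := module) -this
      rw [hz, this]
      exact Submodule.mem_sup_left (hle (neg_mem hQb))
  have hkey : ∀ x ∈ M, n • x ∈ N := by
    intro x hx
    rcases Submodule.mem_sup.mp hx with ⟨a, ha, b, hb, rfl⟩
    rw [smul_add]
    exact add_mem (Submodule.mem_sup_left (zsmul_mem ha n)) (hkeyb b hb)
  -- part 4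
  have part4 : ∀ x ∈ M, D x ∈ N := fun x hx => Submodule.mem_sup_left (hDM x hx)
  -- torsion on the quotient
  have hq : ∀ y : SQ M N, n • y = 0 := by
    intro y
    obtain ⟨x, rfl⟩ := Submodule.Quotient.mk_surjective _ y
    rw [← Submodule.Quotient.mk_smul, Submodule.Quotient.mk_eq_zero]
    simpa using hkey x.1 x.2
  have hqn : ∀ y : SQ M N, (n.toNat) • y = 0 := by
    intro y
    have : ((n.toNat : ℤ)) • y = 0 := by rw [Int.toNat_of_nonneg hp₀0.le]; exact hq y
    rw [natCast_zsmul] at this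
    exact this
  -- generation
  have hgen : ∃ s : Finset (SQ M N), s.card ≤ dd - r ∧
      AddSubgroup.closure (s : Set (SQ M N)) = ⊤ := by
    set K : Submodule ℤ V := Λ' ⊓ (LinearMap.range D).restrictScalars ℤ with hK
    have hKΛ : K ≤ Λ := le_trans inf_le_left hle
    haveI hNoeth : IsNoetherian ℤ ↥Λ := isNoetherian_of_fg_of_noetherian Λ hfg
    have hKfg : K.FG := by
      have h1 : (K.comap Λ.subtype).FG := IsNoetherian.noetherian _
      have h2 := h1.map Λ.subtype
      rwa [Submodule.map_comap_subtype, inf_eq_right.mpr hKΛ] at h2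
    haveI : Module.Finite ℤ ↥K := Module.Finite.iff_fg.mpr hKfg
    haveI : NoZeroSMulDivisors ℤ V := by
      refine ⟨fun {c v} h => ?_⟩
      rcases eq_or_ne c 0 with hc | hc
      · exact Or.inl hc
      · right
        have : (c : ℚ) • v = 0 := by rw [Int.cast_smul_eq_zsmul]; exact h
        rcases smul_eq_zero.mp this with h' | h'
        · exact absurd (by exact_mod_cast h') hc
        · exact h'
    let ι := Module.Free.ChooseBasisIndex ℤ ↥K
    let bK : Module.Basis ι ℤ ↥K := Module.Free.chooseBasis ℤ ↥K
    have hind : LinearIndependent ℤ (fun i => ((bK i : V))) :=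
      bK.linearIndependent.map' K.subtype (Submodule.ker_subtype K)
    have hindQ : LinearIndependent ℚ (fun i => ((bK i : V))) :=
      (LinearIndependent.iff_fractionRing ℤ ℚ).mp hind
    have hmemr : ∀ i : ι, ((bK i : V)) ∈ LinearMap.range D := fun i => (bK i).2.2
    let w : ι → ↥(LinearMap.range D) := fun i => ⟨(bK i : V), hmemr i⟩
    have hindw : LinearIndependent ℚ w :=
      hindQ.of_comp (LinearMap.range D).subtype
    have hcard : Fintype.card ι ≤ dd - r := by
      have h1 := hindw.fintype_card_le_finrank
      have h2 := LinearMap.finrank_range_add_finrank_ker D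
      rw [hd, hr] at h2
      omega
    have hpre : ∀ i : ι, ∃ x : V, D x = (bK i : V) := fun i => hmemr i
    choose xi hxi using hpre
    have hxiM : ∀ i, xi i ∈ M := by
      intro i
      refine Submodule.mem_sup_right ?_
      show D (xi i) ∈ Λ'
      rw [hxi i]
      exact (bK i).2.1
    let mi : ι → ↥M := fun i => ⟨xi i, hxiM i⟩
    let g : ι → SQ M N := fun i => Submodule.Quotient.mk (mi i)
    have hclosure : AddSubgroup.closure (Set.range g) = ⊤ := by
      rw [eq_top_iff]
      rintro y -
      obtain ⟨x, rfl⟩ := Submodule.Quotient.mk_surjective _ y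
      obtain ⟨a, ha, c, hc, hx⟩ := Submodule.mem_sup.mp x.2
      have hDc : D c ∈ Λ' := hc
      have hcK : D c ∈ K := ⟨hDc, ⟨c, rfl⟩⟩
      have hcM : c ∈ M := Submodule.mem_sup_right hc
      have e1 : (Submodule.Quotient.mk x : SQ M N) = Submodule.Quotient.mk ⟨c, hcM⟩ := by
        rw [Submodule.Quotient.eq]
        refine Submodule.mem_comap.mpr ?_
        have hval : M.subtype (x - ⟨c, hcM⟩) = a := by
          simp only [Submodule.subtype_apply, Submodule.coe_sub]
          rw [← hx]; abel
        rw [hval]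
        exact Submodule.mem_sup_left ha
      set coeffs : ι → ℤ := fun i => bK.repr ⟨D c, hcK⟩ i with hcoeffs
      have hrepr := bK.sum_repr ⟨D c, hcK⟩
      have hreprV : ∑ i, coeffs i • (bK i : V) = D c := by
        have := congrArg (Submodule.subtype K) hrepr
        simp only [hcoeffs]
        rw [map_sum] at this
        simp only [map_smul, Submodule.subtype_apply] at this
        exact this
      have hDc' : D (∑ i, coeffs i • xi i) = D c := by
        rw [map_sum, ← hreprV]
        refine Finset.sum_congr rfl fun i _ => ?_
        rw [map_zsmul, hxi i]
      have hsM : (∑ i, coeffs i • xi i) = ((∑ i, coeffs i • mi i : M) : V) := by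
        simp [mi]
      have e2 : (Submodule.Quotient.mk ⟨c, hcM⟩ : SQ M N)
          = Submodule.Quotient.mk (∑ i, coeffs i • mi i) := by
        rw [Submodule.Quotient.eq]
        refine Submodule.mem_comap.mpr ?_
        refine Submodule.mem_sup_right ?_
        show c - ((∑ i, coeffs i • mi i : M) : V) ∈ LinearMap.ker D
        rw [← hsM]
        rw [LinearMap.mem_ker, map_sub, hDc', sub_self]
      have e3 : (Submodule.Quotient.mk (∑ i, coeffs i • mi i) : SQ M N)
          = ∑ i, coeffs i • g i := by
        rw [← Submodule.mkQ_apply, map_sum]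
        refine Finset.sum_congr rfl fun i _ => ?_
        rw [map_zsmul, Submodule.mkQ_apply]
      rw [e1, e2, e3]
      exact AddSubgroup.sum_mem _ fun i _ =>
        AddSubgroup.zsmul_mem _ (AddSubgroup.subset_closure (Set.mem_range_self i)) _
    refine ⟨Finset.univ.image g, ?_, ?_⟩
    · exact le_trans (le_trans Finset.card_image_le (le_of_eq Finset.card_univ)) hcard
    · rw [Finset.coe_image, Finset.coe_univ, Set.image_univ, hclosure]
  obtain ⟨s, hs1, hs2⟩ := hgen
  have hfin : Finite (SQ M N) := by
    have hfg' : AddGroup.FG (SQ M N) :=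
      AddGroup.fg_iff.mpr ⟨(s : Set (SQ M N)), hs2, s.finite_toSet⟩
    exact AddCommGroup.finite_of_fg_torsion _ fun y =>
      isOfFinAddOrder_iff_nsmul_eq_zero.mpr
        ⟨n.toNat, by omega, hqn y⟩
  refine ⟨hfin, ⟨s, hs1, hs2⟩, ?_, part4⟩
  exact AddMonoid.exponent_dvd_of_forall_nsmul_eq_zero hqn
end
end

section
/- Let Λ be a lattice with endomorphism D satisfying Λ[D] = Λ[D²], Λ' ⊆ Λ a D-stable full-rank sublattice, and define B_{Λ,Λ'} = (Λ + D⁻¹Λ')/(Λ + V[D]) inside V = Λ⊗ℚ. Then for every positive integer e, B_{Λ,eΛ'} = e·B_{Λ,Λ'} ≅ B_{Λ,Λ'}/B_{Λ,Λ'}[e]. -/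
open Submodule

noncomputable section

theorem stmt7 {V : Type} [AddCommGroup V] [Module ℚ V] [FiniteDimensional ℚ V]
    (D : V →ₗ[ℚ] V) (hker : LinearMap.ker D = LinearMap.ker (D ∘ₗ D))
    (Λ Λ' : Submodule ℤ V) (hfg : Λ.FG) (hle : Λ' ≤ Λ)
    (hfull : Submodule.span ℚ (Λ : Set V) = ⊤)
    (hfull' : Submodule.span ℚ (Λ' : Set V) = ⊤)
    (hstab : Λ.map (D.restrictScalars ℤ) ≤ Λ)
    (hstab' : Λ'.map (D.restrictScalars ℤ) ≤ Λ')
    (e : ℕ) (he : 0 < e)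
    (N : Submodule ℤ V) (hN : N = Λ ⊔ (LinearMap.ker D).restrictScalars ℤ)
    (B Be : Submodule ℤ (V ⧸ N))
    (hB : B = (Λ ⊔ Λ'.comap (D.restrictScalars ℤ)).map N.mkQ)
    (hBe : Be = (Λ ⊔ (Λ'.map ((e : ℤ) • (LinearMap.id : V →ₗ[ℤ] V))).comap
      (D.restrictScalars ℤ)).map N.mkQ) :
    Be = B.map ((e : ℤ) • (LinearMap.id : (V ⧸ N) →ₗ[ℤ] (V ⧸ N))) ∧
    Nonempty (Be ≃+ SQ B (B ⊓ Submodule.torsionBy ℤ (V ⧸ N) (e : ℤ))) := by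
  have he0 : ((e : ℚ)) ≠ 0 := by positivity
  have hΛN : Λ ≤ N := hN ▸ le_sup_left
  have hbot : ∀ X : Submodule ℤ V, X ≤ N → X.map N.mkQ = ⊥ := by
    intro X hX
    rw [eq_bot_iff, Submodule.map_le_iff_le_comap]
    intro x hx
    simpa [Submodule.mem_comap, Submodule.Quotient.mk_eq_zero] using hX hx
  -- preimage of e•Λ' equals e • preimage of Λ'
  set C : Submodule ℤ V := Λ'.comap (D.restrictScalars ℤ) with hCdef
  have hcomap : (Λ'.map ((e : ℤ) • (LinearMap.id : V →ₗ[ℤ] V))).comap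
      (D.restrictScalars ℤ) = C.map ((e : ℤ) • (LinearMap.id : V →ₗ[ℤ] V)) := by
    ext x
    simp only [Submodule.mem_comap, Submodule.mem_map, LinearMap.smul_apply,
      LinearMap.id_apply, LinearMap.coe_restrictScalars, hCdef]
    constructor
    · rintro ⟨y, hy, hxy⟩
      refine ⟨(e : ℚ)⁻¹ • x, ?_, ?_⟩
      · have : D ((e : ℚ)⁻¹ • x) = y := by
          rw [map_smul, ← hxy, ← Int.cast_smul_eq_zsmul ℚ, smul_smul]
          push_cast
          rw [inv_mul_cancel₀ he0, one_smul]
        rw [this]; exact hy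
      · rw [← Int.cast_smul_eq_zsmul ℚ, smul_smul]
        push_cast
        rw [mul_inv_cancel₀ he0, one_smul]
    · rintro ⟨y, hy, rfl⟩
      refine ⟨D y, hy, ?_⟩
      rw [← Int.cast_smul_eq_zsmul ℚ, ← Int.cast_smul_eq_zsmul ℚ, map_smul]
  have hCe_le : Λ.map ((e : ℤ) • (LinearMap.id : V →ₗ[ℤ] V)) ≤ N := by
    rw [Submodule.map_le_iff_le_comap]
    intro x hx
    simpa using N.smul_mem (e : ℤ) (hΛN hx)
  have hcommute : ((e : ℤ) • (LinearMap.id : (V ⧸ N) →ₗ[ℤ] (V ⧸ N))) ∘ₗ N.mkQ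
      = N.mkQ ∘ₗ ((e : ℤ) • (LinearMap.id : V →ₗ[ℤ] V)) := by
    ext x; simp
  have key : Be = B.map ((e : ℤ) • (LinearMap.id : (V ⧸ N) →ₗ[ℤ] (V ⧸ N))) := by
    rw [hB, hBe, hcomap, ← Submodule.map_comp, hcommute, Submodule.map_comp,
      Submodule.map_sup, Submodule.map_sup, Submodule.map_sup,
      hbot _ hΛN, hbot _ hCe_le, bot_sup_eq]
  refine ⟨key, ?_⟩
  set f : B →ₗ[ℤ] V ⧸ N := (e : ℤ) • B.subtype with hf
  have hrange : LinearMap.range f = B.map ((e : ℤ) • (LinearMap.id : (V ⧸ N) →ₗ[ℤ] (V ⧸ N))) := by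
    ext x
    simp only [LinearMap.mem_range, Submodule.mem_map, LinearMap.smul_apply,
      LinearMap.id_apply, Submodule.coe_subtype, hf]
    constructor
    · rintro ⟨y, rfl⟩; exact ⟨y, y.2, rfl⟩
    · rintro ⟨y, hy, rfl⟩; exact ⟨⟨y, hy⟩, rfl⟩
  have hkerf : LinearMap.ker f
      = (B ⊓ Submodule.torsionBy ℤ (V ⧸ N) (e : ℤ)).comap B.subtype := by
    ext x
    simp only [LinearMap.mem_ker, Submodule.mem_comap, Submodule.mem_inf,
      Submodule.mem_torsionBy_iff, LinearMap.smul_apply, Submodule.coe_subtype, hf]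
    exact ⟨fun h => ⟨x.2, h⟩, fun h => h.2⟩
  have equiv := f.quotKerEquivRange
  rw [hkerf, hrange, ← key] at equiv
  exact ⟨equiv.symm.toAddEquiv⟩

end
end

section
/- Let V be a finite-dimensional ℚ-vector space with a nondegenerate symmetric bilinear form (·,·): V×V → ℚ. For subsets M, N ∈ L(V) (sums of a subspace and a finitely generated ℤ-submodule), the dual operation M ↦ M^∨ = {v ∈ V : (v, m) ∈ ℤ for all m ∈ M} satisfies: M^∨∨ = M, (M+N)^∨ = M^∨ ∩ N^∨, and (M∩N)^∨ = M^∨ + N^∨. -/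
open Submodule LinearMap Set

noncomputable section

/-- Membership in `L(V)`: a subset of `V` of the form (subspace) + (f.g. ℤ-submodule). -/
def IsLV {V : Type} [AddCommGroup V] [Module ℚ V] (M : Submodule ℤ V) : Prop :=
  ∃ (U : Submodule ℚ V) (Λ : Submodule ℤ V), Λ.FG ∧ M = U.restrictScalars ℤ ⊔ Λ

namespace LVAux

variable {V : Type} [AddCommGroup V] [Module ℚ V]

/-- Standard form submodule: ℚ-span of basis vectors in `S` plus ℤ-span of those in `T`. -/
def stdForm {ι : Type} (b : Module.Basis ι ℚ V) (S T : Set ι) : Submodule ℤ V :=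
  (Submodule.span ℚ (b '' S)).restrictScalars ℤ ⊔ Submodule.span ℤ (b '' T)

theorem mem_stdForm {ι : Type} [Fintype ι] (b : Module.Basis ι ℚ V) {S T : Set ι}
    (hST : Disjoint S T) (x : V) :
    x ∈ stdForm b S T ↔
      (∀ i, i ∉ S → i ∉ T → b.repr x i = 0) ∧ ∀ i ∈ T, ∃ z : ℤ, (z : ℚ) = b.repr x i := by
  classical
  constructor
  · intro hx
    obtain ⟨u, hu, t, ht, rfl⟩ := Submodule.mem_sup.mp hx
    rw [Submodule.restrictScalars_mem] at hu
    have hu' : ∀ i, i ∉ S → b.repr u i = 0 := by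
      intro i hi
      have := (Module.Basis.mem_span_image b).mp hu
      by_contra h
      exact hi (this (Finsupp.mem_support_iff.mpr h))
    have ht' : (∀ i, i ∉ T → b.repr t i = 0) ∧ ∀ i, ∃ z : ℤ, (z : ℚ) = b.repr t i := by
      refine Submodule.span_induction (p := fun t _ =>
        (∀ i, i ∉ T → b.repr t i = 0) ∧ ∀ i, ∃ z : ℤ, (z : ℚ) = b.repr t i) ?_ ?_ ?_ ?_ ht
      · rintro _ ⟨j, hj, rfl⟩
        constructor
        · intro i hi
          rw [b.repr_self, Finsupp.single_apply]
          have : j ≠ i := fun h => hi (h ▸ hj)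
          simp [this]
        · intro i
          rw [b.repr_self, Finsupp.single_apply]
          by_cases h : j = i
          · exact ⟨1, by simp [h]⟩
          · exact ⟨0, by simp [h]⟩
      · exact ⟨fun i _ => by simp, fun i => ⟨0, by simp⟩⟩
      · rintro a c _ _ ⟨h1, h2⟩ ⟨h3, h4⟩
        refine ⟨fun i hi => by simp [h1 i hi, h3 i hi], fun i => ?_⟩
        obtain ⟨z1, hz1⟩ := h2 i
        obtain ⟨z2, hz2⟩ := h4 i
        exact ⟨z1 + z2, by push_cast [hz1, hz2]; simp⟩
      · rintro z a _ ⟨h1, h2⟩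
        have key : ∀ i, b.repr (z • a) i = z * b.repr a i := by
          intro i
          rw [← Int.cast_smul_eq_zsmul ℚ z a, map_smul]
          simp [smul_eq_mul]
        refine ⟨fun i hi => by rw [key, h1 i hi, mul_zero], fun i => ?_⟩
        obtain ⟨z1, hz1⟩ := h2 i
        exact ⟨z * z1, by rw [key, ← hz1]; push_cast; ring⟩
    constructor
    · intro i hiS hiT
      simp [map_add, hu' i hiS, ht'.1 i hiT]
    · intro i hiT
      obtain ⟨z, hz⟩ := ht'.2 i
      refine ⟨z, ?_⟩
      have : b.repr u i = 0 := hu' i (fun hiS => hST.ne_of_mem hiS hiT rfl)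
      simp [map_add, this, hz]
  · rintro ⟨h1, h2⟩
    have hsum : ∑ i, b.repr x i • b i = (∑ i ∈ Finset.univ.filter (· ∈ S), b.repr x i • b i)
        + ∑ i ∈ Finset.univ.filter (· ∈ T), b.repr x i • b i := by
      rw [← Finset.sum_union]
      · refine (Finset.sum_subset (Finset.subset_univ _) ?_).symm
        intro i _ hi
        simp only [Finset.mem_union, Finset.mem_filter, Finset.mem_univ, true_and,
          not_or] at hi
        rw [h1 i hi.1 hi.2, zero_smul]
      · rw [Finset.disjoint_filter]
        intro i _ hiS hiT
        exact hST.ne_of_mem hiS hiT rfl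
    rw [show x = ∑ i, b.repr x i • b i from (b.sum_repr x).symm, hsum]
    apply Submodule.add_mem
    · apply Submodule.mem_sup_left
      rw [Submodule.restrictScalars_mem]
      apply Submodule.sum_mem
      intro i hi
      simp only [Finset.mem_filter] at hi
      exact Submodule.smul_mem _ _ (Submodule.subset_span ⟨i, hi.2, rfl⟩)
    · apply Submodule.mem_sup_right
      apply Submodule.sum_mem
      intro i hi
      simp only [Finset.mem_filter, Finset.mem_univ, true_and] at hi
      obtain ⟨z, hz⟩ := h2 i hi
      rw [← hz, Int.cast_smul_eq_zsmul]
      exact Submodule.smul_mem _ _ (Submodule.subset_span ⟨i, hi, rfl⟩)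


theorem mem_dualSubmodule_stdForm (B : LinearMap.BilinForm ℚ V) {ι : Type} [Fintype ι]
    (b : Module.Basis ι ℚ V) (S T : Set ι) (x : V) :
    x ∈ B.dualSubmodule (stdForm b S T) ↔
      (∀ i ∈ S, B x (b i) = 0) ∧ ∀ i ∈ T, ∃ z : ℤ, (z : ℚ) = B x (b i) := by
  classical
  constructor
  · intro hx
    constructor
    · intro i hi
      by_contra h
      have hmem : ∀ q : ℚ, q • b i ∈ stdForm b S T := fun q =>
        Submodule.mem_sup_left (by
          rw [Submodule.restrictScalars_mem]
          exact Submodule.smul_mem _ _ (Submodule.subset_span ⟨i, hi, rfl⟩))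
      have := hx _ (hmem ((2 * B x (b i))⁻¹))
      rw [map_smul, smul_eq_mul] at this
      obtain ⟨z, hz⟩ := (Submodule.mem_one).mp this
      have hhalf : (2 * B x (b i))⁻¹ * (B x (b i)) = 1/2 := by
        field_simp
      rw [hhalf] at hz
      have hz' : (z : ℚ) = 1/2 := by simpa using hz
      have h2 : (2 * z : ℤ) = 1 := by
        have : (2 : ℚ) * z = 1 := by rw [hz']; norm_num
        exact_mod_cast this
      omega
    · intro i hi
      have : b i ∈ stdForm b S T :=
        Submodule.mem_sup_right (Submodule.subset_span ⟨i, hi, rfl⟩)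
      obtain ⟨z, hz⟩ := (Submodule.mem_one).mp (hx _ this)
      exact ⟨z, by simpa using hz⟩
  · rintro ⟨h1, h2⟩ y hy
    obtain ⟨u, hu, t, ht, rfl⟩ := Submodule.mem_sup.mp hy
    rw [Submodule.restrictScalars_mem] at hu
    have hBu : B x u = 0 := by
      refine Submodule.span_induction (p := fun u _ => B x u = 0) ?_ ?_ ?_ ?_ hu
      · rintro _ ⟨j, hj, rfl⟩; exact h1 j hj
      · simp
      · intro a c _ _ ha hc; rw [map_add, ha, hc, add_zero]
      · intro q a _ ha; rw [map_smul, smul_eq_mul, ha, mul_zero]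
    have hBt : B x t ∈ (1 : Submodule ℤ ℚ) := by
      refine Submodule.span_induction (p := fun t _ => B x t ∈ (1 : Submodule ℤ ℚ)) ?_ ?_ ?_ ?_ ht
      · rintro _ ⟨j, hj, rfl⟩
        obtain ⟨z, hz⟩ := h2 j hj
        exact (Submodule.mem_one).mpr ⟨z, by simpa using hz⟩
      · simp
      · intro a c _ _ ha hc; rw [map_add]; exact Submodule.add_mem _ ha hc
      · intro z a _ ha
        rw [← Int.cast_smul_eq_zsmul ℚ z a, map_smul]
        obtain ⟨w, hw⟩ := (Submodule.mem_one).mp ha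
        exact (Submodule.mem_one).mpr ⟨z * w, by push_cast [← hw]; simp [smul_eq_mul]⟩
    rw [map_add, hBu, zero_add]
    exact hBt

theorem dualSubmodule_stdForm [FiniteDimensional ℚ V] (B : LinearMap.BilinForm ℚ V)
    (hnd : B.Nondegenerate) {ι : Type} [Fintype ι] [DecidableEq ι] (b : Module.Basis ι ℚ V)
    {S T : Set ι} (hST : Disjoint S T) :
    B.dualSubmodule (stdForm b S T) = stdForm (B.dualBasis hnd b) ((S ∪ T)ᶜ) T := by
  have hdisj : Disjoint ((S ∪ T)ᶜ : Set ι) T :=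
    Set.disjoint_left.mpr fun i hi hiT => hi (Or.inr hiT)
  ext x
  rw [mem_dualSubmodule_stdForm, mem_stdForm _ hdisj]
  simp only [LinearMap.BilinForm.dualBasis_repr_apply, Set.mem_compl_iff, not_not,
    Set.mem_union]
  constructor
  · rintro ⟨h1, h2⟩
    refine ⟨fun i hor hiT => ?_, h2⟩
    rcases hor with hS | hT
    · exact h1 i hS
    · exact absurd hT hiT
  · rintro ⟨h1, h2⟩
    exact ⟨fun i hiS => h1 i (Or.inl hiS) (fun hiT => hST.ne_of_mem hiS hiT rfl), h2⟩

theorem sumExtend_inl {ι : Type} {v : ι → V}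
    (hs : LinearIndependent ℚ v) (i : ι) : Module.Basis.sumExtend hs (Sum.inl i) = v i := by
  simp [Module.Basis.sumExtend, Module.Basis.reindex_apply, Equiv.Set.sumDiffSubset,
    Equiv.Set.union, Equiv.Set.union', Equiv.ofInjective, Equiv.sumCongr, Sum.map,
    Equiv.ofLeftInverse]
  rfl


theorem isLV_structure [FiniteDimensional ℚ V] {M : Submodule ℤ V} (hM : IsLV M) :
    ∃ (ι : Type) (_ : Fintype ι) (b : Module.Basis ι ℚ V) (S T : Set ι),
      Disjoint S T ∧ M = stdForm b S T := by
  classical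
  obtain ⟨U, Λ, hΛ, rfl⟩ := hM
  set π : V →ₗ[ℤ] V ⧸ U := (U.mkQ).restrictScalars ℤ with hπ
  set Λ' : Submodule ℤ (V ⧸ U) := Λ.map π with hΛ'def
  haveI : Module.Finite ℤ Λ' := Module.Finite.iff_fg.mpr (hΛ.map π)
  haveI : NoZeroSMulDivisors ℤ (V ⧸ U) := ⟨fun {z x} h => by
    rcases eq_or_ne z 0 with rfl | hz
    · exact Or.inl rfl
    · refine Or.inr ?_
      have h' : (z : ℚ) • x = 0 := by rwa [Int.cast_smul_eq_zsmul]
      exact (smul_eq_zero.mp h').resolve_left (by exact_mod_cast hz)⟩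
  haveI : Module.Free ℤ Λ' := Module.free_of_finite_type_torsion_free'
  set κ := Module.Free.ChooseBasisIndex ℤ Λ' with hκ
  set c : Module.Basis κ ℤ Λ' := Module.Free.chooseBasis ℤ Λ' with hc
  set v : κ → V ⧸ U := fun i => (c i : V ⧸ U) with hv
  have hvZ : LinearIndependent ℤ v :=
    c.linearIndependent.map' Λ'.subtype (Submodule.ker_subtype _)
  have hvQ : LinearIndependent ℚ v := (LinearIndependent.iff_fractionRing ℤ ℚ).mp hvZ
  have hspanv : Submodule.span ℤ (Set.range v) = Λ' := by
    have h1 : Set.range v = Λ'.subtype '' (Set.range c) := by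
      rw [← Set.range_comp]; rfl
    rw [h1, ← Submodule.map_span, c.span_eq, Submodule.map_top, Submodule.range_subtype]
  have hlift : ∀ i, ∃ y, y ∈ Λ ∧ π y = v i := by
    intro i
    obtain ⟨y, hy, hyv⟩ := Submodule.mem_map.mp (c i).2
    exact ⟨y, hy, hyv⟩
  choose xf hxΛ hxv using hlift
  set κ₂ := Module.Free.ChooseBasisIndex ℚ U with hκ₂
  set u : Module.Basis κ₂ ℚ U := Module.Free.chooseBasis ℚ U with hu
  set uf : κ₂ → V := fun j => (u j : V) with huf
  have hu_indep : LinearIndependent ℚ uf :=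
    u.linearIndependent.map' U.subtype (Submodule.ker_subtype _)
  have hmkq : ∀ i, U.mkQ (xf i) = v i := fun i => hxv i
  have hx_indep : LinearIndependent ℚ xf := by
    refine LinearIndependent.of_comp U.mkQ ?_
    have : (U.mkQ) ∘ xf = v := funext hmkq
    rw [this]; exact hvQ
  have hspan_u : Submodule.span ℚ (Set.range uf) = U := by
    have h1 : Set.range uf = U.subtype '' (Set.range u) := by
      rw [← Set.range_comp]; rfl
    rw [h1, ← Submodule.map_span, u.span_eq, Submodule.map_top, Submodule.range_subtype]
  have hdisj : Disjoint U (Submodule.span ℚ (Set.range xf)) := by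
    rw [Submodule.disjoint_def]
    intro w hwU hwspan
    obtain ⟨q, hq⟩ := (mem_span_range_iff_exists_fun ℚ).mp hwspan
    have h0 : ∑ i, q i • v i = 0 := by
      have h2 := congrArg U.mkQ hq
      simp only [map_sum, map_smul] at h2
      rw [show (U.mkQ) w = 0 from (Submodule.Quotient.mk_eq_zero U).mpr hwU] at h2
      simpa [hmkq] using h2
    have hq0 : ∀ i, q i = 0 := Fintype.linearIndependent_iff.mp hvQ q h0
    rw [← hq]
    simp [hq0]
  have hE : LinearIndependent ℚ (Sum.elim uf xf) :=
    hu_indep.sum_type hx_indep (by rw [hspan_u]; exact hdisj)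
  set b := Module.Basis.sumExtend hE with hb
  haveI ft : Fintype ((κ₂ ⊕ κ) ⊕ Module.Basis.sumExtendIndex hE) :=
    FiniteDimensional.fintypeBasisIndex b
  refine ⟨_, ft, b, Set.range (Sum.inl ∘ Sum.inl), Set.range (Sum.inl ∘ Sum.inr), ?_, ?_⟩
  · rw [Set.disjoint_left]
    rintro _ ⟨j, rfl⟩ ⟨i, h⟩
    simp at h
  · have heq1 : b ∘ (Sum.inl ∘ Sum.inl) = uf := by
      funext j
      show b (Sum.inl (Sum.inl j)) = uf j
      rw [hb, sumExtend_inl]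
      rfl
    have heq2 : b ∘ (Sum.inl ∘ Sum.inr) = xf := by
      funext i
      show b (Sum.inl (Sum.inr i)) = xf i
      rw [hb, sumExtend_inl]
      rfl
    have hbS : b '' (Set.range (Sum.inl ∘ Sum.inl)) = Set.range uf := by
      rw [← Set.range_comp, heq1]
    have hbT : b '' (Set.range (Sum.inl ∘ Sum.inr)) = Set.range xf := by
      rw [← Set.range_comp, heq2]
    rw [stdForm, hbS, hbT, hspan_u]
    refine le_antisymm (sup_le le_sup_left ?_) (sup_le le_sup_left ?_)
    · intro y hy
      have hy' : π y ∈ Λ' := Submodule.mem_map_of_mem hy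
      rw [← hspanv] at hy'
      obtain ⟨z, hz⟩ := (mem_span_range_iff_exists_fun ℤ).mp hy'
      have hker : y - ∑ i, z i • xf i ∈ U := by
        rw [← Submodule.Quotient.mk_eq_zero U]
        have : U.mkQ (y - ∑ i, z i • xf i) = π y - ∑ i, z i • v i := by
          simp [map_sub, map_sum, hmkq]
          rfl
        rw [show (Submodule.Quotient.mk (y - ∑ i, z i • xf i) : V ⧸ U)
            = U.mkQ (y - ∑ i, z i • xf i) from rfl, this, hz, sub_self]
      have : y = (y - ∑ i, z i • xf i) + ∑ i, z i • xf i := by abel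
      rw [this]
      exact Submodule.add_mem _ (Submodule.mem_sup_left hker)
        (Submodule.mem_sup_right (Submodule.sum_mem _ fun i _ =>
          Submodule.smul_mem _ _ (Submodule.subset_span ⟨i, rfl⟩)))
    · rw [Submodule.span_le]
      rintro _ ⟨i, rfl⟩
      exact Submodule.mem_sup_right (hxΛ i)


theorem stdForm_isLV {ι : Type} [Fintype ι] (b : Module.Basis ι ℚ V) (S T : Set ι) :
    IsLV (stdForm b S T) :=
  ⟨Submodule.span ℚ (b '' S), Submodule.span ℤ (b '' T),
    Submodule.fg_span (Set.toFinite _), rfl⟩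

theorem dualSubmodule_sup (B : LinearMap.BilinForm ℚ V) (M N : Submodule ℤ V) :
    B.dualSubmodule (M ⊔ N) = B.dualSubmodule M ⊓ B.dualSubmodule N := by
  apply le_antisymm
  · exact le_inf (fun x hx y hy => hx y (Submodule.mem_sup_left hy))
      (fun x hx y hy => hx y (Submodule.mem_sup_right hy))
  · rintro x ⟨hx1, hx2⟩ y hy
    obtain ⟨m, hm, n, hn, rfl⟩ := Submodule.mem_sup.mp hy
    rw [map_add]
    exact Submodule.add_mem _ (hx1 m hm) (hx2 n hn)

theorem restrictScalars_sup' (U1 U2 : Submodule ℚ V) :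
    (U1 ⊔ U2).restrictScalars ℤ = U1.restrictScalars ℤ ⊔ U2.restrictScalars ℤ := by
  apply le_antisymm
  · intro x hx
    obtain ⟨a, ha, c, hc, rfl⟩ := Submodule.mem_sup.mp hx
    exact Submodule.add_mem _ (Submodule.mem_sup_left ha) (Submodule.mem_sup_right hc)
  · exact sup_le (fun x hx => Submodule.mem_sup_left hx)
      (fun x hx => Submodule.mem_sup_right hx)

theorem IsLV.sup' {M N : Submodule ℤ V} (hM : IsLV M) (hN : IsLV N) : IsLV (M ⊔ N) := by
  obtain ⟨U1, L1, h1, rfl⟩ := hM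
  obtain ⟨U2, L2, h2, rfl⟩ := hN
  exact ⟨U1 ⊔ U2, L1 ⊔ L2, h1.sup h2, by
    rw [restrictScalars_sup', sup_sup_sup_comm]⟩

theorem compl_union_compl {ι : Type} {S T : Set ι} (hST : Disjoint S T) :
    (((S ∪ T)ᶜ ∪ T)ᶜ : Set ι) = S := by
  ext i
  have hd : i ∈ S → i ∉ T := fun hS hT => hST.ne_of_mem hS hT rfl
  simp only [Set.mem_compl_iff, Set.mem_union]
  tauto

theorem dual_dual [FiniteDimensional ℚ V] (B : LinearMap.BilinForm ℚ V)
    (hsymm : ∀ x y, B x y = B y x) (hnd : B.Nondegenerate) {M : Submodule ℤ V}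
    (hM : IsLV M) : B.dualSubmodule (B.dualSubmodule M) = M := by
  classical
  obtain ⟨ι, _, b, S, T, hST, rfl⟩ := isLV_structure hM
  have hsym : B.IsSymm := ⟨fun x y => hsymm x y⟩
  have hdisj2 : Disjoint (((S ∪ T)ᶜ) : Set ι) T :=
    Set.disjoint_left.mpr fun i hi hiT => hi (Or.inr hiT)
  rw [dualSubmodule_stdForm B hnd b hST,
      dualSubmodule_stdForm B hnd (B.dualBasis hnd b) hdisj2,
      B.dualBasis_dualBasis hnd hsym, compl_union_compl hST]

theorem IsLV.dual' [FiniteDimensional ℚ V] (B : LinearMap.BilinForm ℚ V)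
    (hnd : B.Nondegenerate) {M : Submodule ℤ V} (hM : IsLV M) :
    IsLV (B.dualSubmodule M) := by
  classical
  obtain ⟨ι, _, b, S, T, hST, rfl⟩ := isLV_structure hM
  rw [dualSubmodule_stdForm B hnd b hST]
  exact stdForm_isLV _ _ _

end LVAux

theorem stmt11 {V : Type} [AddCommGroup V] [Module ℚ V] [FiniteDimensional ℚ V]
    (B : LinearMap.BilinForm ℚ V) (hsymm : ∀ x y, B x y = B y x)
    (hnd : B.Nondegenerate)
    (M N : Submodule ℤ V) (hM : IsLV M) (hN : IsLV N) :
    B.dualSubmodule (B.dualSubmodule M : Submodule ℤ V) = M ∧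
    (B.dualSubmodule (M ⊔ N) : Submodule ℤ V) =
      B.dualSubmodule M ⊓ B.dualSubmodule N ∧
    (B.dualSubmodule (M ⊓ N) : Submodule ℤ V) =
      B.dualSubmodule M ⊔ B.dualSubmodule N := by
  refine ⟨LVAux.dual_dual B hsymm hnd hM, LVAux.dualSubmodule_sup B M N, ?_⟩
  have h1 : IsLV (B.dualSubmodule M ⊔ B.dualSubmodule N) :=
    LVAux.IsLV.sup' (LVAux.IsLV.dual' B hnd hM) (LVAux.IsLV.dual' B hnd hN)
  have e1 : B.dualSubmodule (B.dualSubmodule M ⊔ B.dualSubmodule N) = M ⊓ N := by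
    rw [LVAux.dualSubmodule_sup, LVAux.dual_dual B hsymm hnd hM,
      LVAux.dual_dual B hsymm hnd hN]
  rw [← e1, LVAux.dual_dual B hsymm hnd h1]
end
end

section
/- Let V be a finite-dimensional ℚ-vector space with a nondegenerate symmetric ℚ-valued pairing, and let N ⊆ M be members of L(V) (subspace-plus-lattice subsets) with M/N finite. Then M/N is isomorphic to N^∨/M^∨ as abelian groups. -/
open Submodule LinearMap

noncomputable section

section Helpers

variable {V : Type} [AddCommGroup V] [Module ℚ V]

lemma int_valued_zero (B : LinearMap.BilinForm ℚ V) {U : Submodule ℚ V} {v : V}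
    (h : ∀ u ∈ U, B v u ∈ (1 : Submodule ℤ ℚ)) : ∀ u ∈ U, B v u = 0 := by
  intro u hu
  by_contra ht
  obtain ⟨z, hz⟩ := Submodule.mem_one.mp (h ((2 * B v u)⁻¹ • u) (U.smul_mem _ hu))
  rw [map_smul, smul_eq_mul, mul_inv, mul_assoc, inv_mul_cancel₀ ht, mul_one] at hz
  have h2 : (z : ℚ) = 2⁻¹ := by exact_mod_cast hz
  have h3 : ((2 * z : ℤ) : ℚ) = ((1 : ℤ) : ℚ) := by
    push_cast
    rw [h2]
    norm_num
  have := Int.cast_injective (α := ℚ) h3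
  omega

lemma dual_eq (B : LinearMap.BilinForm ℚ V)
    {r : ℕ} (U W : Submodule ℚ V) (e μ : Fin r → V)
    (hW : ∀ v, v ∈ W ↔ (∀ u ∈ U, B v u = 0) ∧ ∀ i, B v (e i) = 0)
    (hμU : ∀ i, ∀ u ∈ U, B (μ i) u = 0)
    (hμe : ∀ i j, B (μ i) (e j) = if i = j then 1 else 0) :
    B.dualSubmodule (U.restrictScalars ℤ ⊔ span ℤ (Set.range e))
      = W.restrictScalars ℤ ⊔ span ℤ (Set.range μ) := by
  apply le_antisymm
  · intro v hv
    have hvU : ∀ u ∈ U, B v u = 0 := by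
      apply int_valued_zero B
      intro u hu
      exact hv u (Submodule.mem_sup_left hu)
    choose c hc using fun i =>
      Submodule.mem_one.mp (hv (e i) (Submodule.mem_sup_right (Submodule.subset_span (Set.mem_range_self i))))
    have hc' : ∀ i, ((c i : ℚ)) = B v (e i) := by
      intro i; exact_mod_cast hc i
    have hv' : v - ∑ i, c i • μ i ∈ W := by
      rw [hW]
      constructor
      · intro u hu
        rw [map_sub, LinearMap.sub_apply, hvU u hu, map_sum, LinearMap.sum_apply]
        simp only [map_zsmul, LinearMap.smul_apply]
        rw [Finset.sum_eq_zero (fun i _ => by rw [hμU i u hu, smul_zero])]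
        simp
      · intro j
        rw [map_sub, LinearMap.sub_apply, map_sum, LinearMap.sum_apply]
        simp only [map_zsmul, LinearMap.smul_apply, hμe]
        rw [Finset.sum_eq_single j]
        · rw [if_pos rfl, ← hc' j]
          simp
        · intro i _ hij
          rw [if_neg hij, smul_zero]
        · intro hj; exact absurd (Finset.mem_univ j) hj
    have hdec : v = (v - ∑ i, c i • μ i) + ∑ i, c i • μ i := by abel
    rw [hdec]
    refine Submodule.add_mem _ (Submodule.mem_sup_left ?_) (Submodule.mem_sup_right
      (sum_mem fun i _ => zsmul_mem (Submodule.subset_span (Set.mem_range_self i)) _))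
    exact hv'
  · apply sup_le
    · intro w hw y hy
      obtain ⟨u, hu, z, hz, rfl⟩ := Submodule.mem_sup.mp hy
      obtain ⟨cc, rfl⟩ := (mem_span_range_iff_exists_fun ℤ).mp hz
      obtain ⟨h1, h2⟩ := (hW w).mp hw
      rw [map_add, h1 u hu, zero_add, map_sum]
      simp only [map_zsmul]
      rw [Finset.sum_eq_zero]
      · exact zero_mem _
      · intro i _
        rw [h2 i, smul_zero]
    · rw [Submodule.span_le]
      rintro _ ⟨j, rfl⟩
      intro y hy
      obtain ⟨u, hu, z, hz, rfl⟩ := Submodule.mem_sup.mp hy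
      obtain ⟨cc, rfl⟩ := (mem_span_range_iff_exists_fun ℤ).mp hz
      refine Submodule.mem_one.mpr ⟨cc j, ?_⟩
      rw [map_add, hμU j u hu, zero_add, map_sum]
      simp only [map_zsmul, hμe]
      rw [Finset.sum_eq_single j]
      · simp
      · intro i _ hij
        rw [if_neg hij.symm, smul_zero]  -- careful: hμe j i = if j = i
      · intro hj; exact absurd (Finset.mem_univ j) hj

lemma quot_eq (U' : Submodule ℚ V) {r : ℕ} (f : Fin r → V)
    (hf : ∀ q : Fin r → ℚ, (∑ i, q i • f i) ∈ U' → q = 0)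
    (d : Fin r → ℤ) (hd : ∀ i, d i ≠ 0) :
    Nonempty ((SQ (U'.restrictScalars ℤ ⊔ span ℤ (Set.range f))
        (U'.restrictScalars ℤ ⊔ span ℤ (Set.range fun i => d i • f i)))
      ≃+ ((Fin r → ℤ) ⧸ (Submodule.pi Set.univ fun i => Ideal.span {d i}))) := by
  set A := U'.restrictScalars ℤ ⊔ span ℤ (Set.range f) with hA
  set Bm := U'.restrictScalars ℤ ⊔ span ℤ (Set.range fun i => d i • f i) with hBm
  have hmem : ∀ c : Fin r → ℤ, (∑ i, c i • f i) ∈ A := fun c =>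
    Submodule.mem_sup_right (sum_mem fun i _ => zsmul_mem (Submodule.subset_span (Set.mem_range_self i)) _)
  let T : (Fin r → ℤ) →ₗ[ℤ] A :=
    { toFun := fun c => ⟨∑ i, c i • f i, hmem c⟩
      map_add' := by
        intro c c'
        apply Subtype.ext
        simp only [Submodule.coe_add]
        rw [← Finset.sum_add_distrib]
        exact Finset.sum_congr rfl fun i _ => add_zsmul (f i) (c i) (c' i)
      map_smul' := by
        intro z c
        apply Subtype.ext
        simp only [SetLike.val_smul, RingHom.id_apply]
        rw [Finset.smul_sum]
        exact Finset.sum_congr rfl fun i _ => mul_zsmul (f i) z (c i) }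
  let φ : (Fin r → ℤ) →ₗ[ℤ] SQ A Bm := (Bm.comap A.subtype).mkQ.comp T
  have hTval : ∀ c : Fin r → ℤ, ((T c : A) : V) = ∑ i, c i • f i := fun c => rfl
  have hφmk : ∀ c : Fin r → ℤ, φ c = Submodule.Quotient.mk (T c) := fun c => rfl
  have hsurj : Function.Surjective φ := by
    intro x
    obtain ⟨⟨v, hv⟩, rfl⟩ := Submodule.Quotient.mk_surjective _ x
    obtain ⟨u, hu, z, hz, hsum⟩ := Submodule.mem_sup.mp hv
    obtain ⟨c, rfl⟩ := (mem_span_range_iff_exists_fun ℤ).mp hz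
    refine ⟨c, ?_⟩
    rw [hφmk, Submodule.Quotient.eq]
    have hval : ((T c - ⟨v, hv⟩ : A) : V) = -u := by
      have hrfl : ((T c - ⟨v, hv⟩ : A) : V) = (∑ i, c i • f i) - v := rfl
      rw [hrfl, ← hsum]
      abel
    refine Submodule.mem_comap.mpr ?_
    rw [Submodule.subtype_apply, hval]
    exact neg_mem (Submodule.mem_sup_left hu)
  have hker : LinearMap.ker φ = Submodule.pi Set.univ fun i => Ideal.span {d i} := by
    ext c
    simp only [LinearMap.mem_ker, Submodule.mem_pi, Set.mem_univ, forall_true_left,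
      Ideal.mem_span_singleton']
    constructor
    · intro h
      have hBm' : (∑ i, c i • f i) ∈ Bm := by
        rw [hφmk, Submodule.Quotient.mk_eq_zero] at h
        simpa only [Submodule.mem_comap, Submodule.subtype_apply, hTval] using h
      obtain ⟨u, hu, z, hz, hsum⟩ := Submodule.mem_sup.mp hBm'
      obtain ⟨b, rfl⟩ := (mem_span_range_iff_exists_fun ℤ).mp hz
      have key : (∑ i, ((c i - b i * d i : ℤ) : ℚ) • f i) ∈ U' := by
        have heq : ∑ i, ((c i - b i * d i : ℤ) : ℚ) • f i
            = (∑ i, c i • f i) - ∑ i, b i • (d i • f i) := by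
          rw [← Finset.sum_sub_distrib]
          refine Finset.sum_congr rfl fun i _ => ?_
          rw [Int.cast_smul_eq_zsmul, sub_zsmul, smul_smul, sub_eq_add_neg]
        rw [heq, ← hsum]
        have : u + (∑ i, b i • d i • f i) - (∑ i, b i • d i • f i) = u := by abel
        rw [this]
        exact hu
      have hq := hf _ key
      intro i
      have : ((c i - b i * d i : ℤ) : ℚ) = 0 := congrFun hq i
      have h0 : c i - b i * d i = 0 := by exact_mod_cast this
      exact ⟨b i, by linarith⟩
    · intro h
      choose b hb using h
      rw [hφmk, Submodule.Quotient.mk_eq_zero]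
      refine Submodule.mem_comap.mpr ?_
      rw [Submodule.subtype_apply, hTval]
      refine Submodule.mem_sup_right (sum_mem fun i _ => ?_)
      have : c i • f i = b i • (d i • f i) := by
        rw [smul_smul, hb i]
      rw [this]
      exact zsmul_mem (Submodule.subset_span (Set.mem_range_self i)) _
  have e1 : ((Fin r → ℤ) ⧸ (Submodule.pi Set.univ fun i => Ideal.span {d i})) ≃ₗ[ℤ] SQ A Bm :=
    hker ▸ φ.quotKerEquivOfSurjective hsurj
  exact ⟨e1.symm.toAddEquiv⟩

lemma exists_dual_family [FiniteDimensional ℚ V] (B : LinearMap.BilinForm ℚ V)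
    (hnd : B.Nondegenerate) {r : ℕ} (U : Submodule ℚ V) (e : Fin r → V)
    (he : ∀ q : Fin r → ℚ, (∑ i, q i • e i) ∈ U → q = 0) :
    ∃ μ : Fin r → V, (∀ i, ∀ u ∈ U, B (μ i) u = 0) ∧
      (∀ i j, B (μ i) (e j) = if i = j then 1 else 0) := by
  have hind : LinearIndependent ℚ (fun i => U.mkQ (e i)) := by
    rw [Fintype.linearIndependent_iff]
    intro g hg i
    have h0 : U.mkQ (∑ j, g j • e j) = 0 := by
      rw [map_sum]
      simpa only [map_smul] using hg
    have hmem : (∑ j, g j • e j) ∈ U := by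
      rwa [Submodule.mkQ_apply, Submodule.Quotient.mk_eq_zero] at h0
    simpa using congrFun (he g hmem) i
  let bs := Module.Basis.span hind
  have hext := fun i => LinearMap.exists_extend (bs.coord i)
  choose φ hφ using hext
  refine ⟨fun i => (B.toDual hnd).symm ((φ i).comp U.mkQ), ?_, ?_⟩
  · intro i u hu
    rw [LinearMap.BilinForm.apply_toDual_symm_apply]
    simp only [LinearMap.comp_apply, Submodule.mkQ_apply]
    rw [(Submodule.Quotient.mk_eq_zero U).mpr hu, map_zero]
  · intro i j
    rw [LinearMap.BilinForm.apply_toDual_symm_apply]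
    simp only [LinearMap.comp_apply, Submodule.mkQ_apply]
    have hmem : U.mkQ (e j) ∈ span ℚ (Set.range fun i => U.mkQ (e i)) :=
      Submodule.subset_span (Set.mem_range_self j)
    have h1 : (φ i) (U.mkQ (e j)) = bs.coord i ⟨U.mkQ (e j), hmem⟩ := by
      have := LinearMap.congr_fun (hφ i) ⟨U.mkQ (e j), hmem⟩
      exact this
    have h2 : (⟨U.mkQ (e j), hmem⟩ : span ℚ (Set.range fun i => U.mkQ (e i))) = bs j :=
      (Module.Basis.span_apply hind j).symm
    have h4 : (φ i) (U.mkQ (e j)) = if i = j then 1 else 0 := by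
      rw [h1, h2, Module.Basis.coord_apply, Module.Basis.repr_self, Finsupp.single_apply]
      simp [eq_comm]
    simpa using h4

end Helpers

theorem stmt12 {V : Type} [AddCommGroup V] [Module ℚ V] [FiniteDimensional ℚ V]
    (B : LinearMap.BilinForm ℚ V) (hsymm : ∀ x y, B x y = B y x)
    (hnd : B.Nondegenerate)
    (M N : Submodule ℤ V) (hM : IsLV M) (hN : IsLV N)
    (hle : N ≤ M) (hfin : Finite (SQ M N)) :
    Nonempty (SQ M N ≃+ SQ (B.dualSubmodule N) (B.dualSubmodule M)) := by
  classical
  obtain ⟨U, Λ, hΛfg, hMeq⟩ := hM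
  have hUM : U.restrictScalars ℤ ≤ M := hMeq ▸ le_sup_left
  have hk0 : 0 < Nat.card (SQ M N) := Nat.card_pos
  have hkN : ∀ x ∈ M, (Nat.card (SQ M N)) • x ∈ N := by
    intro x hx
    have h0 : ((Nat.card (SQ M N) : ℤ)) •
        (Submodule.Quotient.mk (p := N.comap M.subtype) ⟨x, hx⟩) = 0 := by
      rw [natCast_zsmul]
      exact card_nsmul_eq_zero'
    rw [← Submodule.Quotient.mk_smul] at h0
    have hmem := (Submodule.Quotient.mk_eq_zero _).mp h0
    rw [Submodule.mem_comap] at hmem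
    have h1 : ((Nat.card (SQ M N) : ℤ)) • x ∈ N := hmem
    rwa [natCast_zsmul] at h1
  have hUN : U.restrictScalars ℤ ≤ N := by
    intro u hu
    have hu' : ((Nat.card (SQ M N) : ℚ))⁻¹ • u ∈ U := U.smul_mem _ hu
    have h2 := hkN _ (hUM hu')
    rwa [← Nat.cast_smul_eq_nsmul ℚ, smul_smul,
      mul_inv_cancel₀ (Nat.cast_ne_zero.mpr hk0.ne'), one_smul] at h2
  -- projection onto a complement of U
  obtain ⟨C, hC⟩ := Submodule.exists_isCompl U
  set pr : V →ₗ[ℚ] V := C.subtype.comp (C.projectionOnto U hC.symm) with hpr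
  have hprC : ∀ x, pr x ∈ C := fun x => (C.projectionOnto U hC.symm x).2
  have hprCid : ∀ x ∈ C, pr x = x := by
    intro x hx
    have h := Submodule.projectionOnto_apply_left hC.symm (⟨x, hx⟩ : C)
    show ((C.projectionOnto U hC.symm) x : V) = x
    rw [show (C.projectionOnto U hC.symm) x
        = (C.projectionOnto U hC.symm) ((⟨x, hx⟩ : C) : V) from rfl, h]
  have hsubU : ∀ x, x - pr x ∈ U := by
    intro x
    have h := Submodule.projection_add_projection_eq_self hC x
    have hpx : pr x = ((C.projectionOnto U hC.symm x : C) : V) := rfl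
    have h2 : x - pr x = ((U.projectionOnto C hC x : U) : V) := by
      rw [hpx]
      exact sub_eq_iff_eq_add.mpr h.symm
    rw [h2]
    exact (U.projectionOnto C hC x).2
  have hprU : ∀ u ∈ U, pr u = 0 := by
    intro u hu
    show ((C.projectionOnto U hC.symm) u : V) = 0
    rw [Submodule.projectionOnto_apply_of_mem_right hC.symm hu]
    rfl
  set prZ : V →ₗ[ℤ] V := pr.restrictScalars ℤ with hprZ
  set Λ' : Submodule ℤ V := Submodule.map prZ M with hΛ'def
  set N' : Submodule ℤ V := Submodule.map prZ N with hN'def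
  have hΛ'M : Λ' ≤ M := by
    rintro _ ⟨x, hx, rfl⟩
    have : prZ x = x - (x - pr x) := by
      show pr x = x - (x - pr x)
      abel
    rw [this]
    exact M.sub_mem hx (hUM (hsubU x))
  have hN'N : N' ≤ N := by
    rintro _ ⟨x, hx, rfl⟩
    have : prZ x = x - (x - pr x) := by
      show pr x = x - (x - pr x)
      abel
    rw [this]
    exact N.sub_mem hx (hUN (hsubU x))
  have hMsup : M = U.restrictScalars ℤ ⊔ Λ' := by
    apply le_antisymm
    · intro x hx
      have : x = (x - pr x) + pr x := by abel
      rw [this]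
      exact Submodule.add_mem _ (Submodule.mem_sup_left (hsubU x))
        (Submodule.mem_sup_right ⟨x, hx, rfl⟩)
    · exact sup_le hUM hΛ'M
  have hNsup : N = U.restrictScalars ℤ ⊔ N' := by
    apply le_antisymm
    · intro x hx
      have : x = (x - pr x) + pr x := by abel
      rw [this]
      exact Submodule.add_mem _ (Submodule.mem_sup_left (hsubU x))
        (Submodule.mem_sup_right ⟨x, hx, rfl⟩)
    · exact sup_le hUN hN'N
  have hΛ'C : Λ' ≤ C.restrictScalars ℤ := by
    rintro _ ⟨x, hx, rfl⟩
    exact hprC x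
  have hN'Λ' : N' ≤ Λ' := Submodule.map_mono hle
  have hΛ'fg : Λ'.FG := by
    have h2 : Submodule.map prZ (U.restrictScalars ℤ) = ⊥ := by
      rw [Submodule.eq_bot_iff]
      rintro _ ⟨u, hu, rfl⟩
      exact hprU u hu
    have h1 : Λ' = Submodule.map prZ Λ := by
      rw [hΛ'def, hMeq, Submodule.map_sup, h2, bot_sup_eq]
    rw [h1]
    exact hΛfg.map _
  haveI : Module.Finite ℤ ↥Λ' := Module.Finite.iff_fg.mpr hΛ'fg
  haveI hnz : NoZeroSMulDivisors ℤ V := by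
    constructor
    intro c x h
    by_cases hc : c = 0
    · exact Or.inl hc
    · right
      have h3 : ((c : ℚ)) • x = 0 := by rw [Int.cast_smul_eq_zsmul]; exact h
      exact (smul_eq_zero.mp h3).resolve_left (Int.cast_ne_zero.mpr hc)
  haveI : Module.Free ℤ ↥Λ' := Module.free_of_finite_type_torsion_free'
  set b0 := Module.Free.chooseBasis ℤ ↥Λ' with hb0
  set NN : Submodule ℤ ↥Λ' := N'.comap Λ'.subtype with hNN0
  obtain ⟨n, o, hno, bO, bN, a, ha⟩ :=
    Submodule.exists_smith_normal_form_of_le b0 NN ⊤ le_top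
  set b' : Module.Basis (Fin o) ℤ ↥Λ' := bO.map (Submodule.topEquiv) with hb'def
  have hb' : ∀ j, b' j = ((bO j : ↥(⊤ : Submodule ℤ ↥Λ')) : ↥Λ') := fun j => by
    rw [hb'def, Module.Basis.map_apply]
    rfl
  -- rank equality
  have hon : o ≤ n := by
    by_contra hlt
    push_neg at hlt
    set i0 : Fin o := ⟨n, hlt⟩ with hi0
    have hxM : ((b' i0 : ↥Λ') : V) ∈ M := hΛ'M (b' i0).2
    have h1 : (Nat.card (SQ M N)) • ((b' i0 : ↥Λ') : V) ∈ N := hkN _ hxM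
    set y : ↥Λ' := (Nat.card (SQ M N)) • b' i0 with hy
    have hyV : (y : V) = (Nat.card (SQ M N)) • ((b' i0 : ↥Λ') : V) := rfl
    have h3 : (y : V) ∈ N' := by
      refine Submodule.mem_map.mpr ⟨(y : V), by rw [hyV]; exact h1, ?_⟩
      exact hprCid _ (hΛ'C y.2)
    have h3' : y ∈ NN := h3
    have hrep := bN.sum_repr ⟨y, h3'⟩
    have hcoe : y = ∑ i, (bN.repr ⟨y, h3'⟩) i • ((bN i : ↥Λ')) := by
      have h5 := congrArg (NN.subtype) hrep
      rw [map_sum] at h5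
      simp only [map_smul, Submodule.subtype_apply] at h5
      exact h5.symm
    have hfinal := congrArg (fun w => (b'.repr w) i0) hcoe
    have hL : (b'.repr y) i0 = (Nat.card (SQ M N) : ℤ) := by
      rw [hy, map_nsmul, Module.Basis.repr_self]
      simp [Finsupp.single_apply]
    have hR : (b'.repr (∑ i, (bN.repr ⟨y, h3'⟩) i • ((bN i : ↥Λ')))) i0 = 0 := by
      rw [map_sum, Finsupp.finset_sum_apply]
      apply Finset.sum_eq_zero
      intro i _
      rw [map_smul]
      rw [show ((bN i : ↥Λ')) = a i • (b' (Fin.castLE hno i)) by rw [hb']; exact_mod_cast ha i]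
      rw [map_smul, Module.Basis.repr_self]
      have hne : Fin.castLE hno i ≠ i0 := by
        intro hcontr
        have : (i : ℕ) = n := congrArg Fin.val hcontr
        omega
      simp [Finsupp.single_apply, hne]
    rw [hL, hR] at hfinal
    exact absurd hfinal (by exact_mod_cast hk0.ne')
  have heq : n = o := le_antisymm hno hon
  subst heq
  have hcast : ∀ i : Fin n, Fin.castLE hno i = i := fun i => Fin.ext rfl
  have ha' : ∀ i, ((bN i : ↥Λ')) = a i • b' i := by
    intro i
    rw [hb']
    exact_mod_cast ha i
  set e : Fin n → V := fun i => ((b' i : ↥Λ') : V) with he_def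
  have hd : ∀ i, a i ≠ 0 := by
    intro i h0
    apply bN.ne_zero i
    have h1 : ((bN i : ↥Λ')) = 0 := by rw [ha' i, h0, zero_smul]
    exact ZeroMemClass.coe_eq_zero.mp h1
  have hΛ'span : Λ' = span ℤ (Set.range e) := by
    have h2 : Λ' = Submodule.map Λ'.subtype (span ℤ (Set.range b')) := by
      rw [b'.span_eq, Submodule.map_subtype_top]
    rw [h2, Submodule.map_span, ← Set.range_comp]
    rfl
  have hNN : NN = span ℤ (Set.range fun i => ((bN i : ↥Λ'))) := by
    have h3 : Submodule.map NN.subtype (span ℤ (Set.range bN))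
        = span ℤ (Set.range fun i => ((bN i : ↥Λ'))) := by
      rw [Submodule.map_span, ← Set.range_comp]
      rfl
    exact (Submodule.map_subtype_top NN).symm.trans
      ((congrArg (Submodule.map NN.subtype) bN.span_eq.symm).trans h3)
  have hbval : ∀ i, ((bN i : ↥Λ') : V) = a i • e i := by
    intro i
    have h1 : ((bN i : ↥Λ') : V) = ((a i • b' i : ↥Λ') : V) := congrArg Subtype.val (ha' i)
    rw [h1]
    exact Submodule.coe_smul (a i) (b' i)
  have hN'span : N' = span ℤ (Set.range fun i => a i • e i) := by
    have h0 : N' = Submodule.map Λ'.subtype NN := by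
      rw [hNN0, Submodule.map_comap_subtype, inf_eq_right.mpr hN'Λ']
    have h3 : (⇑Λ'.subtype ∘ fun i => ((bN i : ↥Λ'))) = fun i => a i • e i := by
      funext i
      exact hbval i
    rw [h0, hNN, Submodule.map_span, ← Set.range_comp, h3]
  have heind : LinearIndependent ℚ e := by
    have h1 : LinearIndependent ℤ e :=
      b'.linearIndependent.map' Λ'.subtype (Submodule.ker_subtype _)
    exact (LinearIndependent.iff_fractionRing ℤ ℚ).mp h1
  have he : ∀ q : Fin n → ℚ, (∑ i, q i • e i) ∈ U → q = 0 := by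
    intro q hq
    have hCm : (∑ i, q i • e i) ∈ C := sum_mem fun i _ => C.smul_mem _ (hΛ'C (b' i).2)
    have h0 : (∑ i, q i • e i) = 0 :=
      (Submodule.disjoint_def.mp hC.disjoint) _ hq hCm
    funext i
    exact Fintype.linearIndependent_iff.mp heind q h0 i
  -- dual families
  obtain ⟨μ, hμU, hμe⟩ := exists_dual_family B hnd U e he
  set g : Fin n → V := fun i => ((a i : ℚ))⁻¹ • μ i with hg_def
  have hacast : ∀ i, ((a i : ℚ)) ≠ 0 := fun i => Int.cast_ne_zero.mpr (hd i)
  set W : Submodule ℚ V :=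
    (⨅ u : ↥U, LinearMap.ker (B.flip (u : V))) ⊓ (⨅ i, LinearMap.ker (B.flip (e i))) with hW_def
  have hW : ∀ v, v ∈ W ↔ (∀ u ∈ U, B v u = 0) ∧ ∀ i, B v (e i) = 0 := by
    intro v
    rw [hW_def]
    simp only [Submodule.mem_inf, Submodule.mem_iInf, LinearMap.mem_ker, LinearMap.flip_apply]
    constructor
    · rintro ⟨h1, h2⟩
      exact ⟨fun u hu => h1 ⟨u, hu⟩, h2⟩
    · rintro ⟨h1, h2⟩
      exact ⟨fun u => h1 u u.2, h2⟩
  have hW2 : ∀ v, v ∈ W ↔ (∀ u ∈ U, B v u = 0) ∧ ∀ i, B v (a i • e i) = 0 := by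
    intro v
    rw [hW v]
    refine and_congr_right' (forall_congr' fun i => ?_)
    rw [map_zsmul]
    constructor
    · intro h
      rw [h, smul_zero]
    · intro h
      rw [← Int.cast_smul_eq_zsmul ℚ] at h
      exact (smul_eq_zero.mp h).resolve_left (hacast i)
  have hBgu : ∀ i (x : V), B (g i) x = (a i : ℚ)⁻¹ * (B (μ i) x) := by
    intro i x
    rw [hg_def]
    simp only [map_smul, LinearMap.smul_apply, smul_eq_mul]
  have hgU : ∀ i, ∀ u ∈ U, B (g i) u = 0 := by
    intro i u hu
    rw [hBgu, hμU i u hu, mul_zero]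
  have hge : ∀ i j, B (g i) (a j • e j) = if i = j then 1 else 0 := by
    intro i j
    rw [hBgu, map_zsmul, hμe i j]
    by_cases h : i = j
    · subst h
      rw [if_pos rfl, zsmul_eq_mul, mul_one, inv_mul_cancel₀ (hacast i)]
    · simp [h]
  have hMe : M = U.restrictScalars ℤ ⊔ span ℤ (Set.range e) := by rw [hMsup, hΛ'span]
  have hNe : N = U.restrictScalars ℤ ⊔ span ℤ (Set.range fun i => a i • e i) := by
    rw [hNsup, hN'span]
  have hdM : B.dualSubmodule M = W.restrictScalars ℤ ⊔ span ℤ (Set.range μ) := by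
    rw [hMe]
    exact dual_eq B U W e μ hW hμU hμe
  have hdN : B.dualSubmodule N = W.restrictScalars ℤ ⊔ span ℤ (Set.range g) := by
    rw [hNe]
    exact dual_eq B U W (fun i => a i • e i) g hW2 hgU hge
  have hgd : (fun i => a i • g i) = μ := by
    funext i
    rw [hg_def]
    simp only []
    rw [← Int.cast_smul_eq_zsmul ℚ, smul_smul, mul_inv_cancel₀ (hacast i), one_smul]
  have hdM' : B.dualSubmodule M
      = W.restrictScalars ℤ ⊔ span ℤ (Set.range fun i => a i • g i) := by
    rw [hdM, hgd]
  have hgind : ∀ q : Fin n → ℚ, (∑ i, q i • g i) ∈ W → q = 0 := by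
    intro q hq
    funext j
    have h2 := ((hW _).mp hq).2 j
    rw [map_sum, LinearMap.sum_apply] at h2
    simp only [map_smul, LinearMap.smul_apply] at h2
    have hBg : ∀ i, B (g i) (e j) = (a i : ℚ)⁻¹ * (if i = j then 1 else 0) := by
      intro i
      rw [hBgu, hμe i j]
    rw [Finset.sum_eq_single j] at h2
    · rw [hBg j, if_pos rfl, mul_one, smul_eq_mul] at h2
      exact (mul_eq_zero.mp h2).resolve_right (inv_ne_zero (hacast j))
    · intro i _ hij
      rw [hBg i, if_neg hij, mul_zero, smul_zero]
    · intro hj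
      exact absurd (Finset.mem_univ j) hj
  obtain ⟨q1⟩ := quot_eq U e he a hd
  obtain ⟨q2⟩ := quot_eq W g hgind a hd
  rw [hdN, hdM', hMe, hNe]
  exact ⟨q1.trans q2.symm⟩
end
end

section
/- Let V be a finite-dimensional ℚ-vector space, F = 1 + D an automorphism of V, and (·,·) an F-invariant nondegenerate symmetric ℚ-valued pairing on V. Then (DV)^∨ = ker D; moreover, if Λ is an F-invariant full-rank lattice in V then (DΛ)^∨ = D⁻¹(Λ^∨). -/
open Submodule LinearMap

noncomputable section

theorem stmt13 {V : Type} [AddCommGroup V] [Module ℚ V] [FiniteDimensional ℚ V]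
    (B : LinearMap.BilinForm ℚ V) (hsymm : ∀ x y, B x y = B y x)
    (hnd : B.Nondegenerate)
    (F : V →ₗ[ℚ] V) (hFbij : Function.Bijective F)
    (hFinv : ∀ x y, B (F x) (F y) = B x y)
    (D : V →ₗ[ℚ] V) (hD : F = LinearMap.id + D) :
    (B.dualSubmodule ((LinearMap.range D).restrictScalars ℤ) : Submodule ℤ V) =
      (LinearMap.ker D).restrictScalars ℤ ∧
    ∀ Λ : Submodule ℤ V, Λ.FG → Submodule.span ℚ (Λ : Set V) = ⊤ →
      Λ.map (F.restrictScalars ℤ) = Λ →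
      (B.dualSubmodule (Λ.map (D.restrictScalars ℤ)) : Submodule ℤ V) =
        (B.dualSubmodule Λ).comap (D.restrictScalars ℤ) := by
  -- key identity: B x (D y) = - B (D x) (F y)
  have key : ∀ x y : V, B x (D y) = - B (D x) (F y) := by
    intro x y
    have h := hFinv x y
    rw [hD] at h ⊢
    simp only [LinearMap.add_apply, LinearMap.id_apply, map_add, LinearMap.add_apply] at h ⊢
    linarith
  constructor
  · ext x
    simp only [LinearMap.BilinForm.mem_dualSubmodule, Submodule.restrictScalars_mem,
      LinearMap.mem_ker, LinearMap.mem_range, forall_exists_index]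
    constructor
    · intro h
      -- first, B x (D y) = 0 for all y
      have hz : ∀ y : V, B x (D y) = 0 := by
        intro y
        by_contra hq
        set q := B x (D y) with hqdef
        have h2 : B x (D ((1 / (2 * q)) • y)) ∈ (1 : Submodule ℤ ℚ) :=
          h _ _ rfl
        rw [map_smul, map_smul] at h2
        have : (1 / (2 * q)) • q = 1/2 := by
          rw [smul_eq_mul, one_div, one_div, mul_inv, mul_assoc, inv_mul_cancel₀ hq, mul_one]
        rw [smul_eq_mul] at this
        rw [show (1 / (2 * q)) • (B x) (D y) = (1/2 : ℚ) from this] at h2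
        rw [Submodule.mem_one] at h2
        obtain ⟨n, hn⟩ := h2
        have : ((n : ℚ)) = 1/2 := hn
        have h1 : (2 : ℚ) * n = 1 := by linarith
        have : (2 : ℤ) * n = 1 := by exact_mod_cast h1
        omega
      -- then D x = 0 by nondegeneracy
      apply hnd.1
      intro n
      obtain ⟨m, hm⟩ := hFbij.2 n
      rw [← hm]
      have := key x m
      rw [hz m] at this
      linarith
    · intro hx y z hz
      have := key x z
      rw [hx, LinearMap.map_zero, LinearMap.zero_apply, neg_zero] at this
      rw [← hz, this]
      exact zero_mem _
  · intro Λ _ _ hΛ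
    ext x
    simp only [LinearMap.BilinForm.mem_dualSubmodule, Submodule.mem_comap,
      Submodule.mem_map, LinearMap.restrictScalars_apply, forall_exists_index, and_imp]
    constructor
    · intro h y hy
      -- B (D x) y : write y = F μ with μ ∈ Λ
      have : ∃ μ ∈ Λ, F μ = y := by
        rw [← hΛ] at hy
        obtain ⟨μ, hμ, hμ'⟩ := hy
        exact ⟨μ, hμ, hμ'⟩
      obtain ⟨μ, hμ, rfl⟩ := this
      have hk := key x μ
      have h2 := h _ μ hμ rfl
      have : B (D x) (F μ) = - B x (D μ) := by linarith
      rw [this]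
      exact neg_mem h2
    · intro h y μ hμ hμ'
      subst hμ'
      have hk := key x μ
      rw [hk]
      have hFμ : F μ ∈ Λ := by
        rw [← hΛ]; exact ⟨μ, hμ, rfl⟩
      exact neg_mem (h _ hFμ)
end
end

section
/- Let V be a finite-dimensional ℚ-vector space with a nondegenerate symmetric pairing decomposing V into orthogonal subspaces U ⊕ W, and let Λ ⊆ V be a full-rank lattice. Then the separation groups satisfy T_{U,W}(Λ) ≅ T_{U,W}(Λ^∨), where Λ^∨ is the dual lattice. -/
open Submodule LinearMap

noncomputable section

section Aux
variable {V : Type} [AddCommGroup V] [Module ℚ V]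


lemma exists_int_smul_mem (X : Submodule ℤ V) {v : V} (hv : v ∈ span ℚ (X : Set V)) :
    ∃ n : ℤ, n ≠ 0 ∧ n • v ∈ X := by
  induction hv using Submodule.span_induction with
  | mem x hx => exact ⟨1, one_ne_zero, by simpa using hx⟩
  | zero => exact ⟨1, one_ne_zero, by simp⟩
  | add x y _ _ hx hy =>
    obtain ⟨n, hn, hnx⟩ := hx
    obtain ⟨m, hm, hmy⟩ := hy
    refine ⟨n * m, mul_ne_zero hn hm, ?_⟩
    rw [smul_add]
    exact add_mem (by rw [mul_comm, mul_smul]; exact X.smul_mem m hnx)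
      (by rw [mul_smul]; exact X.smul_mem n hmy)
  | smul q x _ hx =>
    obtain ⟨n, hn, hnx⟩ := hx
    refine ⟨q.den * n, mul_ne_zero (by exact_mod_cast q.den_nz) hn, ?_⟩
    have key : ((q.den : ℤ) * n) • (q • x) = q.num • (n • x) := by
      rw [← Int.cast_smul_eq_zsmul ℚ, ← Int.cast_smul_eq_zsmul ℚ q.num,
        ← Int.cast_smul_eq_zsmul ℚ n, smul_smul, smul_smul]
      congr 1
      push_cast
      rw [mul_assoc, mul_comm (n : ℚ) q, ← mul_assoc, Rat.den_mul_eq_num]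
    rw [key]
    exact X.smul_mem _ hnx
variable {V : Type} [AddCommGroup V] [Module ℚ V]

lemma lattice_exists_basis (X : Submodule ℤ V) (hfg : X.FG) :
    ∃ (κ : Type) (_ : Fintype κ) (v : κ → V), LinearIndependent ℚ v ∧
      X = span ℤ (Set.range v) ∧ span ℚ (Set.range v) = span ℚ (X : Set V) := by
  have hfin : Module.Finite ℤ X := Module.Finite.iff_fg.mpr hfg
  have hfree : Module.Free ℤ X := by
    haveI : IsAddTorsionFree V := IsAddTorsionFree.of_module_rat V
    exact Module.free_of_finite_type_torsion_free'
  let b := Module.Free.chooseBasis ℤ X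
  have hX : X = span ℤ (Set.range fun i => (b i : V)) := by
    have : Set.range (fun i => (b i : V)) = X.subtype '' (Set.range b) := by
      ext x; simp
    rw [this, ← Submodule.map_span, b.span_eq, Submodule.map_top, range_subtype]
  refine ⟨_, inferInstance, fun i => (b i : V), ?_, hX, ?_⟩
  · rw [← LinearIndependent.iff_fractionRing ℤ ℚ]
    exact b.linearIndependent.map' X.subtype (ker_subtype X)
  · conv_rhs => rw [hX]
    rw [span_span_of_tower]

lemma span_inf (Λ : Submodule ℤ V) (hfull : span ℚ (Λ : Set V) = ⊤) (U₀ : Submodule ℚ V) :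
    span ℚ ((Λ ⊓ U₀.restrictScalars ℤ : Submodule ℤ V) : Set V) = U₀ := by
  apply le_antisymm
  · rw [Submodule.span_le]
    intro x hx
    exact hx.2
  · intro u hu
    have hu' : u ∈ span ℚ (Λ : Set V) := by rw [hfull]; trivial
    obtain ⟨n, hn, hnu⟩ := exists_int_smul_mem Λ hu'
    have hmem : n • u ∈ (Λ ⊓ U₀.restrictScalars ℤ : Submodule ℤ V) :=
      ⟨hnu, by
        show n • u ∈ U₀
        rw [← Int.cast_smul_eq_zsmul ℚ]
        exact U₀.smul_mem _ hu⟩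
    have : ((n : ℚ)⁻¹ * (n : ℚ)) • u ∈ span ℚ ((Λ ⊓ U₀.restrictScalars ℤ : Submodule ℤ V) : Set V) := by
      rw [mul_smul]
      apply Submodule.smul_mem
      rw [Int.cast_smul_eq_zsmul ℚ]
      exact Submodule.subset_span hmem
    rwa [inv_mul_cancel₀ (by exact_mod_cast hn), one_smul] at this

lemma span_map_proj (f : V →ₗ[ℚ] V) (X : Submodule ℤ V) :
    span ℚ ((map (f.restrictScalars ℤ) X : Submodule ℤ V) : Set V)
      = map f (span ℚ (X : Set V)) := by
  have : ((map (f.restrictScalars ℤ) X : Submodule ℤ V) : Set V) = f '' (X : Set V) := rfl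
  rw [this, ← Submodule.map_span]


lemma proj_quot (U W : Submodule ℚ V) (hcompl : IsCompl U W) (X : Submodule ℤ V) :
    Nonempty (SQ X ((X ⊓ U.restrictScalars ℤ) ⊔ (X ⊓ W.restrictScalars ℤ)) ≃+
      SQ (map ((U.subtype.comp (U.projectionOnto W hcompl)).restrictScalars ℤ) X)
        (X ⊓ U.restrictScalars ℤ)) := by
  set π : V →ₗ[ℚ] V := U.subtype.comp (U.projectionOnto W hcompl) with hπ
  have hπU : ∀ u ∈ U, π u = u := fun u hu => by
    rw [hπ, LinearMap.comp_apply, Submodule.projectionOnto_apply_of_mem_left hcompl hu]; rfl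
  have hπmem : ∀ x, π x ∈ U := fun x => (U.projectionOnto W hcompl x).2
  have hker : ker π = W := by
    rw [hπ, LinearMap.ker_comp, ker_subtype, Submodule.comap_bot,
      Submodule.ker_projectionOnto]
  have hsub : ∀ x, x - π x ∈ W := fun x => by
    rw [← hker, LinearMap.mem_ker, map_sub, hπU _ (hπmem x), sub_self]
  set πz := π.restrictScalars ℤ with hπz
  set M' := map πz X with hM'
  set M : Submodule ℤ V := X ⊓ U.restrictScalars ℤ with hM
  have hψmem : ∀ x ∈ X, πz x ∈ M' := fun x hx => Submodule.mem_map_of_mem hx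
  set ψ : X →ₗ[ℤ] M' := πz.restrict hψmem with hψ
  set φ : X →ₗ[ℤ] SQ M' M := (M.comap M'.subtype).mkQ.comp ψ with hφ
  have hsurj : Function.Surjective φ := by
    rintro q
    obtain ⟨y, rfl⟩ := (M.comap M'.subtype).mkQ_surjective q
    obtain ⟨x, hx, hxy⟩ := y.2
    exact ⟨⟨x, hx⟩, by
      simp only [hφ, LinearMap.comp_apply]
      congr 1
      exact Subtype.ext (by simpa [hψ] using hxy)⟩
  have hkerφ : ker φ =
      ((X ⊓ U.restrictScalars ℤ) ⊔ (X ⊓ W.restrictScalars ℤ)).comap X.subtype := by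
    ext ⟨x, hx⟩
    simp only [hφ, LinearMap.mem_ker, LinearMap.comp_apply, Submodule.mkQ_apply,
      Submodule.Quotient.mk_eq_zero, Submodule.mem_comap]
    constructor
    · intro h
      have hπx : π x ∈ X := by
        have := h.1
        exact (by simpa [hψ] using this : πz x ∈ X)
      have hx1 : π x ∈ X ⊓ U.restrictScalars ℤ := ⟨hπx, hπmem x⟩
      have hx2 : x - π x ∈ X ⊓ W.restrictScalars ℤ := ⟨sub_mem hx hπx, hsub x⟩
      have : π x + (x - π x) ∈ (X ⊓ U.restrictScalars ℤ) ⊔ (X ⊓ W.restrictScalars ℤ) :=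
        Submodule.add_mem_sup hx1 hx2
      simpa using this
    · intro h
      obtain ⟨u, hu, w, hw, rfl⟩ := Submodule.mem_sup.mp h
      have : π (u + w) = u := by
        rw [map_add, hπU u hu.2, show π w = 0 from by rw [← LinearMap.mem_ker, hker]; exact hw.2,
          add_zero]
      show (⟨πz (u + w), _⟩ : M') ∈ M.comap M'.subtype
      simp only [Submodule.mem_comap]
      show πz (u + w) ∈ M
      have hπuw : πz (u + w) = u := this
      rw [hπuw]
      exact ⟨hu.1, hu.2⟩
  exact ⟨((Submodule.quotEquivOfEq _ _ hkerφ.symm).trans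
    (φ.quotKerEquivOfSurjective hsurj)).toAddEquiv⟩

lemma quot_zmod {o : ℕ} (v : Fin o → V) (hv : LinearIndependent ℚ v) (a : Fin o → ℤ)
    (M' M : Submodule ℤ V) (hM' : M' = span ℤ (Set.range v))
    (hM : M = span ℤ (Set.range fun i => a i • v i)) :
    Nonempty (SQ M' M ≃+ ∀ i, ZMod (a i).natAbs) := by
  subst hM' hM
  have hvz : LinearIndependent ℤ v := (LinearIndependent.iff_fractionRing ℤ ℚ).mpr hv
  set b : Module.Basis (Fin o) ℤ (span ℤ (Set.range v)) := Module.Basis.span hvz with hb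
  set ψ : (span ℤ (Set.range v)) →ₗ[ℤ] (∀ i, ZMod (a i).natAbs) :=
    (LinearMap.pi fun i => ((Int.castAddHom (ZMod (a i).natAbs)).toIntLinearMap).comp
      (LinearMap.proj i)).comp (b.equivFun : _ →ₗ[ℤ] _) with hψ
  have hψval : ∀ x i, ψ x i = ((b.repr x i : ℤ) : ZMod (a i).natAbs) := by
    intro x i
    simp [hψ, Module.Basis.equivFun_apply]
  have hψval' : ∀ x i, ψ x i = ((b.equivFun x i : ℤ) : ZMod (a i).natAbs) := by
    intro x i
    simp [hψ]
  have hxsum : ∀ x : span ℤ (Set.range v), (x : V) = ∑ i, b.repr x i • v i := by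
    intro x
    have := congrArg (Submodule.subtype _) (b.sum_repr x)
    simp only [map_sum, map_smul] at this
    simp only [Submodule.coe_subtype] at this
    rw [← this]
    congr 1
    ext i
    rw [hb, Module.Basis.span_apply]
  have hsurj : Function.Surjective ψ := by
    intro z
    have : ∀ i, ∃ n : ℤ, (n : ZMod (a i).natAbs) = z i := fun i => ZMod.intCast_surjective (z i)
    choose q hq using this
    refine ⟨b.equivFun.symm q, ?_⟩
    ext i
    rw [hψval', b.equivFun.apply_symm_apply]
    exact hq i
  have hker : ker ψ = (span ℤ (Set.range fun i => a i • v i)).comap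
      (span ℤ (Set.range v)).subtype := by
    ext x
    simp only [LinearMap.mem_ker, Submodule.mem_comap, Submodule.coe_subtype]
    constructor
    · intro h
      have hdvd : ∀ i, a i ∣ b.repr x i := by
        intro i
        have := congrFun h i
        rw [hψval, Pi.zero_apply] at this
        have h2 : ((a i).natAbs : ℤ) ∣ b.repr x i := by
          rwa [ZMod.intCast_zmod_eq_zero_iff_dvd] at this
        exact Int.natAbs_dvd.mp h2
      rw [mem_span_range_iff_exists_fun]
      refine ⟨fun i => b.repr x i / a i, ?_⟩
      rw [hxsum x]
      congr 1
      ext i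
      rw [smul_smul, Int.ediv_mul_cancel (hdvd i)]
    · intro h
      rw [mem_span_range_iff_exists_fun] at h
      obtain ⟨c, hc⟩ := h
      have hc2 : ∑ i, (c i * a i) • v i = ∑ i, b.repr x i • v i := by
        rw [← hxsum x, ← hc]
        congr 1
        ext i
        rw [smul_smul]
      have heq : ∀ i, c i * a i = b.repr x i := by
        have h0 : ∑ i, (c i * a i - b.repr x i) • v i = 0 := by
          simp only [sub_smul, Finset.sum_sub_distrib, hc2, sub_self]
        intro i
        have := Fintype.linearIndependent_iff.mp hvz _ h0 i
        linarith [this]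
      ext i
      rw [hψval, Pi.zero_apply, ZMod.intCast_zmod_eq_zero_iff_dvd, Int.natAbs_dvd, ← heq i]
      exact Dvd.intro_left _ rfl
  exact ⟨((Submodule.quotEquivOfEq _ _ hker.symm).trans
    (ψ.quotKerEquivOfSurjective hsurj)).toAddEquiv⟩

lemma dual_parts [FiniteDimensional ℚ V] (B : LinearMap.BilinForm ℚ V) (hnd : B.Nondegenerate)
    (hsymm : ∀ x y, B x y = B y x)
    (U W : Submodule ℚ V) (hcompl : IsCompl U W)
    (horth : ∀ u ∈ U, ∀ w ∈ W, B u w = 0)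
    {ι κ : Type} [Fintype ι] [Fintype κ] [DecidableEq ι] [DecidableEq κ]
    (c : Module.Basis (ι ⊕ κ) ℚ V) (hcU : ∀ i, c (.inl i) ∈ U) (hcW : ∀ k, c (.inr k) ∈ W) :
    (∀ i, B.dualBasis hnd c (.inl i) ∈ U) ∧ (∀ k, B.dualBasis hnd c (.inr k) ∈ W) := by
  classical
  set π : V →ₗ[ℚ] V := U.subtype.comp (U.projectionOnto W hcompl) with hπ
  have hπU : ∀ u ∈ U, π u = u := fun u hu => by
    rw [hπ, LinearMap.comp_apply, Submodule.projectionOnto_apply_of_mem_left hcompl hu]; rfl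
  have hπmem : ∀ x, π x ∈ U := fun x => (U.projectionOnto W hcompl x).2
  have hker : ker π = W := by
    rw [hπ, LinearMap.ker_comp, ker_subtype, Submodule.comap_bot,
      Submodule.ker_projectionOnto]
  have hsub : ∀ x, x - π x ∈ W := fun x => by
    rw [← hker, LinearMap.mem_ker, map_sub, hπU _ (hπmem x), sub_self]
  have hzero : ∀ x : V, (∀ j, B x (c j) = 0) → x = 0 := by
    intro x hx
    refine hnd.1 x fun y => ?_
    have : B x = 0 := Module.Basis.ext c (by simpa using hx)
    rw [this]; rfl
  constructor
  · intro i₀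
    have hwW : B.dualBasis hnd c (.inl i₀) - π (B.dualBasis hnd c (.inl i₀)) ∈ W := hsub _
    have hw0 : B.dualBasis hnd c (.inl i₀) - π (B.dualBasis hnd c (.inl i₀)) = 0 := by
      refine hzero _ fun j => ?_
      cases j with
      | inl i => rw [hsymm]; exact horth _ (hcU i) _ hwW
      | inr k =>
        rw [map_sub, LinearMap.sub_apply]
        have h1 : B (B.dualBasis hnd c (.inl i₀)) (c (.inr k)) = 0 := by
          rw [B.apply_dualBasis_left hnd c]; simp
        have h2 : B (π (B.dualBasis hnd c (.inl i₀))) (c (.inr k)) = 0 :=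
          horth _ (hπmem _) _ (hcW k)
        rw [h1, h2, sub_zero]
    have hx : B.dualBasis hnd c (.inl i₀) = π (B.dualBasis hnd c (.inl i₀)) :=
      sub_eq_zero.mp hw0
    rw [hx]; exact hπmem _
  · intro k₀
    have hpz : π (B.dualBasis hnd c (.inr k₀)) = 0 := by
      refine hzero _ fun j => ?_
      cases j with
      | inr k => exact horth _ (hπmem _) _ (hcW k)
      | inl i =>
        have h1 : B (B.dualBasis hnd c (.inr k₀)) (c (.inl i)) = 0 := by
          rw [B.apply_dualBasis_left hnd c]; simp
        have h2 : B (B.dualBasis hnd c (.inr k₀) - π (B.dualBasis hnd c (.inr k₀)))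
            (c (.inl i)) = 0 := by
          rw [hsymm]; exact horth _ (hcU i) _ (hsub _)
        rw [map_sub, LinearMap.sub_apply, h1, zero_sub, neg_eq_zero] at h2
        exact h2
    have := hsub (B.dualBasis hnd c (.inr k₀))
    rwa [hpz, sub_zero] at this

lemma Dspan [FiniteDimensional ℚ V] (B : LinearMap.BilinForm ℚ V) (hnd : B.Nondegenerate)
    (hsymm : ∀ x y, B x y = B y x)
    (U W : Submodule ℚ V) (hcompl : IsCompl U W)
    (horth : ∀ u ∈ U, ∀ w ∈ W, B u w = 0)
    {ι κ : Type} [Fintype ι] [Fintype κ] [DecidableEq ι] [DecidableEq κ]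
    (c : Module.Basis (ι ⊕ κ) ℚ V) (hcU : ∀ i, c (.inl i) ∈ U) (hcW : ∀ k, c (.inr k) ∈ W)
    (a : ι → ℤ) (ha : ∀ i, a i ≠ 0) :
    B.dualSubmodule (span ℤ (Set.range fun i => (a i : ℚ) • c (.inl i)))
        ⊓ U.restrictScalars ℤ
      = span ℤ (Set.range fun i => ((a i : ℚ))⁻¹ • B.dualBasis hnd c (.inl i)) := by
  classical
  apply le_antisymm
  · rintro x ⟨hx, hxU⟩
    have hxU : x ∈ U := hxU
    have hns : ∀ i, ∃ m : ℤ, (m : ℚ) = (a i : ℚ) * B x (c (.inl i)) := by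
      intro i
      obtain ⟨m, hm⟩ := Submodule.mem_one.mp (hx _ (Submodule.subset_span ⟨i, rfl⟩))
      rw [map_smul, smul_eq_mul] at hm
      exact ⟨m, by exact_mod_cast hm⟩
    choose n hn using hns
    have hzeroW : ∀ k, B x (c (.inr k)) = 0 := fun k => horth _ hxU _ (hcW k)
    have hexp : x = ∑ i, (B x (c (.inl i))) • (B.dualBasis hnd c) (.inl i) := by
      have h := (B.dualBasis hnd c).sum_repr x
      rw [Fintype.sum_sum_type] at h
      simp only [B.dualBasis_repr_apply, hzeroW, zero_smul, Finset.sum_const_zero,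
        add_zero] at h
      exact h.symm
    rw [hexp]
    apply sum_mem
    intro i _
    have hBi : B x (c (.inl i)) = (a i : ℚ)⁻¹ * (n i : ℚ) := by
      rw [hn i, ← mul_assoc, inv_mul_cancel₀ (by exact_mod_cast ha i), one_mul]
    rw [hBi, mul_comm, mul_smul, Int.cast_smul_eq_zsmul ℚ]
    exact Submodule.smul_mem _ _ (Submodule.subset_span ⟨i, rfl⟩)
  · rw [Submodule.span_le]
    rintro _ ⟨i, rfl⟩
    refine ⟨?_, ?_⟩
    · intro y hy
      have hle : span ℤ (Set.range fun j => (a j : ℚ) • c (.inl j)) ≤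
          Submodule.comap ((B ((a i : ℚ)⁻¹ • B.dualBasis hnd c (.inl i))).restrictScalars ℤ)
            (1 : Submodule ℤ ℚ) := by
        rw [Submodule.span_le]
        rintro _ ⟨j, rfl⟩
        show B ((a i : ℚ)⁻¹ • B.dualBasis hnd c (.inl i)) ((a j : ℚ) • c (.inl j))
          ∈ (1 : Submodule ℤ ℚ)
        by_cases h : j = i
        · subst h
          refine Submodule.mem_one.mpr ⟨1, ?_⟩
          simp only [map_smul, LinearMap.smul_apply, smul_eq_mul,
            B.apply_dualBasis_left hnd c, if_pos rfl]
          rw [if_pos trivial, mul_one, mul_inv_cancel₀ (show (a j : ℚ) ≠ 0 by exact_mod_cast ha j)]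
          simp
        · refine Submodule.mem_one.mpr ⟨0, ?_⟩
          simp only [map_smul, LinearMap.smul_apply, smul_eq_mul,
            B.apply_dualBasis_left hnd c]
          rw [if_neg (by simp [h])]
          simp
      exact hle hy
    · show (a i : ℚ)⁻¹ • B.dualBasis hnd c (.inl i) ∈ U
      exact U.smul_mem _ ((dual_parts B hnd hsymm U W hcompl horth c hcU hcW).1 i)

end Aux

theorem stmt14 {V : Type} [AddCommGroup V] [Module ℚ V] [FiniteDimensional ℚ V]
    (B : LinearMap.BilinForm ℚ V) (hsymm : ∀ x y, B x y = B y x)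
    (hnd : B.Nondegenerate)
    (U W : Submodule ℚ V) (hcompl : IsCompl U W)
    (horth : ∀ u ∈ U, ∀ w ∈ W, B u w = 0)
    (Λ : Submodule ℤ V) (hfg : Λ.FG)
    (hfull : Submodule.span ℚ (Λ : Set V) = ⊤) :
    Nonempty
      (SQ Λ ((Λ ⊓ U.restrictScalars ℤ) ⊔ (Λ ⊓ W.restrictScalars ℤ)) ≃+
       SQ (B.dualSubmodule Λ)
         ((B.dualSubmodule Λ ⊓ U.restrictScalars ℤ) ⊔
          (B.dualSubmodule Λ ⊓ W.restrictScalars ℤ))) := by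
  classical
  have hBsymm : B.IsSymm := ⟨fun x y => by simpa using hsymm x y⟩
  -- basis of the lattice Λ
  obtain ⟨ι, hιfin, bv, hbv_li, hΛ, hbv_span⟩ := lattice_exists_basis Λ hfg
  have hspan_top : span ℚ (Set.range bv) = ⊤ := by rw [hbv_span, hfull]
  let b : Module.Basis ι ℚ V := Module.Basis.mk hbv_li (by rw [hspan_top])
  have hbcoe : ⇑b = bv := Module.Basis.coe_mk _ _
  have hΛ' : Λ = span ℤ (Set.range b) := by rw [hbcoe]; exact hΛ
  -- the dual lattice
  have hΛdual : B.dualSubmodule Λ = span ℤ (Set.range (B.dualBasis hnd b)) := by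
    rw [hΛ', B.dualSubmodule_span_of_basis hnd b]
  have hΛdd : B.dualSubmodule (B.dualSubmodule Λ) = Λ := by
    rw [hΛ']
    exact B.dualSubmodule_dualSubmodule_of_basis hnd hBsymm b
  have hΛdualfg : (B.dualSubmodule Λ).FG := by
    rw [hΛdual]
    exact fg_span (Set.finite_range _)
  have hΛdualfull : span ℚ ((B.dualSubmodule Λ : Submodule ℤ V) : Set V) = ⊤ := by
    rw [hΛdual, span_span_of_tower, Module.Basis.span_eq]
  -- the projection onto U
  set π : V →ₗ[ℚ] V := U.subtype.comp (U.projectionOnto W hcompl) with hπ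
  have hπU : ∀ u ∈ U, π u = u := fun u hu => by
    rw [hπ, LinearMap.comp_apply, Submodule.projectionOnto_apply_of_mem_left hcompl hu]; rfl
  have hπmem : ∀ x, π x ∈ U := fun x => (U.projectionOnto W hcompl x).2
  have hkerπ : ker π = W := by
    rw [hπ, LinearMap.ker_comp, ker_subtype, Submodule.comap_bot,
      Submodule.ker_projectionOnto]
  have hsub : ∀ x, x - π x ∈ W := fun x => by
    rw [← hkerπ, LinearMap.mem_ker, map_sub, hπU _ (hπmem x), sub_self]
  have hπrange : LinearMap.range π = U := by
    apply le_antisymm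
    · rintro _ ⟨x, rfl⟩; exact hπmem x
    · intro u hu; exact ⟨u, hπU u hu⟩
  set πz : V →ₗ[ℤ] V := π.restrictScalars ℤ with hπz
  -- the lattices in U
  set M : Submodule ℤ V := Λ ⊓ U.restrictScalars ℤ with hM
  set N : Submodule ℤ V := Λ ⊓ W.restrictScalars ℤ with hN
  set M' : Submodule ℤ V := map πz Λ with hM'
  have hMM' : M ≤ M' := by
    rintro x ⟨hxΛ, hxU⟩
    exact ⟨x, hxΛ, hπU x hxU⟩
  -- finite generation
  have hnoeth : IsNoetherian ℤ Λ := isNoetherian_of_fg_of_noetherian Λ hfg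
  have hfg_of_le : ∀ X : Submodule ℤ V, X ≤ Λ → X.FG := by
    intro X hXle
    have h1 := IsNoetherian.noetherian (X.comap Λ.subtype)
    have h2 := h1.map Λ.subtype
    rwa [Submodule.map_comap_subtype, inf_eq_right.mpr hXle] at h2
  have hMfg : M.FG := hfg_of_le M inf_le_left
  have hNfg : N.FG := hfg_of_le N inf_le_left
  -- fullness
  have hMfull : span ℚ (M : Set V) = U := span_inf Λ hfull U
  have hNfull : span ℚ (N : Set V) = W := span_inf Λ hfull W
  have hM'full : span ℚ (M' : Set V) = U := by
    rw [hM', hπz, span_map_proj, hfull, Submodule.map_top, hπrange]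
  -- ambient free module for Smith normal form
  set amb : Submodule ℤ V := Λ ⊔ M' with hamb
  have hambfg : amb.FG := hfg.sup (hfg.map πz)
  have hambfin : Module.Finite ℤ amb := Module.Finite.iff_fg.mpr hambfg
  have hambfree : Module.Free ℤ amb := by
    haveI : IsAddTorsionFree V := IsAddTorsionFree.of_module_rat V
    exact Module.free_of_finite_type_torsion_free'
  have hMamb : M ≤ amb := le_trans inf_le_left le_sup_left
  have hM'amb : M' ≤ amb := le_sup_right
  set bA := Module.Free.chooseBasis ℤ amb with hbA
  obtain ⟨n, o, hno, bO, bN, aa, hsnf⟩ :=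
    Submodule.exists_smith_normal_form_of_le bA (M.comap amb.subtype) (M'.comap amb.subtype)
      (fun x hx => hMM' hx)
  -- transfer to V
  have hspan_of_sub : ∀ (X : Submodule ℤ V) (hX : X ≤ amb) {m : ℕ}
      (bX : Module.Basis (Fin m) ℤ (X.comap amb.subtype)),
      span ℤ (Set.range fun i => ((bX i : amb) : V)) = X := by
    intro X hX m bX
    have hcomp : (fun i => ((bX i : amb) : V))
        = (amb.subtype.comp (X.comap amb.subtype).subtype) ∘ bX := rfl
    rw [hcomp, Set.range_comp, ← Submodule.map_span, bX.span_eq, Submodule.map_top,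
      LinearMap.range_comp, Submodule.range_subtype, Submodule.map_comap_subtype,
      inf_eq_right.mpr hX]
  have hli_of_sub : ∀ (X : Submodule ℤ V) {m : ℕ}
      (bX : Module.Basis (Fin m) ℤ (X.comap amb.subtype)),
      LinearIndependent ℚ (fun i => ((bX i : amb) : V)) := by
    intro X m bX
    exact (LinearIndependent.iff_fractionRing ℤ ℚ).mp
      ((bX.linearIndependent.map' (X.comap amb.subtype).subtype (ker_subtype _)).map'
        amb.subtype (ker_subtype _))
  have hon : n = o := by
    have h1 := finrank_span_eq_card (hli_of_sub M' bO)
    have h2 := finrank_span_eq_card (hli_of_sub M bN)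
    rw [show span ℚ (Set.range fun i => ((bO i : amb) : V)) = U by
      rw [← span_span_of_tower (R := ℤ) ℚ, hspan_of_sub M' hM'amb bO, hM'full]] at h1
    rw [show span ℚ (Set.range fun i => ((bN i : amb) : V)) = U by
      rw [← span_span_of_tower (R := ℤ) ℚ, hspan_of_sub M hMamb bN, hMfull]] at h2
    have h3 := h2.symm.trans h1
    simpa using h3
  subst hon
  set e : Fin n → V := fun i => ((bO i : amb) : V) with he
  set eN : Fin n → V := fun i => ((bN i : amb) : V) with heN
  have hspanE : span ℤ (Set.range e) = M' := hspan_of_sub M' hM'amb bO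
  have hspanEN : span ℤ (Set.range eN) = M := hspan_of_sub M hMamb bN
  have he_li : LinearIndependent ℚ e := hli_of_sub M' bO
  have hspanEQ : span ℚ (Set.range e) = U := by
    rw [← span_span_of_tower (R := ℤ) ℚ, hspanE, hM'full]
  have hsnfV' : ∀ i, eN i = aa i • e i := by
    intro i
    have h0 := congrArg (Subtype.val) (hsnf i)
    have hcast : Fin.castLE hno i = i := Fin.ext rfl
    rw [heN, he]
    rw [hcast] at h0
    simpa using h0
  have ha : ∀ i, aa i ≠ 0 := by
    intro i h
    have h0 : eN i = 0 := by rw [hsnfV' i, h, zero_smul]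
    have : (bN i : amb) = 0 := by
      apply Subtype.ext
      exact h0
    have : bN i = 0 := Subtype.ext this
    exact Module.Basis.ne_zero bN i this
  have hMspan : M = span ℤ (Set.range fun i => aa i • e i) := by
    rw [← hspanEN]
    congr 1
    ext x
    constructor
    · rintro ⟨i, rfl⟩; exact ⟨i, (hsnfV' i).symm⟩
    · rintro ⟨i, rfl⟩; exact ⟨i, hsnfV' i⟩
  -- basis family for the W part
  obtain ⟨κ, hκfin, fW, hfW_li, hNspan, hfWspan⟩ := lattice_exists_basis N hNfg
  have hfWspanW : span ℚ (Set.range fW) = W := by rw [hfWspan, hNfull]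
  have heU : ∀ i, e i ∈ U := by
    intro i
    have : e i ∈ M' := hspanE ▸ Submodule.subset_span ⟨i, rfl⟩
    obtain ⟨x, _, hxe⟩ := this
    rw [← hxe]
    exact hπmem x
  have hfWW : ∀ k, fW k ∈ W := by
    intro k
    have : fW k ∈ N := hNspan ▸ Submodule.subset_span ⟨k, rfl⟩
    exact this.2
  -- the combined basis c
  have hsum_li : LinearIndependent ℚ (Sum.elim e fW) :=
    he_li.sum_type hfW_li (by rw [hspanEQ, hfWspanW]; exact hcompl.disjoint)
  have hsum_span : ⊤ ≤ span ℚ (Set.range (Sum.elim e fW)) := by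
    rw [Set.Sum.elim_range, Submodule.span_union, hspanEQ, hfWspanW, hcompl.codisjoint.eq_top]
  set c : Module.Basis (Fin n ⊕ κ) ℚ V := Module.Basis.mk hsum_li hsum_span with hc
  have hcinl : ∀ i, c (.inl i) = e i := fun i => by rw [hc, Module.Basis.mk_apply]; rfl
  have hcinr : ∀ k, c (.inr k) = fW k := fun k => by rw [hc, Module.Basis.mk_apply]; rfl
  have hcU : ∀ i, c (.inl i) ∈ U := fun i => by rw [hcinl]; exact heU i
  have hcW : ∀ k, c (.inr k) ∈ W := fun k => by rw [hcinr]; exact hfWW k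
  -- projection-invariance of the dual lattice, intersected with U
  have hPD : ∀ X : Submodule ℤ V,
      B.dualSubmodule X ⊓ U.restrictScalars ℤ
        = B.dualSubmodule (map πz X) ⊓ U.restrictScalars ℤ := by
    intro X
    ext x
    simp only [Submodule.mem_inf]
    constructor
    · rintro ⟨hx, hxU⟩
      refine ⟨?_, hxU⟩
      rintro _ ⟨z, hz, rfl⟩
      have hdiff : B x (z - π z) = 0 := horth x hxU _ (hsub z)
      have : B x (πz z) = B x z := by
        have := map_sub (B x) z (π z)
        rw [hdiff] at this
        have h2 : B x (π z) = B x z := by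
          have h3 : B x z - B x (π z) = 0 := by rw [← map_sub]; exact hdiff
          linarith
        exact h2
      rw [this]
      exact hx z hz
    · rintro ⟨hx, hxU⟩
      refine ⟨?_, hxU⟩
      intro y hy
      have hdiff : B x (y - π y) = 0 := horth x hxU _ (hsub y)
      have h2 : B x (π y) = B x y := by
        have h3 : B x y - B x (π y) = 0 := by rw [← map_sub]; exact hdiff
        linarith
      rw [← h2]
      exact hx (πz y) (Submodule.mem_map_of_mem hy)
  -- Dspan applied with weights 1 : dual of M'
  have hDM' : B.dualSubmodule M' ⊓ U.restrictScalars ℤ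
      = span ℤ (Set.range fun i => B.dualBasis hnd c (.inl i)) := by
    have h := Dspan B hnd hsymm U W hcompl horth c hcU hcW (fun _ => 1) (fun _ => one_ne_zero)
    simp only [Int.cast_one, inv_one, one_smul] at h
    rw [← h, show (Set.range fun i => c (Sum.inl i)) = Set.range e from by
      rw [show (fun i => c (Sum.inl i)) = e from funext fun i => hcinl i], hspanE]
  -- Dspan applied with weights aa : dual of M
  have hDM : B.dualSubmodule M ⊓ U.restrictScalars ℤ
      = span ℤ (Set.range fun i => ((aa i : ℚ))⁻¹ • B.dualBasis hnd c (.inl i)) := by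
    have h := Dspan B hnd hsymm U W hcompl horth c hcU hcW aa ha
    rw [← h, hMspan, show (Set.range fun i => (aa i : ℚ) • c (Sum.inl i))
        = Set.range fun i => aa i • e i from by
      rw [show (fun i => (aa i : ℚ) • c (Sum.inl i)) = fun i => aa i • e i from
        funext fun i => by rw [hcinl i, Int.cast_smul_eq_zsmul]]]
  -- the projected dual lattice M₂'
  set M₂' : Submodule ℤ V := map πz (B.dualSubmodule Λ) with hM₂'
  set M₂ : Submodule ℤ V := B.dualSubmodule Λ ⊓ U.restrictScalars ℤ with hM₂
  -- M₂ = dual of M' intersect U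
  have hM₂eq : M₂ = span ℤ (Set.range fun i => B.dualBasis hnd c (.inl i)) := by
    rw [hM₂, hPD Λ, ← hM', hDM']
  -- dual of M₂' intersect U equals M
  have hDD1 : B.dualSubmodule M₂' ⊓ U.restrictScalars ℤ = M := by
    have h := hPD (B.dualSubmodule Λ)
    rw [hΛdd] at h
    rw [hM₂', ← h, hM]
  -- M₂' is a full lattice in U
  have hM₂'fg : M₂'.FG := hΛdualfg.map πz
  have hM₂'le : ∀ x ∈ M₂', x ∈ U := by
    rintro x ⟨z, _, rfl⟩; exact hπmem z
  have hM₂'full : span ℚ (M₂' : Set V) = U := by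
    rw [hM₂', hπz, span_map_proj, hΛdualfull, Submodule.map_top, hπrange]
  -- double dual of M₂'
  obtain ⟨κ₂, hκ₂fin, g', hg'li, hXspan, hg'span⟩ := lattice_exists_basis M₂' hM₂'fg
  have hg'spanU : span ℚ (Set.range g') = U := by rw [hg'span, hM₂'full]
  have hg'U : ∀ j, g' j ∈ U := fun j =>
    hM₂'le _ (hXspan ▸ Submodule.subset_span ⟨j, rfl⟩)
  have hsum_li₂ : LinearIndependent ℚ (Sum.elim g' fW) :=
    hg'li.sum_type hfW_li (by rw [hg'spanU, hfWspanW]; exact hcompl.disjoint)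
  have hsum_span₂ : ⊤ ≤ span ℚ (Set.range (Sum.elim g' fW)) := by
    rw [Set.Sum.elim_range, Submodule.span_union, hg'spanU, hfWspanW, hcompl.codisjoint.eq_top]
  set c₂ : Module.Basis (κ₂ ⊕ κ) ℚ V := Module.Basis.mk hsum_li₂ hsum_span₂ with hc₂
  have hc₂inl : ∀ j, c₂ (.inl j) = g' j := fun j => by rw [hc₂, Module.Basis.mk_apply]; rfl
  have hc₂U : ∀ j, c₂ (.inl j) ∈ U := fun j => by rw [hc₂inl]; exact hg'U j
  have hc₂W : ∀ k, c₂ (.inr k) ∈ W := fun k => by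
    rw [hc₂, Module.Basis.mk_apply]; exact hfWW k
  have hDX : B.dualSubmodule M₂' ⊓ U.restrictScalars ℤ
      = span ℤ (Set.range fun j => B.dualBasis hnd c₂ (.inl j)) := by
    have h := Dspan B hnd hsymm U W hcompl horth c₂ hc₂U hc₂W (fun _ => 1) (fun _ => one_ne_zero)
    simp only [Int.cast_one, inv_one, one_smul] at h
    rw [← h, show (Set.range fun j => c₂ (Sum.inl j)) = Set.range g' from by
      rw [show (fun j => c₂ (Sum.inl j)) = g' from funext fun j => hc₂inl j], hXspan]
  set c₃ : Module.Basis (κ₂ ⊕ κ) ℚ V := B.dualBasis hnd c₂ with hc₃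
  obtain ⟨hc₃U, hc₃W⟩ := dual_parts B hnd hsymm U W hcompl horth c₂ hc₂U hc₂W
  have hDDX : B.dualSubmodule (B.dualSubmodule M₂' ⊓ U.restrictScalars ℤ)
      ⊓ U.restrictScalars ℤ = M₂' := by
    have h := Dspan B hnd hsymm U W hcompl horth c₃ hc₃U hc₃W (fun _ => 1) (fun _ => one_ne_zero)
    simp only [Int.cast_one, inv_one, one_smul] at h
    rw [hDX]
    have hc₃c₂ : B.dualBasis hnd c₃ = c₂ := by
      rw [hc₃]
      exact B.dualBasis_dualBasis hnd hBsymm c₂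
    rw [show (Set.range fun j => B.dualBasis hnd c₂ (.inl j))
        = (Set.range fun j => c₃ (Sum.inl j)) from rfl]
    rw [h, hc₃c₂, show (Set.range fun j => c₂ (Sum.inl j)) = Set.range g' from by
      rw [show (fun j => c₂ (Sum.inl j)) = g' from funext fun j => hc₂inl j], hXspan]
  -- conclude : M₂' = span of the scaled dual family
  have hM₂'eq : M₂' = span ℤ (Set.range fun i => ((aa i : ℚ))⁻¹ • B.dualBasis hnd c (.inl i)) := by
    rw [← hDDX, hDD1, hDM]
  -- the two quotient isomorphisms
  obtain ⟨q1⟩ := proj_quot U W hcompl Λ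
  obtain ⟨q2⟩ := proj_quot U W hcompl (B.dualSubmodule Λ)
  -- independence of the scaled dual family
  have hg_li : LinearIndependent ℚ (fun i => ((aa i : ℚ))⁻¹ • B.dualBasis hnd c (.inl i)) := by
    have h1 : LinearIndependent ℚ (fun i => B.dualBasis hnd c (.inl i)) :=
      (B.dualBasis hnd c).linearIndependent.comp (Sum.inl) Sum.inl_injective
    have := h1.units_smul (fun i => Units.mk0 ((aa i : ℚ))⁻¹
      (inv_ne_zero (by exact_mod_cast ha i)))
    convert this using 1
    funext i; rfl
  obtain ⟨q3⟩ := quot_zmod e he_li aa M' M hspanE.symm hMspan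
  obtain ⟨q4⟩ := quot_zmod _ hg_li aa M₂' M₂ hM₂'eq (by
    rw [hM₂eq, show (fun i => aa i • ((aa i : ℚ))⁻¹ • B.dualBasis hnd c (.inl i))
        = fun i => B.dualBasis hnd c (.inl i) from funext fun i => by
      rw [← Int.cast_smul_eq_zsmul ℚ, smul_smul,
        mul_inv_cancel₀ (show (aa i : ℚ) ≠ 0 by exact_mod_cast ha i), one_smul]])
  exact ⟨(q1.trans q3).trans ((q2.trans q4).symm)⟩
end
end

section
/- Let V be a finite-dimensional ℚ-vector space, F = 1 + D an automorphism with ker D = ker D², preserving a nondegenerate symmetric ℚ-valued pairing, and Λ ⊂ V an F-stable full-rank lattice with Λ^∨ ⊆ Λ. Then the group B_{Λ,Λ^∨} = (Λ + D⁻¹Λ^∨)/(Λ + ker D) admits a perfect antisymmetric ℚ/ℤ-valued pairing; explicitly, ⟨x,y⟩ = (x, (D|_{DV})⁻¹ y) mod ℤ on DV satisfies ⟨x,y⟩ + ⟨y,Fx⟩ = 0 and descends to a perfect antisymmetric pairing on (Λ^∨ ∩ DV)/(Λ^∨ ∩ DΛ) ≅ B_{Λ,Λ^∨}. -/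
open Submodule LinearMap

noncomputable section

set_option maxHeartbeats 1000000
set_option synthInstance.maxHeartbeats 200000

lemma lattice_basis {V : Type} [AddCommGroup V] [Module ℚ V]
    (L : Submodule ℤ V) (hfg : L.FG) (hfull : Submodule.span ℚ (L : Set V) = ⊤) :
    ∃ (ι : Type) (_ : Fintype ι) (b : Module.Basis ι ℚ V), L = Submodule.span ℤ (Set.range b) := by
  have hnz : NoZeroSMulDivisors ℤ V := by
    constructor
    intro n x h
    rcases eq_or_ne n 0 with h0 | h0
    · exact Or.inl h0
    · refine Or.inr ?_
      have : ((n : ℚ)) • x = 0 := by rw [Int.cast_smul_eq_zsmul]; exact h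
      have hn : (n : ℚ) ≠ 0 := Int.cast_ne_zero.mpr h0
      simpa [hn] using this
  have : Module.Finite ℤ L := Module.Finite.iff_fg.mpr hfg
  have hfree : Module.Free ℤ L := inferInstance
  let b₀ := Module.Free.chooseBasis ℤ L
  set ι := Module.Free.ChooseBasisIndex ℤ L
  have hι : Fintype ι := inferInstance
  let v : ι → V := fun i => (b₀ i : V)
  have hli : LinearIndependent ℤ v :=
    b₀.linearIndependent.map' L.subtype (Submodule.ker_subtype L)
  have hliQ : LinearIndependent ℚ v := (LinearIndependent.iff_fractionRing ℤ ℚ).mp hli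
  have hspan : Submodule.span ℤ (Set.range v) = L := by
    have : Set.range v = L.subtype '' (Set.range b₀) := by
      rw [← Set.range_comp]; rfl
    rw [this, ← Submodule.map_span, b₀.span_eq, Submodule.map_top, Submodule.range_subtype]
  have hspanQ : Submodule.span ℚ (Set.range v) = ⊤ := by
    rw [← Submodule.span_span_of_tower (R := ℤ), hspan]; exact hfull
  exact ⟨ι, hι, Module.Basis.mk hliQ (by rw [hspanQ]), by rw [Module.Basis.coe_mk, hspan]⟩


theorem stmt15 {V : Type} [AddCommGroup V] [Module ℚ V] [FiniteDimensional ℚ V]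
    (B : LinearMap.BilinForm ℚ V) (hsymm : ∀ x y, B x y = B y x)
    (hnd : B.Nondegenerate)
    (F : V →ₗ[ℚ] V) (hFbij : Function.Bijective F)
    (hFinv : ∀ x y, B (F x) (F y) = B x y)
    (D : V →ₗ[ℚ] V) (hD : F = LinearMap.id + D)
    (hker : LinearMap.ker D = LinearMap.ker (D ∘ₗ D))
    (Λ : Submodule ℤ V) (hfg : Λ.FG)
    (hfull : Submodule.span ℚ (Λ : Set V) = ⊤)
    (hstab : Λ.map (F.restrictScalars ℤ) = Λ)
    (hdual : (B.dualSubmodule Λ : Submodule ℤ V) ≤ Λ) :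
    -- B_{Λ,Λ^∨} admits a perfect antisymmetric ℚ/ℤ-valued pairing
    (∃ φB : (SQ (Λ ⊔ (B.dualSubmodule Λ).comap (D.restrictScalars ℤ))
          (Λ ⊔ (LinearMap.ker D).restrictScalars ℤ)) →+
        (SQ (Λ ⊔ (B.dualSubmodule Λ).comap (D.restrictScalars ℤ))
          (Λ ⊔ (LinearMap.ker D).restrictScalars ℤ)) →+ AddCircle (1 : ℚ),
        (∀ x y, φB x y = - φB y x) ∧ Function.Bijective φB) ∧
    -- the explicit pairing ⟨x,y⟩ = (x, (D|_{DV})⁻¹ y) mod ℤ on DV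
    (∃ ψ : (LinearMap.range D).restrictScalars ℤ →
          (LinearMap.range D).restrictScalars ℤ → AddCircle (1 : ℚ),
        (∀ (x y : (LinearMap.range D).restrictScalars ℤ) (z : V),
            z ∈ LinearMap.range D → D z = (y : V) →
            ψ x y = ((B x z : ℚ) : AddCircle (1 : ℚ))) ∧
        -- (i) ⟨x,y⟩ + ⟨y,Fx⟩ = 0 for all x, y ∈ DV
        (∀ (x y fx : (LinearMap.range D).restrictScalars ℤ),
            (fx : V) = F (x : V) → ψ x y + ψ y fx = 0) ∧
        -- (ii) ψ descends to a perfect antisymmetric pairing on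
        -- (Λ^∨ ∩ DV)/(Λ^∨ ∩ DΛ) ≅ B_{Λ,Λ^∨}
        (∃ φ : (SQ (B.dualSubmodule Λ ⊓ (LinearMap.range D).restrictScalars ℤ)
              (B.dualSubmodule Λ ⊓ Λ.map (D.restrictScalars ℤ))) →+
            (SQ (B.dualSubmodule Λ ⊓ (LinearMap.range D).restrictScalars ℤ)
              (B.dualSubmodule Λ ⊓ Λ.map (D.restrictScalars ℤ))) →+ AddCircle (1 : ℚ),
          (∀ a b, φ a b = - φ b a) ∧ Function.Bijective φ ∧
          (∀ x y : (B.dualSubmodule Λ ⊓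
              (LinearMap.range D).restrictScalars ℤ : Submodule ℤ V),
            φ (Submodule.Quotient.mk x) (Submodule.Quotient.mk y) =
              ψ ⟨x.1, (Submodule.mem_inf.mp x.2).2⟩
                ⟨y.1, (Submodule.mem_inf.mp y.2).2⟩))) ∧
    Nonempty
      ((SQ (B.dualSubmodule Λ ⊓ (LinearMap.range D).restrictScalars ℤ)
          (B.dualSubmodule Λ ⊓ Λ.map (D.restrictScalars ℤ))) ≃+
       (SQ (Λ ⊔ (B.dualSubmodule Λ).comap (D.restrictScalars ℤ))
          (Λ ⊔ (LinearMap.ker D).restrictScalars ℤ))) := by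
  set K := LinearMap.ker D with hK
  set W := LinearMap.range D with hW
  -- F x = x + D x
  have hFx : ∀ x, F x = x + D x := by intro x; rw [hD]; rfl
  have hFD : ∀ x, F (D x) = D (F x) := by
    intro x; rw [hFx, hFx, map_add]
  -- disjoint
  have hdisj : K ⊓ W = ⊥ := by
    apply (Submodule.eq_bot_iff _).mpr
    rintro x ⟨hk, z, rfl⟩
    have : z ∈ LinearMap.ker (D ∘ₗ D) := by
      simp only [LinearMap.mem_ker, LinearMap.comp_apply]
      exact hk
    rw [← hker] at this
    exact this
  have hcompl : IsCompl K W := by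
    constructor
    · rw [disjoint_iff, hdisj]
    · rw [codisjoint_iff]
      apply Submodule.eq_top_of_finrank_eq
      have h1 := Submodule.finrank_sup_add_finrank_inf_eq K W
      rw [hdisj] at h1
      simp only [finrank_bot, add_zero] at h1
      rw [h1, add_comm]
      exact LinearMap.finrank_range_add_finrank_ker D
  -- projection onto W along K
  set p : V →ₗ[ℚ] W := W.projectionOnto K hcompl.symm with hp
  have hpW : ∀ w : W, p w = w := fun w => Submodule.projectionOnto_apply_left hcompl.symm w
  have hpK : ∀ k ∈ K, p k = 0 := fun k hk => Submodule.projectionOnto_apply_of_mem_right hcompl.symm hk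
  have hpker : ∀ v : V, v - p v ∈ K := by
    intro v
    have hv : v ∈ K ⊔ W := by rw [codisjoint_iff.mp hcompl.codisjoint]; trivial
    obtain ⟨k, hk, w, hw, rfl⟩ := Submodule.mem_sup.mp hv
    have : p (k + w) = ⟨w, hw⟩ := by
      rw [map_add, hpK k hk, zero_add]
      exact hpW ⟨w, hw⟩
    rw [this]
    simpa using hk
  -- E : W ≃ W, restriction of D
  have hDmem : ∀ x : V, D x ∈ W := fun x => LinearMap.mem_range_self D x
  set Dw : W →ₗ[ℚ] W := D.restrict (fun x _ => hDmem x) with hDw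
  have hDwinj : Function.Injective Dw := by
    intro a b hab
    have : D ((a : V) - b) = 0 := by
      have := congrArg (Subtype.val) hab
      change D (a : V) = D (b : V) at this
      rw [map_sub]; rw [sub_eq_zero]; exact this
    have hmem : ((a : V) - b) ∈ K ⊓ W := ⟨this, sub_mem a.2 b.2⟩
    rw [hdisj] at hmem
    have := Submodule.mem_bot (R := ℚ) |>.mp hmem
    exact Subtype.ext (sub_eq_zero.mp this)
  have hDwbij : Function.Bijective Dw :=
    ⟨hDwinj, (LinearMap.injective_iff_surjective).mp hDwinj⟩
  set E := LinearEquiv.ofBijective Dw hDwbij with hE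
  have hEapp : ∀ w : W, (E w : V) = D w := fun w => rfl
  have hEs : ∀ (y : W) (z : V) (hz : z ∈ W), D z = (y : V) → E.symm y = ⟨z, hz⟩ := by
    intro y z hz hzy
    apply E.injective
    rw [E.apply_symm_apply]
    exact Subtype.ext (by rw [hEapp]; exact hzy.symm)
  have hEp : ∀ v : V, (E (p v) : V) = D v := by
    intro v
    rw [hEapp]
    have : D (v - p v) = 0 := hpker v
    rw [map_sub] at this
    have := sub_eq_zero.mp this
    exact this.symm
  -- F as equiv
  set Fe := LinearEquiv.ofBijective F hFbij with hFe
  have hFeapp : ∀ x, Fe x = F x := fun x => rfl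
  have hFes : ∀ x, F (Fe.symm x) = x := fun x => Fe.apply_symm_apply x
  have hFK : ∀ k ∈ K, F k = k := by
    intro k hk; rw [hFx]; rw [LinearMap.mem_ker] at hk; rw [hk, add_zero]
  have hFesK : ∀ k ∈ K, Fe.symm k = k := by
    intro k hk
    apply Fe.injective
    rw [Fe.apply_symm_apply, hFeapp, hFK k hk]
  have hFWm : ∀ w ∈ W, F w ∈ W := by
    rintro w ⟨z, rfl⟩; exact ⟨F z, (hFD z).symm⟩
  have hFesD : ∀ x, Fe.symm (D x) = D (Fe.symm x) := by
    intro x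
    apply Fe.injective
    rw [Fe.apply_symm_apply, hFeapp, hFD, hFes]
  have hFesWm : ∀ w ∈ W, Fe.symm w ∈ W := by
    rintro w ⟨z, rfl⟩
    exact ⟨Fe.symm z, (hFesD z).symm⟩
  -- bilinear identities
  have hBexp : ∀ a b, B (D a) b + B a (D b) + B (D a) (D b) = 0 := by
    intro a b
    have h := hFinv a b
    rw [hFx a, hFx b] at h
    simp only [map_add, LinearMap.add_apply] at h
    linarith
  have hA : ∀ a b, B (D a) (F b) = - B (D b) a := by
    intro a b
    have h := hBexp a b
    rw [hFx b]
    simp only [map_add]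
    have hs := hsymm a (D b)
    have hs2 := hsymm (D b) a
    linarith
  have hBWK : ∀ w ∈ W, ∀ k ∈ K, B w k = 0 := by
    rintro w ⟨a, rfl⟩ k hk
    have h := hBexp a k
    rw [LinearMap.mem_ker] at hk
    rw [hk] at h
    simpa using h
  have hFinv' : ∀ x y, B (Fe.symm x) y = B x (F y) := by
    intro x y
    conv_rhs => rw [← hFes x]
    rw [hFinv]
  -- lattice stability
  have hLF : ∀ l ∈ Λ, F l ∈ Λ := by
    intro l hl
    rw [← hstab]
    exact Submodule.mem_map_of_mem hl
  have hLFinv : ∀ l ∈ Λ, Fe.symm l ∈ Λ := by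
    intro l hl
    rw [← hstab] at hl
    obtain ⟨m, hm, rfl⟩ := hl
    have : Fe.symm (F m) = m := Fe.symm_apply_apply m
    rw [show F.restrictScalars ℤ m = F m from rfl, this]
    exact hm
  have hLD : ∀ l ∈ Λ, D l ∈ Λ := by
    intro l hl
    have : D l = F l - l := by rw [hFx]; abel
    rw [this]
    exact sub_mem (hLF l hl) hl
  -- dual membership
  set Λd := B.dualSubmodule Λ with hΛd
  have hmemd : ∀ x : V, x ∈ Λd ↔ ∀ y ∈ Λ, ∃ n : ℤ, (n : ℚ) = B x y := by
    intro x
    constructor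
    · intro hx y hy
      obtain ⟨n, hn⟩ := Submodule.mem_one.mp (hx y hy)
      exact ⟨n, by simpa using hn⟩
    · intro hx y hy
      obtain ⟨n, hn⟩ := hx y hy
      exact Submodule.mem_one.mpr ⟨n, by simpa using hn⟩
  -- W-land
  set BW : LinearMap.BilinForm ℚ W := B.compl₁₂ W.subtype W.subtype with hBW
  have hBWapp : ∀ x y : W, BW x y = B (x : V) (y : V) := fun x y => rfl
  have hBWsymm : BW.IsSymm := by
    refine ⟨fun x y => ?_⟩
    rw [hBWapp, hBWapp]
    exact hsymm _ _
  have hBWnd : BW.Nondegenerate := by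
    refine (LinearMap.IsRefl.nondegenerate_iff_separatingLeft (B := BW) (fun x y h => by rw [hBWapp] at h ⊢; rw [hsymm]; exact h)).mpr ?_
    intro m hm
    have hBm : ∀ v : V, B (m : V) v = 0 := by
      intro v
      have hv : v ∈ K ⊔ W := by rw [codisjoint_iff.mp hcompl.codisjoint]; trivial
      obtain ⟨k, hk, w, hw, rfl⟩ := Submodule.mem_sup.mp hv
      rw [map_add]
      have h1 : B (m : V) k = 0 := hBWK (m : V) m.2 k hk
      have h2 : B (m : V) w = 0 := hm ⟨w, hw⟩
      rw [h1, h2, add_zero]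
    exact Subtype.ext (hnd.1 (m : V) hBm)
  set pZ : V →ₗ[ℤ] W := p.restrictScalars ℤ with hpZ
  set PΛ : Submodule ℤ W := Λ.map pZ with hPΛ
  have hPΛfg : PΛ.FG := hfg.map pZ
  have hPΛfull : Submodule.span ℚ (PΛ : Set W) = ⊤ := by
    have hset : (PΛ : Set W) = p '' (Λ : Set V) := rfl
    rw [hset, ← Submodule.map_span, hfull]
    rw [Submodule.map_top]
    rw [LinearMap.range_eq_top]
    intro w
    exact ⟨w, hpW w⟩
  have hBp : ∀ (x : W) (l : V), B (x : V) l = BW x (p l) := by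
    intro x l
    rw [hBWapp]
    have : B (x : V) (l - p l) = 0 := hBWK (x : V) x.2 _ (hpker l)
    rw [map_sub] at this
    have h2 := sub_eq_zero.mp this
    exact h2
  classical
  set iW : W →ₗ[ℤ] V := W.subtype.restrictScalars ℤ with hiW
  set Mw : Submodule ℤ W := Λd.comap iW with hMw
  have hMwmem : ∀ x : W, x ∈ Mw ↔ (x : V) ∈ Λd := fun x => Iff.rfl
  have hMwdual : Mw = BW.dualSubmodule PΛ := by
    ext x
    rw [hMwmem, hmemd]
    constructor
    · intro hx u hu
      obtain ⟨l, hl, rfl⟩ := hu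
      obtain ⟨n, hn⟩ := hx l hl
      refine Submodule.mem_one.mpr ⟨n, ?_⟩
      have : BW x (pZ l) = B (x : V) l := (hBp x l).symm
      rw [this]
      simpa using hn
    · intro hx l hl
      have h2 := hx (pZ l) (Submodule.mem_map_of_mem hl)
      obtain ⟨n, hn⟩ := Submodule.mem_one.mp h2
      refine ⟨n, ?_⟩
      rw [hBp x l]
      simp at hn; exact hn
  obtain ⟨ι₀, hι₀, b, hbPΛ⟩ := lattice_basis PΛ hPΛfg hPΛfull
  have hdd : BW.dualSubmodule Mw = PΛ := by
    rw [hMwdual, hbPΛ]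
    exact BW.dualSubmodule_dualSubmodule_of_basis hBWnd hBWsymm b
  have hMwspan : Mw = Submodule.span ℤ (Set.range (BW.dualBasis hBWnd b)) := by
    rw [hMwdual, hbPΛ]
    exact BW.dualSubmodule_span_of_basis hBWnd b
  have hMwfg : Mw.FG := by
    rw [hMwspan]
    exact Submodule.fg_span (Set.finite_range _)
  -- E.symm of D l is p l
  have hEDl : ∀ (l : V) (h : D l ∈ W), E.symm ⟨D l, h⟩ = p l := by
    intro l h
    have : D ((p l : V)) = D l := by
      have h0 : D (l - p l) = 0 := hpker l
      rw [map_sub] at h0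
      have := sub_eq_zero.mp h0
      exact this.symm
    have := hEs ⟨D l, h⟩ (p l : V) (p l).2 this
    rw [this]
  -- V1 : right vanishing
  have hV1 : ∀ (x : W), (x : V) ∈ Λd → ∀ (l : V), l ∈ Λ → ∀ (h : D l ∈ W),
      ∃ n : ℤ, (n : ℚ) = B (x : V) (E.symm ⟨D l, h⟩ : V) := by
    intro x hx l hl h
    rw [hEDl l h]
    obtain ⟨n, hn⟩ := (hmemd _).mp hx l hl
    refine ⟨n, ?_⟩
    rw [hn, hBp x l]
    rfl
  -- V2 : left vanishing
  have hV2 : ∀ (l : V), l ∈ Λ → ∀ (y : W), (y : V) ∈ Λd →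
      ∃ n : ℤ, (n : ℚ) = B (D l) (E.symm y : V) := by
    intro l hl y hy
    set v := E.symm y with hv
    have hDv : D (v : V) = (y : V) := by
      rw [hv, ← hEapp]
      rw [E.apply_symm_apply]
    have h1 : B (D l) (F (Fe.symm (v : V))) = - B (D (Fe.symm (v : V))) l := hA l (Fe.symm (v : V))
    rw [hFes] at h1
    rw [← hFesD, hDv] at h1
    rw [hFinv'] at h1
    obtain ⟨n, hn⟩ := (hmemd _).mp hy (F l) (hLF l hl)
    exact ⟨-n, by push_cast; rw [hn, h1]⟩
  -- V3 : antisymmetry up to ℤ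
  have hV3 : ∀ (x y : W), (x : V) ∈ Λd → (y : V) ∈ Λd →
      ∃ n : ℤ, (n : ℚ) = B (x : V) (E.symm y : V) + B (y : V) (E.symm x : V) := by
    intro x y hx hy
    set u := E.symm x with hu
    set v := E.symm y with hvv
    have hDu : D (u : V) = (x : V) := by rw [hu, ← hEapp, E.apply_symm_apply]
    have hDv : D (v : V) = (y : V) := by rw [hvv, ← hEapp, E.apply_symm_apply]
    have h1 : B (D (v : V)) (F (u : V)) = - B (D (u : V)) (v : V) := hA _ _
    rw [hDu, hDv, hFx] at h1
    rw [map_add] at h1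
    obtain ⟨n, hn⟩ := (hmemd _).mp hy (x : V) (hdual hx)
    refine ⟨-n, ?_⟩
    push_cast
    rw [hn]
    rw [hDu] at h1
    linarith
  -- KER
  have hKER : ∀ (y : W), (y : V) ∈ Λd →
      (∀ x : W, (x : V) ∈ Λd → ∃ n : ℤ, (n : ℚ) = B (x : V) (E.symm y : V)) →
      ∃ l ∈ Λ, D l = (y : V) := by
    intro y hy hall
    set v := E.symm y with hv
    have hDv : D (v : V) = (y : V) := by rw [hv, ← hEapp, E.apply_symm_apply]
    have hvdual : v ∈ BW.dualSubmodule Mw := by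
      intro u hu
      obtain ⟨n, hn⟩ := hall u ((hMwmem u).mp hu)
      refine Submodule.mem_one.mpr ⟨n, ?_⟩
      have : BW v u = B (u : V) (v : V) := by rw [hBWapp]; exact hsymm _ _
      rw [this]
      simpa using hn
    rw [hdd] at hvdual
    obtain ⟨l, hl, hlv⟩ := hvdual
    refine ⟨l, hl, ?_⟩
    have : D ((p l : V)) = D l := by
      have h0 : D (l - p l) = 0 := hpker l
      rw [map_sub] at h0
      exact (sub_eq_zero.mp h0).symm
    rw [← hDv, ← hlv]
    exact this.symm
  -- statement-level lattices
  set MV : Submodule ℤ V := Λd ⊓ W.restrictScalars ℤ with hMV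
  set NV : Submodule ℤ V := Λd ⊓ Λ.map (D.restrictScalars ℤ) with hNV
  have hMVmem : ∀ x : V, x ∈ MV ↔ x ∈ Λd ∧ x ∈ W := fun x => Iff.rfl
  have hNVmem : ∀ x : V, x ∈ NV ↔ x ∈ Λd ∧ ∃ l ∈ Λ, D l = x := by
    intro x
    constructor
    · rintro ⟨h1, l, hl, rfl⟩
      exact ⟨h1, l, hl, rfl⟩
    · rintro ⟨h1, l, hl, rfl⟩
      exact ⟨h1, Submodule.mem_map_of_mem hl⟩
  -- helpers on MV
  have hMVW : ∀ u : MV, (u : V) ∈ W := fun u => u.2.2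
  have hMVd : ∀ u : MV, (u : V) ∈ Λd := fun u => u.2.1
  set xw : MV → W := fun u => ⟨(u : V), hMVW u⟩ with hxw
  set es : MV → W := fun u => E.symm (xw u) with hes
  -- SURJECTIVITY
  have hSUR : ∀ (c : MV →+ AddCircle (1 : ℚ)),
      (∀ u : MV, (u : V) ∈ Λ.map (D.restrictScalars ℤ) → c u = 0) →
      ∃ x : MV, ∀ u : MV, ((B (x : V) (es u : V) : ℚ) : AddCircle (1 : ℚ)) = c u := by
    intro c hc
    set Eℤ : W ≃ₗ[ℤ] W := E.restrictScalars ℤ with hEZ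
    set Mt : Submodule ℤ W := Mw.map (Eℤ.symm : W ≃ₗ[ℤ] W).toLinearMap with hMt
    have hMtmem : ∀ v : W, v ∈ Mt ↔ (E v : V) ∈ Λd := by
      intro v
      constructor
      · rintro ⟨u, hu, rfl⟩
        have : E ((Eℤ.symm : W ≃ₗ[ℤ] W).toLinearMap u) = u := E.apply_symm_apply u
        rw [this]
        exact (hMwmem u).mp hu
      · intro hv
        exact ⟨E v, (hMwmem (E v)).mpr hv, E.symm_apply_apply v⟩
    set St : Submodule ℤ W := Mt ⊔ PΛ with hSt
    have hStfg : St.FG := (hMwfg.map _).sup hPΛfg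
    have hStfull : Submodule.span ℚ (St : Set W) = ⊤ := by
      rw [eq_top_iff, ← hPΛfull]
      exact Submodule.span_mono (by intro z hz; exact Submodule.mem_sup_right hz)
    -- χ on Mt
    have htoMV : ∀ v : Mt, (E (v : W) : V) ∈ MV := by
      intro v
      exact ⟨(hMtmem (v : W)).mp v.2, (E (v : W)).2⟩
    set toMV : Mt →+ MV := AddMonoidHom.mk' (fun v => (⟨(E (v : W) : V), htoMV v⟩ : MV))
      (by intro v w; apply Subtype.ext; show (E ((v : W) + (w : W)) : V) = _; rw [map_add]; rfl) with htoMVdef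
    set χw : Mt →+ AddCircle (1 : ℚ) := c.comp toMV with hχw
    have hχw0 : ∀ v : Mt, (v : W) ∈ PΛ → χw v = 0 := by
      rintro v ⟨l, hl, hlv⟩
      apply hc
      show ((toMV v : MV) : V) ∈ _
      have h1 : ((toMV v : MV) : V) = (E (v : W) : V) := rfl
      rw [h1, ← hlv]
      have h2 : (E (pZ l) : V) = D l := hEp l
      rw [h2]
      exact Submodule.mem_map_of_mem hl
    have hker2 : (Mt ⊓ PΛ).comap Mt.subtype ≤ LinearMap.ker χw.toIntLinearMap := by
      intro v hv
      simp only [LinearMap.mem_ker]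
      exact hχw0 v hv.2
    set χq := Submodule.liftQ ((Mt ⊓ PΛ).comap Mt.subtype) χw.toIntLinearMap hker2 with hχq
    set e2 := LinearMap.quotientInfEquivSupQuotient Mt PΛ with he2
    set ξ : St →+ AddCircle (1 : ℚ) :=
      ((χq.comp (e2.symm.toLinearMap)).comp (PΛ.comap St.subtype).mkQ).toAddMonoidHom with hξ
    have hξPΛ : ∀ (sv : St), (sv : W) ∈ PΛ → ξ sv = 0 := by
      intro sv hsv
      show χq (e2.symm ((PΛ.comap St.subtype).mkQ sv)) = 0
      have : (PΛ.comap St.subtype).mkQ sv = 0 := (Submodule.Quotient.mk_eq_zero _).mpr hsv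
      rw [this, map_zero]
      exact map_zero χq
    have hξMt : ∀ (v : Mt), ξ (Submodule.inclusion le_sup_left v) = χw v := by
      intro v
      show χq (e2.symm ((PΛ.comap St.subtype).mkQ (Submodule.inclusion le_sup_left v))) = χw v
      have h1 : (PΛ.comap St.subtype).mkQ (Submodule.inclusion le_sup_left v)
          = e2 (Submodule.Quotient.mk v) := by
        rw [he2, LinearMap.quotientInfEquivSupQuotient_apply_mk]
        rfl
      rw [h1, LinearEquiv.symm_apply_apply]
      show χq (Submodule.Quotient.mk v) = χw v
      rw [hχq, Submodule.liftQ_apply]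
      rfl
    -- basis of St and rational lift
    obtain ⟨ι₁, hι₁, bS, hbS⟩ := lattice_basis St hStfg hStfull
    have hbSmem : ∀ i, bS i ∈ St := by
      intro i
      rw [hbS]
      exact Submodule.subset_span (Set.mem_range_self i)
    have hlift : ∀ i, ∃ r : ℚ, (r : AddCircle (1:ℚ)) = ξ ⟨bS i, hbSmem i⟩ := by
      intro i
      obtain ⟨r, hr⟩ := QuotientAddGroup.mk'_surjective _ (ξ ⟨bS i, hbSmem i⟩)
      exact ⟨r, hr⟩
    set q : ι₁ → ℚ := fun i => (hlift i).choose with hq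
    have hqspec : ∀ i, ((q i : ℚ) : AddCircle (1:ℚ)) = ξ ⟨bS i, hbSmem i⟩ := fun i => (hlift i).choose_spec
    set f : W →ₗ[ℚ] ℚ := bS.constr ℚ q with hf
    set x₀ : W := (BW.toDual hBWnd).symm f with hx₀
    have hx₀f : ∀ w : W, BW x₀ w = f w := by
      intro w
      have : BW.toDual hBWnd x₀ = f := (BW.toDual hBWnd).apply_symm_apply f
      rw [← this]
      rfl
    have hx₀b : ∀ i, BW x₀ (bS i) = q i := by
      intro i
      rw [hx₀f, hf]
      exact bS.constr_basis ℚ q i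
    -- x₀ matches ξ on all of St
    have hmain : ∀ sv (hsv : sv ∈ Submodule.span ℤ (Set.range bS)),
        ((BW x₀ sv : ℚ) : AddCircle (1:ℚ)) = ξ ⟨sv, by rw [hbS]; exact hsv⟩ := by
      intro sv hsv
      induction hsv using Submodule.span_induction with
      | mem z hz =>
          obtain ⟨i, rfl⟩ := hz
          rw [hx₀b i]
          exact hqspec i
      | zero =>
          rw [map_zero]
          have : (⟨0, by rw [hbS]; exact Submodule.zero_mem _⟩ : St) = 0 := rfl
          rw [this, map_zero]
          norm_num
      | add z w hz hw ihz ihw =>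
          rw [map_add]
          have : (⟨z + w, _⟩ : St) = ⟨z, by rw [hbS]; exact hz⟩ + ⟨w, by rw [hbS]; exact hw⟩ := rfl
          rw [this, map_add, ← ihz, ← ihw]
          push_cast
          rfl
      | smul n z hz ihz =>
          have h1 : BW x₀ (n • z) = n • BW x₀ z := map_zsmul (BW x₀) n z
          have h2 : (⟨n • z, _⟩ : St) = n • (⟨z, by rw [hbS]; exact hz⟩ : St) := rfl
          rw [h1, h2, AddMonoidHom.map_zsmul, ← ihz, AddCircle.coe_zsmul]
    have hmain' : ∀ (sv : W) (h : sv ∈ St), ((BW x₀ sv : ℚ) : AddCircle (1:ℚ)) = ξ ⟨sv, h⟩ := by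
      intro sv h
      have h' : sv ∈ Submodule.span ℤ (Set.range bS) := by rw [← hbS]; exact h
      exact hmain sv h'
    -- x₀ ∈ Λd
    have hx₀d : (x₀ : V) ∈ Λd := by
      rw [hmemd]
      intro l hl
      have hplS : (pZ l : W) ∈ St := Submodule.mem_sup_right (Submodule.mem_map_of_mem hl)
      have := hmain' (pZ l) hplS
      rw [hξPΛ _ (Submodule.mem_map_of_mem hl)] at this
      obtain ⟨n, hn⟩ := (AddCircle.coe_eq_zero_iff _).mp this
      refine ⟨n, ?_⟩
      rw [hBp x₀ l]
      have : (n : ℚ) = BW x₀ (pZ l) := by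
        rw [← hn]; simp
      rw [this]
      rfl
    refine ⟨⟨(x₀ : V), hx₀d, x₀.2⟩, ?_⟩
    intro u
    have hesu : es u ∈ Mt := by
      rw [hMtmem]
      have : E (es u) = xw u := by rw [hes]; exact E.apply_symm_apply (xw u)
      rw [this]
      exact hMVd u
    have hesS : (es u : W) ∈ St := Submodule.mem_sup_left hesu
    have h1 : ((BW x₀ (es u) : ℚ) : AddCircle (1:ℚ)) = ξ ⟨es u, hesS⟩ := hmain' _ hesS
    have h2 : ξ ⟨es u, hesS⟩ = χw ⟨es u, hesu⟩ := by
      have := hξMt ⟨es u, hesu⟩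
      rw [← this]
      rfl
    have h3 : χw ⟨es u, hesu⟩ = c u := by
      rw [hχw]
      show c (toMV ⟨es u, hesu⟩) = c u
      congr 1
      apply Subtype.ext
      show (E (es u) : V) = (u : V)
      rw [hes]
      rw [E.apply_symm_apply]
    have h4 : B ((⟨(x₀ : V), hx₀d, x₀.2⟩ : MV) : V) (es u : V) = BW x₀ (es u) := rfl
    rw [h4, h1, h2, h3]
  -- integer coe helper
  have hcoe0 : ∀ r : ℚ, (∃ n : ℤ, (n : ℚ) = r) → ((r : ℚ) : AddCircle (1:ℚ)) = 0 := by
    rintro r ⟨n, rfl⟩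
    rw [AddCircle.coe_eq_zero_iff]
    exact ⟨n, by simp⟩
  -- the pairing on MV
  have hadd_es : ∀ u v : MV, es (u + v) = es u + es v := by
    intro u v
    show E.symm (xw (u + v)) = E.symm (xw u) + E.symm (xw v)
    have h0 : xw (u + v) = xw u + xw v := rfl
    rw [h0, map_add]
  set f1 : MV → MV →+ AddCircle (1:ℚ) := fun x => AddMonoidHom.mk'
      (fun y => ((B (x : V) (es y : V) : ℚ) : AddCircle (1:ℚ)))
      (by
        intro y z
        show ((B (x : V) (es (y + z) : V) : ℚ) : AddCircle (1:ℚ))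
          = ((B (x : V) (es y : V) : ℚ) : AddCircle (1:ℚ)) + ((B (x : V) (es z : V) : ℚ) : AddCircle (1:ℚ))
        rw [hadd_es]
        have : ((es y + es z : W) : V) = (es y : V) + (es z : V) := rfl
        rw [this, map_add, AddCircle.coe_add]) with hf1
  have hf1app : ∀ x y : MV, f1 x y = ((B (x : V) (es y : V) : ℚ) : AddCircle (1:ℚ)) := fun x y => rfl
  have hR : ∀ (x n : MV), (n : V) ∈ NV → f1 x n = 0 := by
    intro x n hn
    obtain ⟨hnd', l, hl, hln⟩ := (hNVmem _).mp hn
    rw [hf1app]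
    apply hcoe0
    have hxwn : xw n = ⟨D l, hDmem l⟩ := Subtype.ext (by show (n : V) = D l; rw [hln])
    have : es n = E.symm ⟨D l, hDmem l⟩ := by
      show E.symm (xw n) = E.symm ⟨D l, hDmem l⟩
      rw [hxwn]
    rw [this]
    exact hV1 (xw x) (hMVd x) l hl (hDmem l)
  have hL : ∀ (n x : MV), (n : V) ∈ NV → f1 n x = 0 := by
    intro n x hn
    obtain ⟨hnd', l, hl, hln⟩ := (hNVmem _).mp hn
    rw [hf1app]
    apply hcoe0
    have : (n : V) = D l := hln.symm
    rw [this]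
    exact hV2 l hl (xw x) (hMVd x)
  set Q := MV ⧸ (NV.comap MV.subtype) with hQ
  have hkerR : ∀ x : MV, NV.comap MV.subtype ≤ LinearMap.ker (f1 x).toIntLinearMap := by
    intro x n hn
    exact hR x n hn
  set φin : MV → (Q →ₗ[ℤ] AddCircle (1:ℚ)) :=
    fun x => Submodule.liftQ (NV.comap MV.subtype) (f1 x).toIntLinearMap (hkerR x) with hφin
  set Φ : MV →+ (Q →+ AddCircle (1:ℚ)) := AddMonoidHom.mk'
      (fun x => (φin x).toAddMonoidHom)
      (by
        intro x y
        apply AddMonoidHom.ext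
        intro q
        obtain ⟨z, rfl⟩ := Submodule.Quotient.mk_surjective _ q
        show f1 (x + y) z = f1 x z + f1 y z
        rw [hf1app, hf1app, hf1app]
        have : ((x + y : MV) : V) = (x : V) + (y : V) := rfl
        rw [this, map_add, LinearMap.add_apply, AddCircle.coe_add]) with hΦ
  have hkerL : NV.comap MV.subtype ≤ LinearMap.ker Φ.toIntLinearMap := by
    intro n hn
    simp only [LinearMap.mem_ker]
    apply AddMonoidHom.ext
    intro q
    obtain ⟨z, rfl⟩ := Submodule.Quotient.mk_surjective _ q
    show f1 n z = 0
    exact hL n z hn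
  set φ : Q →+ (Q →+ AddCircle (1:ℚ)) :=
    (Submodule.liftQ (NV.comap MV.subtype) Φ.toIntLinearMap hkerL).toAddMonoidHom with hφ
  have hφmk : ∀ x y : MV, φ (Submodule.Quotient.mk x) (Submodule.Quotient.mk y)
      = ((B (x : V) (es y : V) : ℚ) : AddCircle (1:ℚ)) := fun x y => rfl
  -- antisymmetry
  have hanti : ∀ a b : Q, φ a b = - φ b a := by
    intro a b
    obtain ⟨x, rfl⟩ := Submodule.Quotient.mk_surjective _ a
    obtain ⟨y, rfl⟩ := Submodule.Quotient.mk_surjective _ b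
    rw [hφmk, hφmk]
    apply eq_neg_of_add_eq_zero_left
    rw [← AddCircle.coe_add]
    apply hcoe0
    exact hV3 (xw x) (xw y) (hMVd x) (hMVd y)
  -- injectivity
  have hinj : Function.Injective φ := by
    rw [injective_iff_map_eq_zero]
    intro a ha
    obtain ⟨x, rfl⟩ := Submodule.Quotient.mk_surjective _ a
    have hx : ∀ y : MV, ((B (x : V) (es y : V) : ℚ) : AddCircle (1:ℚ)) = 0 := by
      intro y
      rw [← hφmk, ha]
      rfl
    -- flip via antisymmetry (hV3)
    have hx2 : ∀ y : W, (y : V) ∈ Λd → ∃ n : ℤ, (n : ℚ) = B (y : V) (E.symm (xw x) : V) := by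
      intro y hy
      obtain ⟨m, hm⟩ := hV3 (xw x) y (hMVd x) hy
      have hy' : (⟨(y : V), hy, y.2⟩ : MV) = ⟨(y : V), hy, y.2⟩ := rfl
      have h0 := hx ⟨(y : V), hy, y.2⟩
      have hesy : (es ⟨(y : V), hy, y.2⟩ : V) = (E.symm y : V) := by
        show (E.symm (xw ⟨(y : V), hy, y.2⟩) : V) = (E.symm y : V)
        have : xw ⟨(y : V), hy, y.2⟩ = y := Subtype.ext rfl
        rw [this]
      rw [hesy] at h0
      obtain ⟨k, hk⟩ := (AddCircle.coe_eq_zero_iff _).mp h0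
      refine ⟨m - k, ?_⟩
      push_cast
      have hk' : (k : ℚ) = B (x : V) (E.symm y : V) := by
        rw [← hk]; simp
      rw [hm, ← hk']
      ring
    obtain ⟨l, hl, hld⟩ := hKER (xw x) (hMVd x) hx2
    rw [Submodule.Quotient.mk_eq_zero]
    show (x : V) ∈ NV
    exact (hNVmem _).mpr ⟨hMVd x, l, hl, hld⟩
  -- surjectivity
  have hsurj : Function.Surjective φ := by
    intro c
    set cH : MV →+ AddCircle (1:ℚ) := c.comp
      ((NV.comap MV.subtype).mkQ.toAddMonoidHom) with hcH
    have hcH0 : ∀ u : MV, (u : V) ∈ Λ.map (D.restrictScalars ℤ) → cH u = 0 := by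
      intro u hu
      have : (NV.comap MV.subtype).mkQ u = 0 := by
        rw [Submodule.mkQ_apply, Submodule.Quotient.mk_eq_zero]
        exact ⟨hMVd u, hu⟩
      show c ((NV.comap MV.subtype).mkQ u) = 0
      rw [this, map_zero]
    obtain ⟨x, hxall⟩ := hSUR cH hcH0
    refine ⟨Submodule.Quotient.mk x, ?_⟩
    apply AddMonoidHom.ext
    intro q
    obtain ⟨z, rfl⟩ := Submodule.Quotient.mk_surjective _ q
    rw [hφmk]
    exact hxall z
  -- the isomorphism with B_{Λ,Λ∨}
  set AΛ : Submodule ℤ V := Λ ⊔ Λd.comap (D.restrictScalars ℤ) with hAΛ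
  set BΛ : Submodule ℤ V := Λ ⊔ K.restrictScalars ℤ with hBΛ
  set Q2 := AΛ ⧸ (BΛ.comap AΛ.subtype) with hQ2
  have hgmem : ∀ x : MV, (es x : V) ∈ AΛ := by
    intro x
    apply Submodule.mem_sup_right
    show D (es x : V) ∈ Λd
    have : D (es x : V) = (x : V) := by
      rw [hes]
      have h1 : (E (E.symm (xw x)) : V) = D ((E.symm (xw x) : W) : V) := hEapp _
      rw [E.apply_symm_apply] at h1
      exact h1.symm
    rw [this]
    exact hMVd x
  set g : MV →+ Q2 := AddMonoidHom.mk'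
      (fun x => Submodule.Quotient.mk (⟨(es x : V), hgmem x⟩ : AΛ))
      (by
        intro u v
        show Submodule.Quotient.mk (⟨(es (u+v) : V), hgmem (u+v)⟩ : AΛ) = _
        have h1 : (⟨(es (u+v) : V), hgmem (u+v)⟩ : AΛ)
            = ⟨(es u : V), hgmem u⟩ + ⟨(es v : V), hgmem v⟩ := by
          apply Subtype.ext
          show (es (u+v) : V) = (es u : V) + (es v : V)
          rw [hadd_es]
          rfl
        rw [h1, Submodule.Quotient.mk_add]) with hg
  have hDes : ∀ x : MV, D (es x : V) = (x : V) := by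
    intro x
    rw [hes]
    have h1 : (E (E.symm (xw x)) : V) = D ((E.symm (xw x) : W) : V) := hEapp _
    rw [E.apply_symm_apply] at h1
    exact h1.symm
  have hgker : NV.comap MV.subtype ≤ LinearMap.ker g.toIntLinearMap := by
    intro n hn
    obtain ⟨hnd', l, hl, hln⟩ := (hNVmem _).mp hn
    simp only [LinearMap.mem_ker]
    show Submodule.Quotient.mk (⟨(es n : V), hgmem n⟩ : AΛ) = 0
    rw [Submodule.Quotient.mk_eq_zero]
    show (es n : V) ∈ BΛ
    have hxwn : xw n = ⟨D l, hDmem l⟩ := Subtype.ext (by show (n : V) = D l; exact hln.symm)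
    have h2 : es n = p l := by
      show E.symm (xw n) = p l
      rw [hxwn]
      exact hEDl l (hDmem l)
    rw [h2]
    have h3 : (p l : V) = l - (l - (p l : V)) := (sub_sub_cancel _ _).symm
    rw [h3]
    apply Submodule.sub_mem
    · exact Submodule.mem_sup_left hl
    · exact Submodule.mem_sup_right (hpker l)
  set ghat : Q →ₗ[ℤ] Q2 := Submodule.liftQ (NV.comap MV.subtype) g.toIntLinearMap hgker with hghat
  have hghatmk : ∀ x : MV, ghat (Submodule.Quotient.mk x)
      = Submodule.Quotient.mk (⟨(es x : V), hgmem x⟩ : AΛ) := fun x => rfl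
  have hghat_inj : Function.Injective ghat := by
    rw [injective_iff_map_eq_zero]
    intro a ha
    obtain ⟨x, rfl⟩ := Submodule.Quotient.mk_surjective _ a
    rw [hghatmk, Submodule.Quotient.mk_eq_zero] at ha
    have ha' : (es x : V) ∈ BΛ := ha
    obtain ⟨l, hl, k, hk, hlk⟩ := Submodule.mem_sup.mp ha'
    have hkK : k ∈ K := hk
    have hDx : (x : V) = D l := by
      rw [← hDes x, ← hlk, map_add]
      have : D k = 0 := hkK
      rw [this, add_zero]
    rw [Submodule.Quotient.mk_eq_zero]
    show (x : V) ∈ NV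
    exact (hNVmem _).mpr ⟨hMVd x, l, hl, hDx.symm⟩
  have hghat_surj : Function.Surjective ghat := by
    intro b
    obtain ⟨u, rfl⟩ := Submodule.Quotient.mk_surjective _ b
    obtain ⟨l, hl, v, hv, hlv⟩ := Submodule.mem_sup.mp u.2
    have hvd : D v ∈ Λd := hv
    set y : MV := ⟨D v, hvd, hDmem v⟩ with hy
    refine ⟨Submodule.Quotient.mk y, ?_⟩
    rw [hghatmk]
    rw [Submodule.Quotient.eq]
    show (es y : V) - (u : V) ∈ BΛ
    have h1 : es y = E.symm ⟨D v, hDmem v⟩ := by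
      show E.symm (xw y) = E.symm ⟨D v, hDmem v⟩
      congr 1
    have h2 : D ((es y : V) - v) = 0 := by
      rw [map_sub, hDes y]
      show D v - D v = 0
      rw [sub_self]
    have h3 : (es y : V) - (u : V) = ((es y : V) - v) - l := by
      rw [← hlv]; abel
    rw [h3]
    apply Submodule.sub_mem
    · exact Submodule.mem_sup_right h2
    · exact Submodule.mem_sup_left hl
  set eQ : Q ≃+ Q2 := (LinearEquiv.ofBijective ghat ⟨hghat_inj, hghat_surj⟩).toAddEquiv with heQ
  -- transported pairing
  set t : (Q →+ AddCircle (1:ℚ)) →+ (Q2 →+ AddCircle (1:ℚ)) := AddMonoidHom.mk'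
      (fun h => h.comp eQ.symm.toAddMonoidHom)
      (by intro h₁ h₂; apply AddMonoidHom.ext; intro b; rfl) with ht
  set φB : Q2 →+ (Q2 →+ AddCircle (1:ℚ)) := t.comp (φ.comp eQ.symm.toAddMonoidHom) with hφB
  have hφBapp : ∀ a b : Q2, φB a b = φ (eQ.symm a) (eQ.symm b) := fun a b => rfl
  have hφBanti : ∀ a b : Q2, φB a b = - φB b a := by
    intro a b
    rw [hφBapp, hφBapp]
    exact hanti _ _
  have htbij : Function.Bijective t := by
    constructor
    · intro h₁ h₂ hh
      apply AddMonoidHom.ext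
      intro a
      have h4 : h₁ (eQ.symm (eQ a)) = h₂ (eQ.symm (eQ a)) :=
        congrArg (fun k : Q2 →+ AddCircle (1:ℚ) => k (eQ a)) hh
      rwa [AddEquiv.symm_apply_apply] at h4
    · intro h
      refine ⟨h.comp eQ.toAddMonoidHom, ?_⟩
      apply AddMonoidHom.ext
      intro b
      show h (eQ (eQ.symm b)) = h b
      rw [AddEquiv.apply_symm_apply]
  have hφBbij : Function.Bijective φB := by
    have h1 : Function.Bijective (φ.comp eQ.symm.toAddMonoidHom : Q2 →+ (Q →+ AddCircle (1:ℚ))) := by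
      have he : ⇑(φ.comp eQ.symm.toAddMonoidHom) = ⇑φ ∘ ⇑eQ.symm := rfl
      rw [he]
      exact Function.Bijective.comp ⟨hinj, hsurj⟩ eQ.symm.bijective
    have h2 : ⇑φB = ⇑t ∘ ⇑(φ.comp eQ.symm.toAddMonoidHom) := rfl
    rw [h2]
    exact htbij.comp h1
  -- the explicit pairing ψ on DV
  set Wr := W.restrictScalars ℤ with hWr
  have hWrW : ∀ y : Wr, (y : V) ∈ W := fun y => y.2
  set ψ : Wr → Wr → AddCircle (1:ℚ) :=
    fun x y => ((B (x : V) ((E.symm ⟨(y : V), hWrW y⟩ : W) : V) : ℚ) : AddCircle (1:ℚ)) with hψ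
  have hψapp : ∀ x y : Wr, ψ x y
      = ((B (x : V) ((E.symm ⟨(y : V), hWrW y⟩ : W) : V) : ℚ) : AddCircle (1:ℚ)) := fun x y => rfl
  have hψspec : ∀ (x y : Wr) (z : V), z ∈ LinearMap.range D → D z = (y : V) →
      ψ x y = ((B (x : V) z : ℚ) : AddCircle (1:ℚ)) := by
    intro x y z hz hzy
    rw [hψapp]
    have : E.symm ⟨(y : V), hWrW y⟩ = ⟨z, hz⟩ := hEs _ z hz hzy
    rw [this]
  have hψi : ∀ (x y fx : Wr), (fx : V) = F (x : V) → ψ x y + ψ y fx = 0 := by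
    intro x y fx hfx
    set u := E.symm ⟨(x : V), hWrW x⟩ with hu
    set v := E.symm ⟨(y : V), hWrW y⟩ with hv
    have hDu : D (u : V) = (x : V) := by
      have h1 : (E u : V) = D (u : V) := hEapp u
      rw [hu, E.apply_symm_apply] at h1
      exact h1.symm
    have hDv : D (v : V) = (y : V) := by
      have h1 : (E v : V) = D (v : V) := hEapp v
      rw [hv, E.apply_symm_apply] at h1
      exact h1.symm
    have hfxW : F (u : V) ∈ W := hFWm _ u.2
    have hEfx : E.symm ⟨(fx : V), hWrW fx⟩ = ⟨F (u : V), hfxW⟩ := by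
      apply hEs
      rw [← hFD, hDu, hfx]
    rw [hψapp, hψapp, hEfx]
    have hval : B ((y : V)) (F (u : V)) = - B ((x : V)) ((v : V)) := by
      have h1 := hA (v : V) (u : V)
      rw [hDu, hDv] at h1
      exact h1
    show ((B (x : V) (v : V) : ℚ) : AddCircle (1:ℚ)) + ((B (y : V) (F (u : V)) : ℚ) : AddCircle (1:ℚ)) = 0
    rw [← AddCircle.coe_add, hval]
    norm_num
  refine ⟨⟨φB, hφBanti, hφBbij⟩, ⟨ψ, hψspec, hψi, ⟨φ, hanti, ⟨hinj, hsurj⟩, ?_⟩⟩, ⟨eQ⟩⟩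
  intro x y
  rfl
end
end

section
/- Let A be an abelian group with automorphism F and an F-equivariant symmetric perfect ℚ/ℤ-valued pairing. Suppose H ∈ ℤ[F,F⁻¹] satisfies θ(H) = F^{2s}H for some integer s, where θ is the ring automorphism of ℤ[F,F⁻¹] exchanging F and F⁻¹. Then for every integer k, the quotient A/A[(F^{2k}−1)H] admits a perfect alternating ℚ/ℤ-valued pairing. -/
noncomputable section

theorem stmt18 (A : Type) [AddCommGroup A]
    (F : AddAut A)
    (φ : A →+ A →+ AddCircle (1 : ℚ))
    (hsymm : ∀ x y, φ x y = φ y x)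
    (hFinv : ∀ x y, φ (F x) (F y) = φ x y)
    (hperf : Function.Bijective φ)
    -- H = ∑ᵢ c i · Fⁱ ∈ ℤ[F,F⁻¹], given by its (finitely supported) coefficients
    (c : ℤ →₀ ℤ) (s : ℤ)
    -- θ(H) = F^{2s} H, as formal Laurent polynomials
    (hθ : ∀ j : ℤ, c (-j) = c (j - 2 * s))
    (H : A →+ A) (hH : H = c.sum fun i n => n • (i • F).toAddMonoidHom)
    (k : ℤ)
    (K : AddSubgroup A)
    (hK : K = ((((2 * k) • F).toAddMonoidHom - AddMonoidHom.id A).comp H).ker) :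
    ∃ ψ : (A ⧸ K) →+ (A ⧸ K) →+ AddCircle (1 : ℚ),
      Function.Bijective ψ ∧ ∀ x, ψ x x = 0 := by
  have hcomp : ∀ (i j : ℤ) (x : A), (i • F) ((j • F) x) = ((i + j) • F) x := by
    intro i j x
    rw [← AddAut.add_apply, ← add_zsmul]
  have hFinv' : ∀ x y, φ ((-F) x) ((-F) y) = φ x y := by
    intro x y
    have := hFinv ((-F) x) ((-F) y)
    simpa using this.symm
  have hFpow : ∀ (i : ℤ), ∀ x y, φ ((i • F) x) ((i • F) y) = φ x y := by
    intro i
    induction i using Int.induction_on with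
    | zero => simp
    | succ n ih =>
      intro x y
      rw [add_one_zsmul, AddAut.add_apply, AddAut.add_apply, ih, hFinv]
    | pred n ih =>
      intro x y
      rw [sub_one_zsmul, AddAut.add_apply, AddAut.add_apply, ih, hFinv']
  have hadj : ∀ (i : ℤ) (x y : A), φ ((i • F) x) y = φ x (((-i) • F) y) := by
    intro i x y
    have hy : y = (i • F) (((-i) • F) y) := by
      rw [hcomp]; simp
    conv_lhs => rw [hy]
    rw [hFpow]
  have hHx : ∀ x, H x = c.sum fun i n => n • ((i • F) x) := by
    intro x
    rw [hH]
    simp [Finsupp.sum, AddMonoidHom.finset_sum_apply]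
  -- H commutes with powers of F
  have hHcomm : ∀ (j : ℤ) (x : A), H ((j • F) x) = (j • F) (H x) := by
    intro j x
    rw [hHx, hHx]
    simp only [Finsupp.sum, map_sum, map_zsmul]
    refine Finset.sum_congr rfl fun i _ => ?_
    rw [hcomp, hcomp, add_comm]
  -- adjoint of H
  have hadjH : ∀ x y, φ (H x) y = φ x (((2 * s) • F) (H y)) := by
    intro x y
    rw [hHx x, hHx y]
    simp only [Finsupp.sum, map_sum, map_zsmul, AddMonoidHom.finset_sum_apply,
      AddMonoidHom.smul_apply]
    have hL : ∀ i ∈ c.support, (c i) • (φ ((i • F) x)) y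
        = (c i) • (φ x) (((-i) • F) y) := by
      intro i _
      rw [hadj]
    rw [Finset.sum_congr rfl hL]
    have hR : ∀ i ∈ c.support, (c i) • (φ x) (((2*s) • F) ((i • F) y))
        = (c i) • (φ x) (((2*s + i) • F) y) := by
      intro i _
      rw [hcomp]
    rw [Finset.sum_congr rfl hR]
    -- reindex i ↦ -i - 2s
    have hc : ∀ i : ℤ, c (-i - 2 * s) = c i := by
      intro i
      have h1 : -i - 2*s = -(i + 2*s) := by ring
      rw [h1, hθ (i + 2*s), add_sub_cancel_right]
    refine Finset.sum_nbij' (fun i => -i - 2*s) (fun i => -i - 2*s) ?_ ?_ ?_ ?_ ?_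
    · intro i hi
      simp only [Finsupp.mem_support_iff] at hi ⊢
      rw [hc]; exact hi
    · intro i hi
      simp only [Finsupp.mem_support_iff] at hi ⊢
      rw [hc]; exact hi
    · intro i _; ring
    · intro i _; ring
    · intro i _
      rw [hc, show 2*s + (-i - 2*s) = -i by ring]
  -- key cross lemma
  have hcross : ∀ x y, φ (((s + k) • F) (H x)) y = φ (((s - k) • F) (H y)) x := by
    intro x y
    rw [hadj, hadjH, hHcomm, hcomp, show 2*s + -(s+k) = s - k by ring, hsymm]
  -- the skew operator
  set Q : A →+ A := (((s + k) • F).toAddMonoidHom.comp H)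
      - (((s - k) • F).toAddMonoidHom.comp H) with hQdef
  have hQ : ∀ x, Q x = ((s + k) • F) (H x) - ((s - k) • F) (H x) := fun x => rfl
  have hskew : ∀ x y, φ (Q x) y = - φ (Q y) x := by
    intro x y
    rw [hQ, hQ]
    simp only [map_sub, AddMonoidHom.sub_apply]
    rw [hcross x y, hcross y x]
    abel
  have halt : ∀ x, φ (Q x) x = 0 := by
    intro x
    rw [hQ, map_sub, AddMonoidHom.sub_apply, hcross x x, sub_self]
  -- kernel identification
  have hKQ : ∀ x, x ∈ K ↔ Q x = 0 := by
    intro x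
    rw [hK]
    simp only [AddMonoidHom.mem_ker, AddMonoidHom.comp_apply, AddMonoidHom.sub_apply,
      AddMonoidHom.id_apply, AddEquiv.coe_toAddMonoidHom]
    have hfac : Q x = ((s - k) • F) (((2 * k) • F) (H x) - H x) := by
      rw [map_sub, hcomp, hQ, show s - k + 2*k = s + k by ring]
    constructor
    · intro h
      rw [hfac, h, map_zero]
    · intro h
      have := hfac.symm.trans h
      have h2 := ((s - k) • F).injective (a₁ := ((2 * k) • F) (H x) - H x) (a₂ := 0)
      simpa using h2 (by simpa using this)
  -- descend the pairing
  have hkerQ : ∀ z ∈ K, ∀ x, φ (Q x) z = 0 := by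
    intro z hz x
    rw [hskew, (hKQ z).mp hz, map_zero, AddMonoidHom.zero_apply, neg_zero]
  have hker0 : ∀ z ∈ K, φ (Q z) = 0 := by
    intro z hz
    rw [(hKQ z).mp hz, map_zero]
  let ψ₁ : A →+ ((A ⧸ K) →+ AddCircle (1 : ℚ)) :=
    { toFun := fun x => QuotientAddGroup.lift K (φ (Q x)) (fun z hz => hkerQ z hz x)
      map_zero' := by
        ext z
        simp
      map_add' := by
        intro a b
        ext z
        simp
        rfl }
  have hψ₁ : ∀ x y, ψ₁ x ((QuotientAddGroup.mk y : A ⧸ K)) = φ (Q x) y := fun x y => rfl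
  let ψ : (A ⧸ K) →+ ((A ⧸ K) →+ AddCircle (1 : ℚ)) :=
    QuotientAddGroup.lift K ψ₁ (by
      intro z hz
      ext w
      show φ (Q z) w = 0
      rw [(hKQ z).mp hz, map_zero, AddMonoidHom.zero_apply])
  have hψ : ∀ x y, ψ (QuotientAddGroup.mk x) (QuotientAddGroup.mk y) = φ (Q x) y :=
    fun x y => rfl
  refine ⟨ψ, ⟨?_, ?_⟩, ?_⟩
  · -- injective
    rw [injective_iff_map_eq_zero]
    intro a ha
    induction a using QuotientAddGroup.induction_on with
    | H x =>
      have hQx : Q x = 0 := by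
        apply hperf.1
        rw [map_zero]
        ext y
        have h0 := DFunLike.congr_fun ha (QuotientAddGroup.mk y : A ⧸ K)
        rw [hψ] at h0
        simpa using h0
      rw [QuotientAddGroup.eq_zero_iff]
      exact (hKQ x).mpr hQx
  · -- surjective
    intro g
    set f : A →+ AddCircle (1 : ℚ) := g.comp (QuotientAddGroup.mk' K) with hf
    have hfker : ∀ z ∈ Q.ker, f z = 0 := by
      intro z hz
      have hzK : z ∈ K := (hKQ z).mpr hz
      have : (QuotientAddGroup.mk' K) z = 0 := (QuotientAddGroup.eq_zero_iff z).mpr hzK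
      rw [hf, AddMonoidHom.comp_apply, this, map_zero]
    set fbar : (A ⧸ Q.ker) →+ AddCircle (1 : ℚ) := QuotientAddGroup.lift Q.ker f hfker
      with hfbar
    set e : (A ⧸ Q.ker) ≃+ Q.range := QuotientAddGroup.quotientKerEquivRange Q with he
    set ι : (A ⧸ Q.ker) →+ A := Q.range.subtype.comp e.toAddMonoidHom with hι
    have hιinj : Function.Injective ι := by
      intro a b hab
      exact e.injective (Subtype.coe_injective hab)
    have hbaer : Module.Baer ℤ (AddCircle (1 : ℚ)) := Module.Baer.of_divisible _
    obtain ⟨h, hh⟩ := hbaer.extension_property_addMonoidHom ι hιinj fbar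
    have hιmk : ∀ z : A, ι (QuotientAddGroup.mk z) = Q z := fun z => rfl
    have key : ∀ z, h (Q z) = f z := by
      intro z
      have h1 := DFunLike.congr_fun hh (QuotientAddGroup.mk z : A ⧸ Q.ker)
      rw [AddMonoidHom.comp_apply, hιmk] at h1
      exact h1
    obtain ⟨b, hb⟩ := hperf.2 h
    refine ⟨QuotientAddGroup.mk (-b), ?_⟩
    ext w
    show φ (Q (-b)) w = f w
    calc φ (Q (-b)) w = - (φ (Q b) w) := by
            rw [map_neg, map_neg, AddMonoidHom.neg_apply]
      _ = φ (Q w) b := (hskew w b).symm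
      _ = φ b (Q w) := hsymm _ _
      _ = h (Q w) := by rw [hb]
      _ = f w := key w
  · -- alternating
    intro x
    induction x using QuotientAddGroup.induction_on with
    | H x => rw [hψ, halt]
end
end
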